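/- arXiv:2210.11961 — 14 statements merged into one kernel-verified Lean document; each statement's English description precedes it below -/
import Mathlib

section
/- Let q ≥ 2 be an integer and let P be a finite set with |P| = q²+q+1. Suppose L₁, …, L_s are families of (q+1)-element subsets of P, each family having the property that every two distinct points of P lie in exactly one of its members, and suppose that for all i ≠ j, every member of L_i intersects every member of L_j in at most two points. Then s ≤ max{5, q+2}. -/
open Finset

/-- Fiberwise counting helper: a set of ordered triples whose fiber over each
ordered pair of distinct first two coordinates has size `m` has cardinality
`(n² - n) * m`. -/
lemma card_of_fibers {α : Type*} [Fintype α] [DecidableEq α]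
    (W : Finset (α × α × α)) (m : ℕ)
    (hW : ∀ p ∈ W, p.1 ≠ p.2.1)
    (hfib : ∀ x y : α, x ≠ y →
      (W.filter (fun p => (p.1, p.2.1) = (x, y))).card = m) :
    W.card = (Fintype.card α * Fintype.card α - Fintype.card α) * m := by
  rw [Finset.card_eq_sum_card_fiberwise
    (f := fun p : α × α × α => (p.1, p.2.1)) (t := Finset.univ.offDiag)
    (fun p hp => by simp [Finset.mem_offDiag, hW p hp])]
  rw [Finset.sum_congr rfl (fun b hb => ?_), Finset.sum_const, Finset.offDiag_card,
    Finset.card_univ, smul_eq_mul]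
  have hb' := (Finset.mem_offDiag.mp hb).2.2
  have := hfib b.1 b.2 hb'
  simpa using this

/-- If `L₁, …, L_s` are mutually orthogoval projective planes of order `q ≥ 2`
on a common point set `P` with `|P| = q² + q + 1`, then `s ≤ max 5 (q+2)`. -/
theorem mutually_orthogoval_projective_planes_bound
    (q : ℕ) (hq : 2 ≤ q) (P : Type*) [Fintype P] [DecidableEq P]
    (hP : Fintype.card P = q ^ 2 + q + 1) (s : ℕ) (L : Fin s → Set (Finset P))
    (hplane : ∀ i : Fin s,
      (∀ B ∈ L i, B.card = q + 1) ∧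
      (∀ x y : P, x ≠ y → ∃! B : Finset P, B ∈ L i ∧ x ∈ B ∧ y ∈ B))
    (horth : ∀ i j : Fin s, i ≠ j →
      ∀ B₁ ∈ L i, ∀ B₂ ∈ L j, (B₁ ∩ B₂).card ≤ 2) :
    s ≤ max 5 (q + 2) := by
  classical
  set n := Fintype.card P with hn
  -- all ordered triples of pairwise distinct points
  set T : Finset (P × P × P) := univ.filter
    (fun p => p.1 ≠ p.2.1 ∧ p.1 ≠ p.2.2 ∧ p.2.1 ≠ p.2.2) with hT
  -- ordered collinear triples in plane i
  set S : Fin s → Finset (P × P × P) := fun i => univ.filter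
    (fun p => p.1 ≠ p.2.1 ∧ p.1 ≠ p.2.2 ∧ p.2.1 ≠ p.2.2 ∧
      ∃ B ∈ L i, p.1 ∈ B ∧ p.2.1 ∈ B ∧ p.2.2 ∈ B) with hS
  have hinj : ∀ x y : P, Function.Injective (fun z : P => (x, y, z)) := by
    intro x y a b hab
    simpa using congrArg (fun p : P × P × P => p.2.2) hab
  -- cardinality of T
  have hTcard : T.card = (n * n - n) * (n - 2) := by
    apply card_of_fibers
    · intro p hp; exact ((Finset.mem_filter.mp hp).2).1
    · intro x y hxy
      have : T.filter (fun p => (p.1, p.2.1) = (x, y)) =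
          (univ \ {x, y}).image (fun z => (x, y, z)) := by
        ext ⟨a, b, c⟩
        simp only [hT, Finset.mem_filter, Finset.mem_image, Finset.mem_sdiff,
          Finset.mem_univ, Finset.mem_insert, Finset.mem_singleton, true_and,
          Prod.mk.injEq, not_or]
        constructor
        · rintro ⟨⟨h1, h2, h3⟩, rfl, rfl⟩
          exact ⟨c, ⟨fun h => h2 h.symm, fun h => h3 h.symm⟩, rfl, rfl, rfl⟩
        · rintro ⟨z, ⟨hz1, hz2⟩, rfl, rfl, rfl⟩
          exact ⟨⟨hxy, fun h => hz1 h.symm, fun h => hz2 h.symm⟩, rfl, rfl⟩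
      rw [this, Finset.card_image_of_injective _ (hinj x y), Finset.card_sdiff_of_subset
        (by intro a _; exact Finset.mem_univ a)]
      rw [Finset.card_pair hxy, Finset.card_univ]
  -- cardinality of each S i
  have hScard : ∀ i, (S i).card = (n * n - n) * (q - 1) := by
    intro i
    apply card_of_fibers
    · intro p hp; exact ((Finset.mem_filter.mp hp).2).1
    · intro x y hxy
      obtain ⟨B, ⟨hBL, hxB, hyB⟩, huniq⟩ := (hplane i).2 x y hxy
      have : (S i).filter (fun p => (p.1, p.2.1) = (x, y)) =
          (B \ {x, y}).image (fun z => (x, y, z)) := by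
        ext ⟨a, b, c⟩
        simp only [hS, Finset.mem_filter, Finset.mem_image, Finset.mem_sdiff,
          Finset.mem_univ, Finset.mem_insert, Finset.mem_singleton, true_and,
          Prod.mk.injEq, not_or]
        constructor
        · rintro ⟨⟨h1, h2, h3, B', hB'L, hxB', hyB', hzB'⟩, rfl, rfl⟩
          have hBB' : B' = B := huniq B' ⟨hB'L, hxB', hyB'⟩
          exact ⟨c, ⟨hBB' ▸ hzB', fun h => h2 h.symm, fun h => h3 h.symm⟩,
            rfl, rfl, rfl⟩
        · rintro ⟨z, ⟨hzB, hz1, hz2⟩, rfl, rfl, rfl⟩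
          exact ⟨⟨hxy, fun h => hz1 h.symm, fun h => hz2 h.symm,
            B, hBL, hxB, hyB, hzB⟩, rfl, rfl⟩
      rw [this, Finset.card_image_of_injective _ (hinj x y), Finset.card_sdiff_of_subset
        (by intro a ha
            rcases Finset.mem_insert.mp ha with rfl | ha
            · exact hxB
            · rw [Finset.mem_singleton.mp ha]; exact hyB)]
      rw [Finset.card_pair hxy, (hplane i).1 B hBL]
      omega
  -- the S i are pairwise disjoint
  have hdisj : ∀ i ∈ (univ : Finset (Fin s)), ∀ j ∈ (univ : Finset (Fin s)),
      i ≠ j → Disjoint (S i) (S j) := by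
    intro i _ j _ hij
    rw [Finset.disjoint_left]
    intro p hpi hpj
    obtain ⟨h1, h2, h3, B₁, hB₁, hx1, hy1, hz1⟩ := (Finset.mem_filter.mp hpi).2
    obtain ⟨_, _, _, B₂, hB₂, hx2, hy2, hz2⟩ := (Finset.mem_filter.mp hpj).2
    have htsub : ({p.1, p.2.1, p.2.2} : Finset P) ⊆ B₁ ∩ B₂ := by
      intro a ha
      rcases Finset.mem_insert.mp ha with rfl | ha
      · exact Finset.mem_inter.mpr ⟨hx1, hx2⟩
      rcases Finset.mem_insert.mp ha with rfl | ha
      · exact Finset.mem_inter.mpr ⟨hy1, hy2⟩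
      · rw [Finset.mem_singleton.mp ha]; exact Finset.mem_inter.mpr ⟨hz1, hz2⟩
    have hcard3 : ({p.1, p.2.1, p.2.2} : Finset P).card = 3 := by
      rw [Finset.card_insert_of_notMem (by simp [h1, h2]),
        Finset.card_insert_of_notMem (by simp [h3]), Finset.card_singleton]
    have := Finset.card_le_card htsub
    have := horth i j hij B₁ hB₁ B₂ hB₂
    omega
  -- each S i is contained in T
  have hsub : (univ : Finset (Fin s)).biUnion S ⊆ T := by
    intro p hp
    obtain ⟨i, _, hpi⟩ := Finset.mem_biUnion.mp hp
    obtain ⟨h1, h2, h3, _⟩ := (Finset.mem_filter.mp hpi).2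
    exact Finset.mem_filter.mpr ⟨Finset.mem_univ p, h1, h2, h3⟩
  -- key inequality
  have key : s * ((n * n - n) * (q - 1)) ≤ (n * n - n) * (n - 2) := by
    calc s * ((n * n - n) * (q - 1))
        = ∑ i : Fin s, (S i).card := by
          rw [Finset.sum_congr rfl (fun i _ => hScard i), Finset.sum_const,
            Finset.card_univ, Fintype.card_fin, smul_eq_mul]
      _ = ((univ : Finset (Fin s)).biUnion S).card := (Finset.card_biUnion hdisj).symm
      _ ≤ T.card := Finset.card_le_card hsub
      _ = (n * n - n) * (n - 2) := hTcard
  have hnval : n = q ^ 2 + q + 1 := hP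
  have h4 : 4 ≤ q ^ 2 := by nlinarith
  have hn7 : 7 ≤ n := by rw [hnval]; linarith
  have hpos : 0 < n * n - n := Nat.sub_pos_of_lt (by nlinarith)
  have key2 : s * (q - 1) ≤ n - 2 := by
    have h := key
    rw [show s * ((n * n - n) * (q - 1)) = (n * n - n) * (s * (q - 1)) by ring] at h
    exact Nat.le_of_mul_le_mul_left h hpos
  -- final arithmetic
  obtain ⟨r, rfl⟩ : ∃ r, q = r + 1 := ⟨q - 1, by omega⟩
  have hr : 1 ≤ r := by omega
  have hn2 : n - 2 = r * r + 3 * r + 1 := by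
    rw [hnval, show (r + 1) ^ 2 + (r + 1) + 1 = (r * r + 3 * r + 1) + 2 by ring,
      Nat.add_sub_cancel]
  have key3 : s * r ≤ r * r + 3 * r + 1 := by
    have h := key2
    rw [hn2] at h
    simpa using h
  rcases Nat.lt_or_ge r 2 with h2 | h2
  · have hr1 : r = 1 := by omega
    subst hr1
    have h5 : s ≤ 5 := by omega
    exact le_trans h5 (le_max_left _ _)
  · have hs : s ≤ r + 3 := by
      by_contra hcon
      push_neg at hcon
      have h1 : (r + 4) * r ≤ s * r := Nat.mul_le_mul_right r (by omega)
      have h1' : r * r + 4 * r ≤ r * r + (3 * r + 1) := by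
        calc r * r + 4 * r = (r + 4) * r := by ring
          _ ≤ s * r := h1
          _ ≤ r * r + 3 * r + 1 := key3
          _ = r * r + (3 * r + 1) := by ring
      have h3 : 4 * r ≤ 3 * r + 1 := Nat.le_of_add_le_add_left h1'
      omega
    exact le_trans hs (le_max_right _ _)
end

section
/- Let q > 2 be an integer and let P be a finite set with |P| = q². Suppose L₁, …, L_s are families of q-element subsets of P, each family having the property that every two distinct points of P lie in exactly one of its members, and suppose that for all i ≠ j, every member of L_i intersects every member of L_j in at most two points. Then s ≤ max{7, q+2}. -/
open Finset

/-- Per-plane triple count: a pairwise-balanced design with block size `q` on a finite point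
set covers at least `|P|(|P|-1)(q-2)/6` three-element subsets. -/
theorem plane_count_aux (q : ℕ) {P : Type*} [Fintype P] [DecidableEq P]
    (Li : Set (Finset P))
    (hcard : ∀ B ∈ Li, B.card = q)
    (hpair : ∀ x y : P, x ≠ y → ∃! B : Finset P, B ∈ Li ∧ x ∈ B ∧ y ∈ B) :
    ∃ S : Finset (Finset P),
      (∀ T ∈ S, T.card = 3 ∧ ∃ B ∈ Li, T ⊆ B) ∧
      Fintype.card P * (Fintype.card P - 1) * (q - 2) ≤ 6 * S.card := by
  classical
  have hblkex : ∀ x y : P, x ≠ y → ∃ B, B ∈ Li ∧ x ∈ B ∧ y ∈ B :=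
    fun x y h => (hpair x y h).exists
  set blk : P → P → Finset P := fun x y =>
    if h : x ≠ y then (hblkex x y h).choose else ∅ with hblkdef
  have hblkP : ∀ x y : P, x ≠ y → blk x y ∈ Li ∧ x ∈ blk x y ∧ y ∈ blk x y := by
    intro x y h
    simp only [hblkdef, dif_pos h]
    exact (hblkex x y h).choose_spec
  set W : Finset (P × P × P) :=
    (Finset.univ.offDiag).biUnion
      (fun p => (((blk p.1 p.2).erase p.1).erase p.2).image (fun z => (p.1, p.2, z)))
      with hWdef
  -- structure of elements of W
  have hWmem : ∀ t ∈ W, t.1 ≠ t.2.1 ∧ t.2.2 ≠ t.1 ∧ t.2.2 ≠ t.2.1 ∧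
      t.1 ∈ blk t.1 t.2.1 ∧ t.2.1 ∈ blk t.1 t.2.1 ∧ t.2.2 ∈ blk t.1 t.2.1 := by
    intro t ht
    rw [hWdef, mem_biUnion] at ht
    obtain ⟨p, hp, ht⟩ := ht
    rw [mem_image] at ht
    obtain ⟨z, hz, rfl⟩ := ht
    obtain ⟨-, -, hxy⟩ := mem_offDiag.mp hp
    have hz2 : z ≠ p.2 := (mem_erase.mp hz).1
    have hz' := mem_erase.mp (mem_erase.mp hz).2
    obtain ⟨_, h1, h2⟩ := hblkP p.1 p.2 hxy
    exact ⟨hxy, hz'.1, hz2, h1, h2, hz'.2⟩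
  -- cardinality of W
  have hWcard : W.card =
      Fintype.card P * (Fintype.card P - 1) * (q - 2) := by
    rw [hWdef, card_biUnion]
    · have hinner : ∀ p ∈ Finset.univ.offDiag (α := P),
          ((((blk p.1 p.2).erase p.1).erase p.2).image (fun z => (p.1, p.2, z))).card
            = q - 2 := by
        intro p hp
        obtain ⟨-, -, hxy⟩ := mem_offDiag.mp hp
        obtain ⟨hB, h1, h2⟩ := hblkP p.1 p.2 hxy
        rw [card_image_of_injective _ (fun a b h => by simpa using h)]
        rw [card_erase_of_mem (mem_erase.mpr ⟨hxy.symm, h2⟩), card_erase_of_mem h1,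
          hcard _ hB]
        omega
      rw [Finset.sum_congr rfl hinner, Finset.sum_const, smul_eq_mul,
        Finset.offDiag_card, Finset.card_univ]
      have : Fintype.card P * (Fintype.card P - 1)
          = Fintype.card P * Fintype.card P - Fintype.card P := by
        rw [Nat.mul_sub, Nat.mul_one]
      rw [this]
    · intro p hp p' hp' hne
      rw [Function.onFun, Finset.disjoint_left]
      intro a ha ha'
      simp only [mem_image] at ha ha'
      obtain ⟨z, -, rfl⟩ := ha
      obtain ⟨z', -, h⟩ := ha'
      apply hne
      simp only [Prod.mk.injEq] at h
      exact Prod.ext h.1.symm h.2.1.symm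
  -- the image under the "unorder" map
  set f : P × P × P → Finset P := fun t => ({t.1, t.2.1, t.2.2} : Finset P) with hfdef
  refine ⟨W.image f, ?_, ?_⟩
  · intro T hT
    rw [mem_image] at hT
    obtain ⟨t, ht, rfl⟩ := hT
    obtain ⟨h12, h31, h32, hm1, hm2, hm3⟩ := hWmem t ht
    constructor
    · exact Finset.card_eq_three.mpr ⟨t.1, t.2.1, t.2.2, h12, Ne.symm h31, Ne.symm h32, rfl⟩
    · exact ⟨blk t.1 t.2.1, (hblkP t.1 t.2.1 h12).1, by
        intro a ha
        simp only [hfdef, mem_insert, mem_singleton] at ha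
        rcases ha with rfl | rfl | rfl <;> assumption⟩
  · -- each fiber of f on W has at most 6 elements
    have key : W.card ≤ 6 * (W.image f).card := by
      apply Finset.card_le_mul_card_image
      intro T hT
      rw [mem_image] at hT
      obtain ⟨t₀, ht₀, rfl⟩ := hT
      have hT3 : (f t₀).card = 3 := by
        obtain ⟨h12, h31, h32, -⟩ := hWmem t₀ ht₀
        exact Finset.card_eq_three.mpr ⟨t₀.1, t₀.2.1, t₀.2.2, h12, Ne.symm h31, Ne.symm h32, rfl⟩
      have h6 : (f t₀).offDiag.card = 6 := by
        rw [Finset.offDiag_card, hT3]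
      rw [← h6]
      apply Finset.card_le_card_of_injOn (fun t => (t.1, t.2.1))
      · intro t ht
        rw [mem_coe, mem_filter] at ht
        obtain ⟨htW, hft⟩ := ht
        obtain ⟨h12, -, -, -⟩ := hWmem t htW
        rw [mem_coe, mem_offDiag]
        refine ⟨?_, ?_, h12⟩
        · rw [← hft]; simp [hfdef]
        · rw [← hft]; simp [hfdef]
      · intro t ht t' ht' heq
        rw [mem_coe, mem_filter] at ht ht'
        obtain ⟨htW, hft⟩ := ht
        obtain ⟨ht'W, hft'⟩ := ht'
        simp only [Prod.mk.injEq] at heq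
        obtain ⟨e1, e2⟩ := heq
        obtain ⟨-, h31, h32, -⟩ := hWmem t htW
        obtain ⟨-, h31', h32', -⟩ := hWmem t' ht'W
        have hmem : t'.2.2 ∈ f t := by
          rw [hft, ← hft']; simp [hfdef]
        simp only [hfdef, mem_insert, mem_singleton] at hmem
        have e3 : t.2.2 = t'.2.2 := by
          rcases hmem with h | h | h
          · exact absurd (h.trans e1) h31'
          · exact absurd (h.trans e2) h32'
          · exact h.symm
        exact Prod.ext e1 (Prod.ext e2 e3)
    calc Fintype.card P * (Fintype.card P - 1) * (q - 2) = W.card := hWcard.symm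
      _ ≤ 6 * (W.image f).card := key

/-- If `L₁, …, L_s` are mutually orthogoval affine planes of order `q > 2`
on a common point set `P` with `|P| = q²`, then `s ≤ max 7 (q+2)`. -/
theorem mutually_orthogoval_affine_planes_bound
    (q : ℕ) (hq : 2 < q) (P : Type*) [Fintype P] [DecidableEq P]
    (hP : Fintype.card P = q ^ 2) (s : ℕ) (L : Fin s → Set (Finset P))
    (hplane : ∀ i : Fin s,
      (∀ B ∈ L i, B.card = q) ∧
      (∀ x y : P, x ≠ y → ∃! B : Finset P, B ∈ L i ∧ x ∈ B ∧ y ∈ B))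
    (horth : ∀ i j : Fin s, i ≠ j →
      ∀ B₁ ∈ L i, ∀ B₂ ∈ L j, (B₁ ∩ B₂).card ≤ 2) :
    s ≤ max 7 (q + 2) := by
  classical
  set n := Fintype.card P with hn
  -- choose triple sets
  have hS : ∀ i : Fin s, ∃ S : Finset (Finset P),
      (∀ T ∈ S, T.card = 3 ∧ ∃ B ∈ L i, T ⊆ B) ∧
      n * (n - 1) * (q - 2) ≤ 6 * S.card :=
    fun i => plane_count_aux q (L i) (hplane i).1 (hplane i).2
  choose S hSprop hScard using hS
  -- disjointness
  have hdisj : ∀ i ∈ (Finset.univ : Finset (Fin s)), ∀ j ∈ (Finset.univ : Finset (Fin s)),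
      i ≠ j → Disjoint (S i) (S j) := by
    intro i _ j _ hij
    rw [Finset.disjoint_left]
    intro T hTi hTj
    obtain ⟨hT3, B₁, hB₁, hTB₁⟩ := hSprop i T hTi
    obtain ⟨-, B₂, hB₂, hTB₂⟩ := hSprop j T hTj
    have : T ⊆ B₁ ∩ B₂ := Finset.subset_inter hTB₁ hTB₂
    have := Finset.card_le_card this
    have := horth i j hij B₁ hB₁ B₂ hB₂
    omega
  -- sum is at most number of subsets of size 3
  have hsub : Finset.univ.biUnion S ⊆ Finset.powersetCard 3 (Finset.univ : Finset P) := by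
    intro T hT
    rw [Finset.mem_biUnion] at hT
    obtain ⟨i, -, hTi⟩ := hT
    rw [Finset.mem_powersetCard_univ]
    exact (hSprop i T hTi).1
  have hsum : ∑ i : Fin s, (S i).card ≤ n.choose 3 := by
    rw [← Finset.card_biUnion hdisj]
    calc (Finset.univ.biUnion S).card ≤ (Finset.powersetCard 3 (Finset.univ : Finset P)).card :=
          Finset.card_le_card hsub
      _ = n.choose 3 := by rw [Finset.card_powersetCard, Finset.card_univ]
  -- combine
  have hmain : s * (n * (n - 1) * (q - 2)) ≤ 6 * n.choose 3 := by
    calc s * (n * (n - 1) * (q - 2)) = ∑ _i : Fin s, n * (n - 1) * (q - 2) := by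
          rw [Finset.sum_const, Finset.card_univ, Fintype.card_fin, smul_eq_mul]
      _ ≤ ∑ i : Fin s, 6 * (S i).card := Finset.sum_le_sum (fun i _ => hScard i)
      _ = 6 * ∑ i : Fin s, (S i).card := by rw [Finset.mul_sum]
      _ ≤ 6 * n.choose 3 := Nat.mul_le_mul_left 6 hsum
  have hchoose : 6 * n.choose 3 = (n - 2) * ((n - 1) * (n - 0 * 1)) := by
    have := Nat.descFactorial_eq_factorial_mul_choose n 3
    simp [Nat.descFactorial_succ, Nat.descFactorial_zero, Nat.factorial] at this ⊢
    omega
  rw [hchoose] at hmain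
  simp only [Nat.zero_mul, Nat.sub_zero] at hmain
  -- cancel n*(n-1)
  have hcancel : s * (q - 2) ≤ n - 2 := by
    have hpos : 0 < n * (n - 1) := by
      have : 9 ≤ n := by
        rw [hP]
        nlinarith
      have h1 : 0 < n := by omega
      have h2 : 0 < n - 1 := by omega
      exact Nat.mul_pos h1 h2
    apply Nat.le_of_mul_le_mul_right _ hpos
    calc s * (q - 2) * (n * (n - 1)) = s * (n * (n - 1) * (q - 2)) := by ring
      _ ≤ (n - 2) * ((n - 1) * n) := hmain
      _ = (n - 2) * (n * (n - 1)) := by ring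
  -- final arithmetic
  rw [hP] at hcancel
  obtain ⟨b, rfl⟩ : ∃ b, q = b + 3 := ⟨q - 3, by omega⟩
  have hq2 : (b + 3) ^ 2 - 2 = b * b + 6 * b + 7 := by
    have : (b + 3) ^ 2 = b * b + 6 * b + 9 := by ring
    omega
  rw [hq2] at hcancel
  have hsub2 : (b + 3) - 2 = b + 1 := by omega
  rw [hsub2] at hcancel
  -- hcancel : s * (b + 1) ≤ b * b + 6 * b + 7
  rcases Nat.lt_or_ge b 2 with hb | hb
  · interval_cases b <;> omega
  · -- b ≥ 2 : show s ≤ b + 5 = q + 2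
    have : s ≤ b + 5 := by
      by_contra h
      push_neg at h
      have hs : b + 6 ≤ s := by omega
      have := Nat.mul_le_mul_right (b + 1) hs
      nlinarith
    omega
end

section
/- For every prime power q there exists a pair of orthogoval Desarguesian projective planes of order q. Precisely: let F be a finite field with q elements and let P be the projectivization of the vector space F³ (the set of 1-dimensional subspaces of F³). Then there exists a bijection σ : P → P such that for any two 2-dimensional F-subspaces W₁ and W₂ of F³, the set {p ∈ P : p ⊆ W₁ and σ(p) ⊆ W₂} has at most two elements; that is, σ maps the point set of every projective line to an oval, so the images of the lines of PG(2,q) under σ form the line set of a second projective plane orthogoval to PG(2,q). -/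
open Polynomial Module

noncomputable section OrthogovalAux

variable (F : Type*) [Field F] [Fintype F]

/-- A cubic extension of the finite field `F`. -/
private def E3 : Type _ :=
  Polynomial.SplittingField (X ^ (Fintype.card F ^ 3) - X : F[X])

private instance : Field (E3 F) := inferInstanceAs (Field (SplittingField _))
private instance : Algebra F (E3 F) := inferInstanceAs (Algebra F (SplittingField _))
private instance : FiniteDimensional F (E3 F) :=
  inferInstanceAs (FiniteDimensional F (SplittingField _))
private instance : IsSplittingField F (E3 F) (X ^ (Fintype.card F ^ 3) - X : F[X]) :=
  inferInstanceAs (IsSplittingField F (SplittingField _) _)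
private instance : Finite (E3 F) := Module.finite_of_finite F
private noncomputable instance : Fintype (E3 F) := Fintype.ofFinite _

private lemma E3_charstuff : ∃ p n : ℕ, p.Prime ∧ n ≠ 0 ∧ Fintype.card F = p ^ n ∧
    CharP F p ∧ CharP (E3 F) p := by
  obtain ⟨p, hchar⟩ := CharP.exists F
  haveI := hchar
  haveI hp : Fact p.Prime := ⟨CharP.char_is_prime F p⟩
  obtain ⟨n, hn⟩ := FiniteField.card F p
  haveI : CharP (E3 F) p :=
    charP_of_injective_algebraMap (algebraMap F (E3 F)).injective p
  exact ⟨p, n, hp.out, n.2.ne', hn.2, hchar, inferInstance⟩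

/-- Frobenius `x ↦ x ^ q` is additive on `E3 F`. -/
private lemma frob_add (a b : E3 F) :
    (a + b) ^ Fintype.card F = a ^ Fintype.card F + b ^ Fintype.card F := by
  obtain ⟨p, n, hp, hn0, hcard, hF, hE⟩ := E3_charstuff F
  haveI := hE
  haveI : Fact p.Prime := ⟨hp⟩
  rw [hcard]
  exact add_pow_char_pow ..

/-- every element of `E3 F` satisfies `x ^ q ^ 3 = x`. -/
private lemma E3_pow_cube (z : E3 F) : z ^ (Fintype.card F ^ 3) = z := by
  have hsub : Algebra.adjoin F ((X ^ (Fintype.card F ^ 3) - X : F[X]).rootSet (E3 F)) = ⊤ :=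
    Polynomial.IsSplittingField.adjoin_rootSet _ _
  have hq1 : 1 < Fintype.card F := Fintype.one_lt_card
  have hgne : (X ^ (Fintype.card F ^ 3) - X : F[X]) ≠ 0 :=
    FiniteField.X_pow_card_pow_sub_X_ne_zero _ (by norm_num) hq1
  let S : Subalgebra F (E3 F) :=
  { carrier := {x : E3 F | x ^ (Fintype.card F ^ 3) = x}
    mul_mem' := by
      intro a b ha hb
      simp only [Set.mem_setOf_eq] at *
      rw [mul_pow, ha, hb]
    add_mem' := by
      intro a b ha hb
      simp only [Set.mem_setOf_eq] at *
      obtain ⟨p, n, hp, hn0, hcard, hF, hE⟩ := E3_charstuff F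
      haveI := hE
      haveI : Fact p.Prime := ⟨hp⟩
      rw [hcard, ← pow_mul] at ha hb ⊢
      rw [add_pow_char_pow, ha, hb]
    one_mem' := by simp
    zero_mem' := by
      simp only [Set.mem_setOf_eq]
      exact zero_pow (by positivity)
    algebraMap_mem' := by
      intro r
      simp only [Set.mem_setOf_eq, ← map_pow]
      congr 1
      have h1 : r ^ Fintype.card F = r := FiniteField.pow_card r
      calc r ^ Fintype.card F ^ 3 = ((r ^ Fintype.card F) ^ Fintype.card F) ^ Fintype.card F := by
            rw [← pow_mul, ← pow_mul]; ring_nf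
        _ = r := by rw [h1, h1, h1] }
  have hroots : (X ^ (Fintype.card F ^ 3) - X : F[X]).rootSet (E3 F) ⊆ S := by
    intro x hx
    rw [Polynomial.mem_rootSet_of_ne hgne] at hx
    have : x ^ (Fintype.card F ^ 3) - x = 0 := by
      simpa [map_sub, map_pow, aeval_X] using hx
    simpa [S, Set.mem_setOf_eq, sub_eq_zero] using this
  have htop : (⊤ : Subalgebra F (E3 F)) ≤ S := by
    rw [← hsub]
    exact Algebra.adjoin_le hroots
  exact htop (Algebra.mem_top)

/-- `E3 F` has `q ^ 3` elements. -/
private lemma E3_card : Fintype.card (E3 F) = Fintype.card F ^ 3 := by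
  have hq1 : 1 < Fintype.card F := Fintype.one_lt_card
  obtain ⟨p, n, hp, hn0, hcard, hF, hE⟩ := E3_charstuff F
  haveI := hF
  haveI : Fact p.Prime := ⟨hp⟩
  have hsep : (X ^ (Fintype.card F ^ 3) - X : F[X]).Separable := by
    have hdvd : p ∣ Fintype.card F ^ 3 := by
      exact (dvd_pow_self p hn0).trans (hcard ▸ dvd_pow_self _ (by norm_num))
    exact galois_poly_separable p _ hdvd
  have key : Fintype.card ((X ^ (Fintype.card F ^ 3) - X : F[X]).rootSet (E3 F)) =
      (X ^ (Fintype.card F ^ 3) - X : F[X]).natDegree :=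
    card_rootSet_eq_natDegree hsep (SplittingField.splits _)
  have hdeg : (X ^ (Fintype.card F ^ 3) - X : F[X]).natDegree = Fintype.card F ^ 3 :=
    FiniteField.X_pow_card_pow_sub_X_natDegree_eq _ (by norm_num) hq1
  have huniv : (X ^ (Fintype.card F ^ 3) - X : F[X]).rootSet (E3 F) = Set.univ := by
    rw [Set.eq_univ_iff_forall]
    intro x
    rw [Polynomial.mem_rootSet_of_ne
      (FiniteField.X_pow_card_pow_sub_X_ne_zero _ (by norm_num) hq1)]
    simp only [map_sub, map_pow, aeval_X]
    rw [E3_pow_cube, sub_self]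
  have h1 : Fintype.card ((X ^ (Fintype.card F ^ 3) - X : F[X]).rootSet (E3 F)) =
      Fintype.card (Set.univ : Set (E3 F)) := Fintype.card_congr (Equiv.setCongr huniv)
  have h2 : Fintype.card (Set.univ : Set (E3 F)) = Fintype.card (E3 F) :=
    Fintype.card_congr (Equiv.Set.univ _)
  rw [← h2, ← h1, key, hdeg]

/-- The degree of `E3 F` over `F` is `3`. -/
private lemma E3_finrank : Module.finrank F (E3 F) = 3 := by
  have h := card_eq_pow_finrank (K := F) (V := E3 F)
  rw [E3_card] at h
  exact (Nat.pow_right_injective Fintype.one_lt_card h.symm)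

end OrthogovalAux




noncomputable section OrthogovalTrace

variable {F : Type*} [Field F] [Fintype F] {E : Type*} [Field E] [Fintype E] [Algebra F E]

local notation "q" => Fintype.card F

private lemma gen_frob_add (a b : E) : (a + b) ^ q = a ^ q + b ^ q := by
  obtain ⟨p, hchar⟩ := CharP.exists F
  haveI := hchar
  haveI hp : Fact p.Prime := ⟨CharP.char_is_prime F p⟩
  obtain ⟨n, hn⟩ := FiniteField.card F p
  haveI : CharP E p := charP_of_injective_algebraMap (algebraMap F E).injective p
  rw [hn.2]
  exact add_pow_char_pow ..

private lemma gen_frob_neg (a : E) : (-a) ^ q = -(a ^ q) := by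
  have h := gen_frob_add (F := F) a (-a)
  simp only [add_neg_cancel] at h
  have h0 : (0 : E) ^ q = 0 := zero_pow Fintype.card_ne_zero
  rw [h0] at h
  linear_combination -h

private lemma alg_pow (l : F) : (algebraMap F E l) ^ q = algebraMap F E l := by
  rw [← map_pow, FiniteField.pow_card]

private lemma pow_cube (z : E) (hcard : Fintype.card E = q ^ 3) :
    ((z ^ q) ^ q) ^ q = z := by
  have h := FiniteField.pow_card z
  rw [hcard] at h
  calc ((z ^ q) ^ q) ^ q = z ^ (q * q * q) := by rw [pow_mul, pow_mul]
    _ = z ^ q ^ 3 := by ring_nf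
    _ = z := h

/-- The (unbundled, `E`-valued) trace of `E` over `F`. -/
private def Tr0 (F : Type*) [Fintype F] {E : Type*} [Monoid E] [AddCommMonoid E] (z : E) : E :=
  z + z ^ (Fintype.card F) + (z ^ (Fintype.card F)) ^ (Fintype.card F)

private lemma Tr0_add (a b : E) : Tr0 F (a + b) = Tr0 F a + Tr0 F b := by
  unfold Tr0
  rw [gen_frob_add (F := F) a b, gen_frob_add (F := F) (a ^ q) (b ^ q)]
  ring

private lemma Tr0_algmul (l : F) (z : E) :
    Tr0 F (algebraMap F E l * z) = algebraMap F E l * Tr0 F z := by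
  unfold Tr0
  rw [mul_pow, mul_pow, alg_pow, alg_pow]
  ring

private lemma Tr0_frob (z : E) (hcard : Fintype.card E = q ^ 3) : Tr0 F (z ^ q) = Tr0 F z := by
  unfold Tr0
  rw [pow_cube z hcard]
  ring

private lemma Tr0_fixed_pow (z : E) (hcard : Fintype.card E = q ^ 3) :
    (Tr0 F z) ^ q = Tr0 F z := by
  unfold Tr0
  rw [gen_frob_add (F := F), gen_frob_add (F := F), pow_cube z hcard]
  ring

private lemma exists_fixed (hcard : Fintype.card E = q ^ 3) (z : E) (hz : z ^ q = z) :
    ∃ l : F, algebraMap F E l = z := by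
  classical
  by_contra hcon
  push_neg at hcon
  have hq1 : 1 < q := Fintype.one_lt_card
  have hgne : (X ^ q - X : E[X]) ≠ 0 := FiniteField.X_pow_card_sub_X_ne_zero E hq1
  have hdeg : (X ^ q - X : E[X]).natDegree = q :=
    FiniteField.X_pow_card_sub_X_natDegree_eq E hq1
  set s : Finset E := Finset.univ.image (algebraMap F E) with hs
  have hscard : s.card = q := by
    rw [hs, Finset.card_image_of_injective _ (algebraMap F E).injective, Finset.card_univ]
  have hzs : z ∉ s := by
    intro hmem
    rw [hs, Finset.mem_image] at hmem
    obtain ⟨l, -, hl⟩ := hmem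
    exact hcon l hl
  have hsub : insert z s ⊆ (X ^ q - X : E[X]).roots.toFinset := by
    intro x hx
    rw [Multiset.mem_toFinset, Polynomial.mem_roots hgne]
    simp only [Finset.mem_insert, hs, Finset.mem_image] at hx
    rcases hx with rfl | ⟨l, -, rfl⟩
    · simp [Polynomial.IsRoot, hz]
    · simp [Polynomial.IsRoot, alg_pow l]
  have h1 : q + 1 ≤ (X ^ q - X : E[X]).roots.toFinset.card := by
    have := Finset.card_le_card hsub
    rwa [Finset.card_insert_of_notMem hzs, hscard] at this
  have h2 : (X ^ q - X : E[X]).roots.toFinset.card ≤ (X ^ q - X : E[X]).roots.card :=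
    Multiset.toFinset_card_le _
  have h3 := Polynomial.card_roots' (X ^ q - X : E[X])
  omega

/-- The `F`-valued trace map of `E` over `F`, as a linear map. -/
private noncomputable def TrF (hcard : Fintype.card E = q ^ 3) : E →ₗ[F] F where
  toFun z := (exists_fixed hcard (Tr0 F z) (Tr0_fixed_pow z hcard)).choose
  map_add' x y := by
    apply (algebraMap F E).injective
    rw [map_add]
    rw [(exists_fixed hcard (Tr0 F (x + y)) (Tr0_fixed_pow _ hcard)).choose_spec,
      (exists_fixed hcard (Tr0 F x) (Tr0_fixed_pow _ hcard)).choose_spec,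
      (exists_fixed hcard (Tr0 F y) (Tr0_fixed_pow _ hcard)).choose_spec]
    exact Tr0_add x y
  map_smul' l x := by
    apply (algebraMap F E).injective
    rw [RingHom.id_apply, smul_eq_mul, map_mul,
      (exists_fixed hcard (Tr0 F (l • x)) (Tr0_fixed_pow _ hcard)).choose_spec,
      (exists_fixed hcard (Tr0 F x) (Tr0_fixed_pow _ hcard)).choose_spec,
      Algebra.smul_def]
    exact Tr0_algmul l x

private lemma TrF_spec (hcard : Fintype.card E = q ^ 3) (z : E) :
    algebraMap F E (TrF hcard z) = Tr0 F z :=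
  (exists_fixed hcard (Tr0 F z) (Tr0_fixed_pow z hcard)).choose_spec

private lemma TrF_eq_zero_iff (hcard : Fintype.card E = q ^ 3) (z : E) :
    TrF hcard z = 0 ↔ Tr0 F z = 0 := by
  rw [← TrF_spec hcard z]
  constructor
  · intro h; rw [h, map_zero]
  · intro h; exact (algebraMap F E).injective (by rw [h, map_zero])

/-- Nondegeneracy of the trace pairing. -/
private lemma Tr0_nondeg (hcard : Fintype.card E = q ^ 3) (c : E)
    (h : ∀ x : E, Tr0 F (c * x) = 0) : c = 0 := by
  classical
  by_contra hc
  have hq1 : 1 < q := Fintype.one_lt_card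
  set f : E[X] := C c * X + C (c ^ q) * X ^ q + C ((c ^ q) ^ q) * X ^ (q * q) with hf
  have hcoeff : f.coeff 1 = c := by
    rw [hf]
    simp only [coeff_add, coeff_C_mul, coeff_X_one, coeff_X_pow]
    rw [if_neg (by omega), if_neg (by nlinarith)]
    ring
  have hfne : f ≠ 0 := fun h0 => hc (by rw [← hcoeff, h0, coeff_zero])
  have hroot : ∀ x : E, f.IsRoot x := by
    intro x
    have hTr := h x
    unfold Tr0 at hTr
    rw [mul_pow, mul_pow] at hTr
    simp only [Polynomial.IsRoot, hf, eval_add, eval_mul, eval_C, eval_X, eval_pow]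
    calc c * x + c ^ q * x ^ q + (c ^ q) ^ q * (x ^ (q * q))
        = c * x + c ^ q * x ^ q + (c ^ q) ^ q * ((x ^ q) ^ q) := by rw [pow_mul]
      _ = 0 := by linear_combination hTr
  have hsub : (Finset.univ : Finset E) ⊆ f.roots.toFinset := by
    intro x _
    rw [Multiset.mem_toFinset, Polynomial.mem_roots hfne]
    exact hroot x
  have h1 : Fintype.card E ≤ f.roots.toFinset.card := by
    simpa [Finset.card_univ] using Finset.card_le_card hsub
  have h2 := (Multiset.toFinset_card_le f.roots).trans (Polynomial.card_roots' f)
  have hdeg : f.natDegree ≤ q * q := by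
    apply (Polynomial.natDegree_add_le _ _).trans
    simp only [max_le_iff]
    constructor
    · apply (Polynomial.natDegree_add_le _ _).trans
      simp only [max_le_iff]
      constructor
      · refine (Polynomial.natDegree_C_mul_le _ _).trans ?_
        rw [Polynomial.natDegree_X]; nlinarith
      · refine (Polynomial.natDegree_C_mul_le _ _).trans ?_
        rw [Polynomial.natDegree_X_pow]; nlinarith
    · exact (Polynomial.natDegree_C_mul_le _ _).trans (by simp [Polynomial.natDegree_X_pow])
  have : Fintype.card E ≤ q * q := le_trans h1 (le_trans h2 hdeg)
  rw [hcard] at this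
  have h4 : q ^ 3 = q * q * q := by ring
  nlinarith


private def PsiB (hcard : Fintype.card E = q ^ 3) : E →ₗ[F] Module.Dual F E :=
  LinearMap.mk₂ F (fun a x => TrF hcard (a * x))
    (fun a b x => by rw [add_mul, map_add])
    (fun l a x => by rw [smul_mul_assoc, map_smul])
    (fun a x y => by rw [mul_add, map_add])
    (fun l a x => by rw [mul_smul_comm, map_smul])

private lemma PsiB_inj (hcard : Fintype.card E = q ^ 3) :
    Function.Injective (PsiB (F := F) (E := E) hcard) := by
  intro a b hab
  have h : ∀ x : E, TrF hcard ((a - b) * x) = 0 := by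
    intro x
    have : TrF hcard (a * x) = TrF hcard (b * x) := by
      have := congrArg (fun φ => φ x) hab
      simpa [PsiB] using this
    rw [sub_mul, map_sub, this, sub_self]
  have h0 : ∀ x : E, Tr0 F ((a - b) * x) = 0 := fun x => (TrF_eq_zero_iff hcard _).mp (h x)
  have := Tr0_nondeg hcard _ h0
  exact sub_eq_zero.mp this

/-- The frobenius-twisted multiplier map `y ↦ c y^q + c^{q²} y^{q²}`. -/
private def Mmap (c : E) : E →ₗ[F] E where
  toFun y := c * y ^ q + (c ^ q) ^ q * (y ^ q) ^ q
  map_add' a b := by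
    rw [gen_frob_add (F := F) a b, gen_frob_add (F := F) (a ^ q) (b ^ q)]
    ring
  map_smul' l a := by
    simp only [RingHom.id_apply]
    rw [Algebra.smul_def, Algebra.smul_def, mul_pow, mul_pow, alg_pow, alg_pow]
    ring

/-- Main non-vanishing lemma: the quadratic form `x ↦ Tr(c x^{q+1})` does not vanish
identically on any 2-dimensional subspace. -/
private lemma key_nonvanish (hcard : Fintype.card E = q ^ 3) (hrank : finrank F E = 3)
    (c : E) (hc : c ≠ 0) (W : Submodule F E) (hW : finrank F W = 2)
    (hQ : ∀ x ∈ W, Tr0 F (c * x ^ (q + 1)) = 0) : False := by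
  classical
  have hQ' : ∀ x ∈ W, Tr0 F (c * (x ^ q * x)) = 0 := by
    intro x hx
    have := hQ x hx
    rwa [pow_succ] at this
  -- polarization
  have hB : ∀ x ∈ W, ∀ y ∈ W, Tr0 F ((Mmap (F := F) c) y * x) = 0 := by
    intro x hx y hy
    have e1 := hQ' (x + y) (add_mem hx hy)
    have e2 := hQ' x hx
    have e3 := hQ' y hy
    rw [gen_frob_add (F := F) x y] at e1
    have expand : c * ((x ^ q + y ^ q) * (x + y)) =
        c * (x ^ q * x) + c * (y ^ q * y) + (c * (x ^ q * y) + c * (y ^ q * x)) := by ring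
    rw [expand, Tr0_add, Tr0_add, Tr0_add, e2, e3] at e1
    -- now e1 : 0 + 0 + (Tr0 (c x^q y) + Tr0 (c y^q x)) = 0
    have t1 : Tr0 F (c * (x ^ q * y)) + Tr0 F (c * (y ^ q * x)) = 0 := by
      linear_combination e1
    -- rewrite the first term using Frobenius invariance of the trace
    have hw : ((c ^ q) ^ q * (((y ^ q) ^ q) * x)) ^ q = c * (x ^ q * y) := by
      rw [mul_pow, mul_pow, pow_cube c hcard, pow_cube y hcard]
      ring
    have t2 : Tr0 F (c * (x ^ q * y)) = Tr0 F ((c ^ q) ^ q * (((y ^ q) ^ q) * x)) := by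
      rw [← hw, Tr0_frob _ hcard]
    have hsum : (Mmap (F := F) c) y * x =
        c * (y ^ q * x) + (c ^ q) ^ q * (((y ^ q) ^ q) * x) := by
      simp only [Mmap, LinearMap.coe_mk, AddHom.coe_mk]
      ring
    rw [hsum, Tr0_add, ← t2]
    linear_combination t1
  -- the annihilator of W is 1-dimensional
  have hDrank : finrank F (W.dualAnnihilator) = 1 := by
    have h1 := Submodule.finrank_quotient_add_finrank W
    rw [hrank, hW] at h1
    have h2 : finrank F (E ⧸ W) = finrank F W.dualAnnihilator :=
      LinearEquiv.finrank_eq (Subspace.quotEquivAnnihilator W)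
    omega
  set A : Submodule F E := Submodule.comap (PsiB (F := F) hcard) W.dualAnnihilator with hA
  have hMA : ∀ y ∈ W, (Mmap (F := F) c) y ∈ A := by
    intro y hy
    rw [hA, Submodule.mem_comap, Submodule.mem_dualAnnihilator]
    intro x hx
    have : TrF hcard ((Mmap (F := F) c) y * x) = 0 :=
      (TrF_eq_zero_iff hcard _).mpr (hB x hx y hy)
    simpa [PsiB] using this
  have hArank : finrank F A ≤ 1 := by
    have hres : ∀ x ∈ A, (PsiB (F := F) hcard) x ∈ W.dualAnnihilator := fun x hx => hx
    have hinj : Function.Injective ((PsiB (F := F) hcard).restrict hres) := by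
      intro a b hab
      have : (PsiB (F := F) hcard) (a : E) = (PsiB (F := F) hcard) (b : E) := by
        have := congrArg (Subtype.val) hab
        simpa [LinearMap.restrict_apply] using this
      exact Subtype.ext (PsiB_inj hcard this)
    have := LinearMap.finrank_le_finrank_of_injective hinj
    omega
  -- find a nonzero element of W killed by Mmap c
  have hker : ∃ y : E, y ∈ W ∧ y ≠ 0 ∧ (Mmap (F := F) c) y = 0 := by
    set M' : ↥W →ₗ[F] ↥A := (Mmap (F := F) c).restrict (fun y hy => hMA y hy) with hM'
    by_cases hkb : LinearMap.ker M' = ⊥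
    · exfalso
      have hinj : Function.Injective M' := LinearMap.ker_eq_bot.mp hkb
      have := LinearMap.finrank_le_finrank_of_injective hinj
      rw [hW] at this
      omega
    · obtain ⟨b, hbmem, hbne⟩ := Submodule.exists_mem_ne_zero_of_ne_bot hkb
      refine ⟨(b : E), b.2, ?_, ?_⟩
      · simpa using hbne
      · have : M' b = 0 := hbmem
        have := congrArg (Subtype.val) this
        simpa [hM', LinearMap.restrict_apply] using this
  obtain ⟨y, hyW, hy0, hMy⟩ := hker
  have hMy' : c * y ^ q + (c ^ q) ^ q * (y ^ q) ^ q = 0 := by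
    simpa [Mmap] using hMy
  -- raise to the q-th power
  have h1 : c ^ q * ((y ^ q) ^ q) + c * y = 0 := by
    have := congrArg (fun t => t ^ q) hMy'
    rw [gen_frob_add (F := F), mul_pow, mul_pow, zero_pow Fintype.card_ne_zero] at this
    rw [pow_cube c hcard, pow_cube y hcard] at this
    linear_combination this
  set u : E := c * (y * y ^ q) with hu
  have huq : u ^ q = -u := by
    rw [hu, mul_pow, mul_pow]
    linear_combination (y ^ q) * h1
  have huq2 : (u ^ q) ^ q = u := by
    rw [huq, gen_frob_neg (F := F), huq, neg_neg]
  have hTru : Tr0 F u = u := by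
    unfold Tr0
    rw [huq2, huq]
    ring
  have hQy : Tr0 F u = 0 := by
    have := hQ y hyW
    rw [pow_succ] at this
    have heq : c * (y ^ q * y) = u := by rw [hu]; ring
    rwa [heq] at this
  rw [hTru] at hQy
  rw [hu] at hQy
  have : y * y ^ q ≠ 0 := mul_ne_zero hy0 (pow_ne_zero _ hy0)
  exact (mul_ne_zero hc this) hQy
open scoped LinearAlgebra.Projectivization
open Projectivization in
/-- The orthogoval permutation of the projective plane over `E`: `[x] ↦ [x^{q+1}]`. -/
private noncomputable def sigmaFun (F : Type*) [Field F] [Fintype F] {E : Type*} [Field E]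
    [Algebra F E] (p : ℙ F E) : ℙ F E :=
  Projectivization.mk F (p.rep ^ (Fintype.card F + 1)) (pow_ne_zero _ p.rep_nonzero)

open Projectivization

private lemma sigmaFun_mk (v : E) (hv : v ≠ 0) :
    sigmaFun F (Projectivization.mk F v hv)
      = Projectivization.mk F (v ^ (q + 1)) (pow_ne_zero _ hv) := by
  obtain ⟨a, ha⟩ := exists_smul_eq_mk_rep F v hv
  have ha' : (a : F) • v = (Projectivization.mk F v hv).rep := by
    rw [← ha, Units.smul_def]
  unfold sigmaFun
  rw [mk_eq_mk_iff']
  refine ⟨(a : F) ^ (q + 1), ?_⟩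
  rw [← ha']
  exact (_root_.smul_pow _ _ _).symm

private lemma sigmaFun_inj (hcard : Fintype.card E = q ^ 3) :
    Function.Injective (sigmaFun F (E := E)) := by
  intro p₁ p₂ h
  have hv₁0 : p₁.rep ≠ 0 := p₁.rep_nonzero
  have hv₂0 : p₂.rep ≠ 0 := p₂.rep_nonzero
  unfold sigmaFun at h
  rw [mk_eq_mk_iff'] at h
  obtain ⟨a, ha⟩ := h
  have hane : a ≠ 0 := by
    intro h0
    rw [h0, zero_smul] at ha
    exact pow_ne_zero _ hv₁0 ha.symm
  have hwq : (algebraMap F E a) ^ q = algebraMap F E a := alg_pow a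
  have hw0 : algebraMap F E a ≠ 0 := fun h0 =>
    hane ((algebraMap F E).injective (by rw [h0, map_zero]))
  set z := p₁.rep * p₂.rep⁻¹ with hz
  have hz0 : z ≠ 0 := mul_ne_zero hv₁0 (inv_ne_zero hv₂0)
  have hzw : z ^ (q + 1) = algebraMap F E a := by
    rw [hz, mul_pow]
    rw [Algebra.smul_def] at ha
    rw [inv_pow, ← ha, mul_inv_cancel_right₀ (pow_ne_zero _ hv₂0)]
  have hzq : z ^ q = z := by
    have h1 : (z ^ (q + 1)) ^ q = z ^ (q + 1) := by rw [hzw, hwq]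
    rw [pow_succ, mul_pow] at h1
    have hzq0 : z ^ q ≠ 0 := pow_ne_zero _ hz0
    have h2 : (z ^ q) ^ q = z := by
      calc (z ^ q) ^ q = ((z ^ q) ^ q * z ^ q) * (z ^ q)⁻¹ := by field_simp
        _ = (z ^ q * z) * (z ^ q)⁻¹ := by rw [h1]
        _ = z := by field_simp
    have h3 : ((z ^ q) ^ q) ^ q = z ^ q := by rw [h2]
    calc z ^ q = ((z ^ q) ^ q) ^ q := h3.symm
      _ = z := pow_cube (F := F) z hcard
  obtain ⟨l, hl⟩ := exists_fixed hcard z hzq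
  have hv12 : l • p₂.rep = p₁.rep := by
    rw [Algebra.smul_def, hl, hz]
    field_simp
  have hmk : Projectivization.mk F p₁.rep hv₁0 = Projectivization.mk F p₂.rep hv₂0 :=
    (mk_eq_mk_iff' F _ _ hv₁0 hv₂0).mpr ⟨l, hv12⟩
  exact (mk_rep p₁).symm.trans (hmk.trans (mk_rep p₂))

/-- The quadratic expansion of the trace form. -/
private lemma Tr0_expand (c x y : E) (a b : F) :
    Tr0 F (c * ((a • x + b • y) ^ q * (a • x + b • y))) =
      algebraMap F E (a * a) * Tr0 F (c * (x ^ q * x))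
      + algebraMap F E (a * b) * Tr0 F (c * (x ^ q * y + y ^ q * x))
      + algebraMap F E (b * b) * Tr0 F (c * (y ^ q * y)) := by
  rw [Algebra.smul_def, Algebra.smul_def, gen_frob_add (F := F), mul_pow, mul_pow,
    alg_pow, alg_pow]
  have expand : c * ((algebraMap F E a * x ^ q + algebraMap F E b * y ^ q) *
      (algebraMap F E a * x + algebraMap F E b * y)) =
        algebraMap F E (a * a) * (c * (x ^ q * x))
        + algebraMap F E (a * b) * (c * (x ^ q * y + y ^ q * x))
        + algebraMap F E (b * b) * (c * (y ^ q * y)) := by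
    rw [map_mul, map_mul, map_mul]
    ring
  rw [expand, Tr0_add, Tr0_add, Tr0_algmul, Tr0_algmul, Tr0_algmul]

/-- The main counting bound, on the `E` side. -/
private lemma count_le_two (hcard : Fintype.card E = q ^ 3) (hrank : finrank F E = 3)
    (W₁ W₂ : Submodule F E) (h1 : finrank F W₁ = 2) (h2 : finrank F W₂ = 2) :
    {p : ℙ F E | p.submodule ≤ W₁ ∧ (sigmaFun F p).submodule ≤ W₂}.ncard ≤ 2 := by
  classical
  -- find a trace functional vanishing on W₂
  obtain ⟨c, hc0, hcW2⟩ : ∃ c : E, c ≠ 0 ∧ ∀ x ∈ W₂, Tr0 F (c * x) = 0 := by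
    have hsurj : Function.Surjective (PsiB (F := F) (E := E) hcard) := by
      rw [← LinearMap.injective_iff_surjective_of_finrank_eq_finrank
        (Subspace.dual_finrank_eq (K := F) (V := E)).symm]
      exact PsiB_inj hcard
    have hDrank : finrank F (W₂.dualAnnihilator) = 1 := by
      have ha := Submodule.finrank_quotient_add_finrank W₂
      rw [hrank, h2] at ha
      have hb : finrank F (E ⧸ W₂) = finrank F W₂.dualAnnihilator :=
        LinearEquiv.finrank_eq (Subspace.quotEquivAnnihilator W₂)
      omega
    have hne : W₂.dualAnnihilator ≠ ⊥ := by
      intro hbot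
      rw [hbot, finrank_bot] at hDrank
      omega
    obtain ⟨φ, hφmem, hφne⟩ := Submodule.exists_mem_ne_zero_of_ne_bot hne
    obtain ⟨c, rfl⟩ := hsurj φ
    refine ⟨c, ?_, ?_⟩
    · intro h0
      rw [h0, map_zero] at hφne
      exact hφne rfl
    · intro x hx
      have : (PsiB (F := F) hcard) c x = 0 :=
        (Submodule.mem_dualAnnihilator _).mp hφmem x hx
      have hTrF : TrF hcard (c * x) = 0 := by simpa [PsiB] using this
      exact (TrF_eq_zero_iff hcard _).mp hTrF
  set S := {p : ℙ F E | p.submodule ≤ W₁ ∧ (sigmaFun F p).submodule ≤ W₂} with hS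
  have hSmem : ∀ p ∈ S, p.rep ∈ W₁ ∧ Tr0 F (c * (p.rep ^ q * p.rep)) = 0 := by
    intro p hp
    obtain ⟨hp1, hp2⟩ := hp
    constructor
    · rw [Projectivization.submodule_eq, Submodule.span_singleton_le_iff_mem] at hp1
      exact hp1
    · unfold sigmaFun at hp2
      rw [Projectivization.submodule_mk, Submodule.span_singleton_le_iff_mem] at hp2
      have := hcW2 _ hp2
      rwa [pow_succ] at this
  by_contra hcon
  have hge : 3 ≤ S.ncard := by omega
  obtain ⟨t, htS, ht3⟩ := Set.exists_subset_card_eq hge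
  rw [Set.ncard_eq_three] at ht3
  obtain ⟨p₁, p₂, p₃, h12, h13, h23, rfl⟩ := ht3
  have hp₁ : p₁ ∈ S := htS (by simp)
  have hp₂ : p₂ ∈ S := htS (by simp)
  have hp₃ : p₃ ∈ S := htS (by simp)
  set v₁ := p₁.rep with hv₁
  set v₂ := p₂.rep with hv₂
  set v₃ := p₃.rep with hv₃
  have hv₁0 : v₁ ≠ 0 := p₁.rep_nonzero
  have hv₂0 : v₂ ≠ 0 := p₂.rep_nonzero
  have hv₃0 : v₃ ≠ 0 := p₃.rep_nonzero
  obtain ⟨hW₁v₁, hQ₁⟩ := hSmem p₁ hp₁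
  obtain ⟨hW₁v₂, hQ₂⟩ := hSmem p₂ hp₂
  obtain ⟨hW₁v₃, hQ₃⟩ := hSmem p₃ hp₃
  -- distinct points have non-proportional representatives
  have hprop : ∀ (x y : ℙ F E), x ≠ y → ∀ a : F, a • x.rep ≠ y.rep := by
    intro x y hxy a hay
    apply hxy
    have h5 : Projectivization.mk F y.rep y.rep_nonzero = Projectivization.mk F x.rep x.rep_nonzero :=
      (mk_eq_mk_iff' F _ _ _ _).mpr ⟨a, hay⟩
    exact ((mk_rep x).symm.trans (h5.symm.trans (mk_rep y)))
  -- v₁ and v₂ span W₁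
  have hindep : LinearIndependent F ![v₁, v₂] :=
    (LinearIndependent.pair_iff' hv₁0).mpr (hprop p₁ p₂ h12)
  have hspan : Submodule.span F {v₁, v₂} = W₁ := by
    apply Submodule.eq_of_le_of_finrank_le
    · rw [Submodule.span_le]
      intro x hx
      rcases hx with rfl | hx
      · exact hW₁v₁
      · rw [Set.mem_singleton_iff] at hx
        subst hx
        exact hW₁v₂
    · have hfr : finrank F (Submodule.span F (Set.range ![v₁, v₂])) = 2 := by
        rw [finrank_span_eq_card hindep]
        simp
      have hrange : Set.range ![v₁, v₂] = {v₁, v₂} := by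
        simp [Matrix.range_cons, Matrix.range_empty]
        exact Set.pair_comm _ _
      rw [hrange] at hfr
      rw [h1, hfr]
  have hv₃mem : v₃ ∈ Submodule.span F {v₁, v₂} := by rw [hspan]; exact hW₁v₃
  rw [Submodule.mem_span_pair] at hv₃mem
  obtain ⟨a, b, hab⟩ := hv₃mem
  have ha0 : a ≠ 0 := by
    intro h0
    rw [h0, zero_smul, zero_add] at hab
    exact hprop p₂ p₃ h23 b hab
  have hb0 : b ≠ 0 := by
    intro h0
    rw [h0, zero_smul, add_zero] at hab
    exact hprop p₁ p₃ h13 a hab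
  -- the mixed term also vanishes
  have hQmix : Tr0 F (c * (v₁ ^ q * v₂ + v₂ ^ q * v₁)) = 0 := by
    have hexp := Tr0_expand (F := F) c v₁ v₂ a b
    rw [hab, hQ₁, hQ₂] at hexp
    rw [hQ₃] at hexp
    have : algebraMap F E (a * b) * Tr0 F (c * (v₁ ^ q * v₂ + v₂ ^ q * v₁)) = 0 := by
      linear_combination -hexp
    rcases mul_eq_zero.mp this with h | h
    · exact absurd ((algebraMap F E).injective (by rw [h, map_zero]) : a * b = 0)
        (mul_ne_zero ha0 hb0)
    · exact h
  -- therefore the quadratic form vanishes identically on W₁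
  apply key_nonvanish hcard hrank c hc0 W₁ h1
  intro x hx
  rw [← hspan, Submodule.mem_span_pair] at hx
  obtain ⟨s, t, hst⟩ := hx
  rw [pow_succ, ← hst, Tr0_expand (F := F) c v₁ v₂ s t, hQ₁, hQ₂, hQmix]
  ring
end OrthogovalTrace

section FinalAssembly

open Projectivization Module
open scoped LinearAlgebra.Projectivization

/-- For every finite field `F` (with `q` elements) there is a bijection `σ` of the
point set of `PG(2,q)` (the projectivization of `F³`) such that the set of points `p` lying on a
given projective line `W₁` whose image `σ p` lies on a given projective line `W₂` has at most two
elements; i.e. `σ` maps every line to an oval, giving a pair of orthogoval Desarguesian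
projective planes of order `q`. -/
theorem exists_orthogoval_pair_of_projective_planes
    (F : Type*) [Field F] [Fintype F] :
    ∃ σ : Projectivization F (Fin 3 → F) ≃ Projectivization F (Fin 3 → F),
      ∀ W₁ W₂ : Submodule F (Fin 3 → F),
        Module.finrank F W₁ = 2 → Module.finrank F W₂ = 2 →
        {p : Projectivization F (Fin 3 → F) |
          p.submodule ≤ W₁ ∧ (σ p).submodule ≤ W₂}.ncard ≤ 2 := by
  classical
  have hcard := E3_card F
  have hrank := E3_finrank F
  -- a linear equivalence between `Fin 3 → F` and the cubic extension
  have hfr : finrank F (Fin 3 → F) = finrank F (E3 F) := by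
    rw [hrank, Module.finrank_fin_fun]
  let e : (Fin 3 → F) ≃ₗ[F] E3 F := LinearEquiv.ofFinrankEq _ _ hfr
  -- the induced equivalence of projectivizations
  let eP : ℙ F (Fin 3 → F) ≃ ℙ F (E3 F) :=
  { toFun := Projectivization.map (e : (Fin 3 → F) →ₗ[F] E3 F) e.injective
    invFun := Projectivization.map (e.symm : E3 F →ₗ[F] (Fin 3 → F)) e.symm.injective
    left_inv := by
      apply Projectivization.ind
      intro v hv
      rw [Projectivization.map_mk, Projectivization.map_mk]
      simp only [LinearEquiv.coe_coe, LinearEquiv.symm_apply_apply]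
    right_inv := by
      apply Projectivization.ind
      intro v hv
      rw [Projectivization.map_mk, Projectivization.map_mk]
      simp only [LinearEquiv.coe_coe, LinearEquiv.apply_symm_apply] }
  have hfin : Finite (ℙ F (E3 F)) := Quotient.finite _
  let σE : ℙ F (E3 F) ≃ ℙ F (E3 F) :=
    Equiv.ofBijective (sigmaFun F) (Finite.injective_iff_bijective.mp (sigmaFun_inj hcard))
  refine ⟨eP.trans (σE.trans eP.symm), ?_⟩
  intro W₁ W₂ hW₁ hW₂
  -- membership transfer lemmas
  have hmem : ∀ (W : Submodule F (Fin 3 → F)) (v : Fin 3 → F),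
      e v ∈ W.map (e : (Fin 3 → F) →ₗ[F] E3 F) ↔ v ∈ W := by
    intro W v
    constructor
    · rintro ⟨x, hx, hex⟩
      have : x = v := e.injective hex
      rwa [← this]
    · intro hv
      exact Submodule.mem_map_of_mem hv
  have hsub1 : ∀ (p : ℙ F (Fin 3 → F)) (W : Submodule F (Fin 3 → F)),
      (eP p).submodule ≤ W.map (e : (Fin 3 → F) →ₗ[F] E3 F) ↔ p.submodule ≤ W := by
    intro p W
    induction p using Projectivization.ind with
    | h v hv =>
      show ((Projectivization.map (e : (Fin 3 → F) →ₗ[F] E3 F) e.injective)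
        (Projectivization.mk F v hv)).submodule ≤ _ ↔ _
      rw [Projectivization.map_mk, Projectivization.submodule_mk, Projectivization.submodule_mk,
        Submodule.span_singleton_le_iff_mem, Submodule.span_singleton_le_iff_mem]
      exact hmem W v
  have hsub2 : ∀ (p' : ℙ F (E3 F)) (W : Submodule F (Fin 3 → F)),
      (eP.symm p').submodule ≤ W ↔ p'.submodule ≤ W.map (e : (Fin 3 → F) →ₗ[F] E3 F) := by
    intro p' W
    induction p' using Projectivization.ind with
    | h w hw =>
      show ((Projectivization.map (e.symm : E3 F →ₗ[F] (Fin 3 → F)) e.symm.injective)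
        (Projectivization.mk F w hw)).submodule ≤ _ ↔ _
      rw [Projectivization.map_mk, Projectivization.submodule_mk, Projectivization.submodule_mk,
        Submodule.span_singleton_le_iff_mem, Submodule.span_singleton_le_iff_mem]
      constructor
      · intro h
        have := hmem W (e.symm w)
        simp only [LinearEquiv.coe_coe, LinearEquiv.apply_symm_apply] at this
        exact this.mpr h
      · intro h
        have := hmem W (e.symm w)
        simp only [LinearEquiv.coe_coe, LinearEquiv.apply_symm_apply] at this
        exact this.mp h
  -- transfer the counting problem to the `E3 F` side
  have hseteq : {p : ℙ F (Fin 3 → F) | p.submodule ≤ W₁ ∧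
        ((eP.trans (σE.trans eP.symm)) p).submodule ≤ W₂} =
      (⇑eP) ⁻¹' {p' : ℙ F (E3 F) | p'.submodule ≤ W₁.map (e : (Fin 3 → F) →ₗ[F] E3 F) ∧
        (sigmaFun F p').submodule ≤ W₂.map (e : (Fin 3 → F) →ₗ[F] E3 F)} := by
    ext p
    simp only [Set.mem_setOf_eq, Set.mem_preimage, Equiv.trans_apply]
    constructor
    · rintro ⟨ha, hb⟩
      refine ⟨(hsub1 p W₁).mpr ha, ?_⟩
      have hb' := (hsub2 (σE (eP p)) W₂).mp hb
      simpa [σE, Equiv.ofBijective_apply] using hb'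
    · rintro ⟨ha, hb⟩
      refine ⟨(hsub1 p W₁).mp ha, ?_⟩
      apply (hsub2 (σE (eP p)) W₂).mpr
      simpa [σE, Equiv.ofBijective_apply] using hb
  rw [hseteq, ← Equiv.image_symm_eq_preimage, Set.ncard_image_of_injective _ eP.symm.injective]
  exact count_le_two hcard hrank _ _
    (by rw [LinearEquiv.finrank_map_eq]; exact hW₁)
    (by rw [LinearEquiv.finrank_map_eq]; exact hW₂)

end FinalAssembly
end

section
/- For D₁ = {0,1,3,9}, D₂ = {0,1,5,11}, D₃ = {0,1,4,6}, D₄ = {0,1,8,10}, viewed as subsets of Z/13Z, define L_i = { {d + x : d ∈ D_i} : x ∈ Z/13Z } for 1 ≤ i ≤ 4. Then each L_i is a family of 13 four-element subsets of Z/13Z in which every two distinct elements of Z/13Z lie in exactly one member (so each L_i is the line set of a projective plane of order 3 on Z/13Z), and for all i ≠ j, every member of L_i intersects every member of L_j in at most two points. Hence there exists a set of four mutually orthogoval projective planes of order 3. -/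
/-- The four base blocks (difference sets) `D₁ = {0,1,3,9}`, `D₂ = {0,1,5,11}`,
`D₃ = {0,1,4,6}`, `D₄ = {0,1,8,10}` in `ℤ/13ℤ`. -/
def fourBaseBlocks : Fin 4 → Finset (ZMod 13) :=
  ![{0, 1, 3, 9}, {0, 1, 5, 11}, {0, 1, 4, 6}, {0, 1, 8, 10}]

/-- `fourPlanes i` is the family of all translates of the `i`-th base block. -/
def fourPlanes (i : Fin 4) : Set (Finset (ZMod 13)) :=
  {B | ∃ x : ZMod 13, B = (fourBaseBlocks i).image (· + x)}

/-- Small decidable fact: each base block has 4 elements. -/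
lemma baseBlocks_card : ∀ i : Fin 4, (fourBaseBlocks i).card = 4 := by decide

/-- Small decidable fact: a base block meets any nontrivial translate of itself
in at most one point. -/
lemma baseBlocks_self : ∀ i : Fin 4, ∀ t : ZMod 13, t ≠ 0 →
    ((fourBaseBlocks i) ∩ ((fourBaseBlocks i).image (· + t))).card ≤ 1 := by decide

/-- Small decidable fact: every nonzero element is a difference of two base block elements. -/
lemma baseBlocks_diff : ∀ i : Fin 4, ∀ a : ZMod 13, a ≠ 0 →
    ∃ d ∈ fourBaseBlocks i, d + a ∈ fourBaseBlocks i := by decide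

/-- Small decidable fact: a base block meets any translate of a different base block
in at most two points. -/
lemma baseBlocks_cross : ∀ i j : Fin 4, i ≠ j → ∀ t : ZMod 13,
    ((fourBaseBlocks i) ∩ ((fourBaseBlocks j).image (· + t))).card ≤ 2 := by decide

lemma card_inter_translate (D E : Finset (ZMod 13)) (t s : ZMod 13) :
    ((D.image (· + t)) ∩ (E.image (· + s))).card = (D ∩ (E.image (· + (s - t)))).card := by
  have hinj : Function.Injective (· + t) := add_left_injective t
  rw [← Finset.card_image_of_injective (D ∩ (E.image (· + (s - t)))) hinj,
    Finset.image_inter _ _ hinj, Finset.image_image]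
  congr 2
  ext e
  simp [Function.comp, add_assoc, sub_add_cancel]

lemma block_card (i : Fin 4) (t : ZMod 13) :
    ((fourBaseBlocks i).image (· + t)).card = 4 := by
  rw [Finset.card_image_of_injective _ (add_left_injective t), baseBlocks_card]

lemma translate_injective (i : Fin 4) :
    Function.Injective (fun t => (fourBaseBlocks i).image (· + t)) := by
  intro t t' h
  simp only [] at h
  by_contra hne
  have h1 : ((fourBaseBlocks i).image (· + t) ∩ (fourBaseBlocks i).image (· + t')).card ≤ 1 := by
    rw [card_inter_translate]
    exact baseBlocks_self i (t' - t) (sub_ne_zero.mpr fun e => hne e.symm)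
  rw [h, Finset.inter_self, block_card] at h1
  omega

/-- Each of the four translate families is the line set of a projective plane of
order 3 on `ℤ/13ℤ` (13 blocks of size 4, every pair of distinct points in exactly one block),
and these four planes are mutually orthogoval (blocks from distinct planes meet in at most two
points). Hence there is a set of four mutually orthogoval projective planes of order 3. -/
theorem four_mutually_orthogoval_projective_planes_order_three :
    (∀ i : Fin 4, (fourPlanes i).ncard = 13) ∧
    (∀ i : Fin 4, ∀ B ∈ fourPlanes i, B.card = 4) ∧
    (∀ i : Fin 4, ∀ x y : ZMod 13, x ≠ y →
      ∃! B : Finset (ZMod 13), B ∈ fourPlanes i ∧ x ∈ B ∧ y ∈ B) ∧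
    (∀ i j : Fin 4, i ≠ j →
      ∀ B₁ ∈ fourPlanes i, ∀ B₂ ∈ fourPlanes j, (B₁ ∩ B₂).card ≤ 2) := by
  refine ⟨fun i => ?_, fun i B hB => ?_, fun i x y hxy => ?_, fun i j hij B₁ hB₁ B₂ hB₂ => ?_⟩
  · have : fourPlanes i = Set.range (fun t => (fourBaseBlocks i).image (· + t)) := by
      ext B; simp [fourPlanes, Set.range, eq_comm]
    rw [this, ← Set.image_univ, Set.ncard_image_of_injective _ (translate_injective i),
      Set.ncard_univ]
    simp [Nat.card_eq_fintype_card, ZMod.card]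
  · obtain ⟨t, rfl⟩ := hB
    exact block_card i t
  · obtain ⟨d, hd, hda⟩ := baseBlocks_diff i (x - y) (sub_ne_zero.mpr hxy)
    refine ⟨(fourBaseBlocks i).image (· + (y - d)), ⟨⟨y - d, rfl⟩, ?_, ?_⟩, ?_⟩
    · exact Finset.mem_image.mpr ⟨d + (x - y), hda, by ring⟩
    · exact Finset.mem_image.mpr ⟨d, hd, by ring⟩
    · rintro B ⟨⟨t, rfl⟩, hxB, hyB⟩
      by_contra hne
      have hne' : t ≠ y - d := fun e => hne (by rw [e])
      have h2 : 1 < ((fourBaseBlocks i).image (· + t) ∩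
          (fourBaseBlocks i).image (· + (y - d))).card := by
        refine Finset.one_lt_card.mpr ⟨x, ?_, y, ?_, hxy⟩
        · exact Finset.mem_inter.mpr ⟨hxB, Finset.mem_image.mpr ⟨d + (x - y), hda, by ring⟩⟩
        · exact Finset.mem_inter.mpr ⟨hyB, Finset.mem_image.mpr ⟨d, hd, by ring⟩⟩
      rw [card_inter_translate] at h2
      have := baseBlocks_self i (y - d - t) (sub_ne_zero.mpr fun e => hne' e.symm)
      omega
  · obtain ⟨t, rfl⟩ := hB₁
    obtain ⟨s, rfl⟩ := hB₂
    rw [card_inter_translate]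
    exact baseBlocks_cross i j hij (s - t)
end

section
/- There exists a set of seven mutually orthogoval affine planes of order 3, and seven is the maximum possible. That is: (a) there exist seven families L₁, …, L₇ of 3-element subsets of a 9-element set, each family having the property that every two distinct points lie in exactly one of its members, such that for all i ≠ j every member of L_i intersects every member of L_j in at most two points; and (b) no eight such families exist. -/
set_option maxRecDepth 8000

def mk (a b c : Fin 9) (h : ([a,b,c] : Multiset (Fin 9)).Nodup := by decide) :
    Finset (Fin 9) :=
  ⟨([a,b,c] : Multiset (Fin 9)), h⟩

def T0 : List (Finset (Fin 9)) := [mk 0 1 4, mk 0 2 5, mk 0 3 6, mk 0 7 8, mk 1 2 7, mk 1 3 8, mk 1 5 6, mk 2 3 4, mk 2 6 8, mk 3 5 7, mk 4 5 8, mk 4 6 7]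
def T1 : List (Finset (Fin 9)) := [mk 0 1 6, mk 0 2 3, mk 0 4 7, mk 0 5 8, mk 1 2 5, mk 1 3 7, mk 1 4 8, mk 2 4 6, mk 2 7 8, mk 3 4 5, mk 3 6 8, mk 5 6 7]
def T2 : List (Finset (Fin 9)) := [mk 0 1 5, mk 0 2 7, mk 0 3 4, mk 0 6 8, mk 1 2 3, mk 1 4 6, mk 1 7 8, mk 2 4 8, mk 2 5 6, mk 3 5 8, mk 3 6 7, mk 4 5 7]
def T3 : List (Finset (Fin 9)) := [mk 0 1 8, mk 0 2 6, mk 0 3 7, mk 0 4 5, mk 1 2 4, mk 1 3 5, mk 1 6 7, mk 2 3 8, mk 2 5 7, mk 3 4 6, mk 4 7 8, mk 5 6 8]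
def T4 : List (Finset (Fin 9)) := [mk 0 1 7, mk 0 2 4, mk 0 3 8, mk 0 5 6, mk 1 2 8, mk 1 3 6, mk 1 4 5, mk 2 3 5, mk 2 6 7, mk 3 4 7, mk 4 6 8, mk 5 7 8]
def T5 : List (Finset (Fin 9)) := [mk 0 1 3, mk 0 2 8, mk 0 4 6, mk 0 5 7, mk 1 2 6, mk 1 4 7, mk 1 5 8, mk 2 3 7, mk 2 4 5, mk 3 4 8, mk 3 5 6, mk 6 7 8]
def T6 : List (Finset (Fin 9)) := [mk 0 1 2, mk 0 3 5, mk 0 4 8, mk 0 6 7, mk 1 3 4, mk 1 5 7, mk 1 6 8, mk 2 3 6, mk 2 4 7, mk 2 5 8, mk 3 7 8, mk 4 5 6]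

lemma c0 : ∀ B ∈ T0, B.card = 3 := by
  intro B hB; fin_cases hB <;> rfl
lemma c1 : ∀ B ∈ T1, B.card = 3 := by
  intro B hB; fin_cases hB <;> rfl
lemma c2 : ∀ B ∈ T2, B.card = 3 := by
  intro B hB; fin_cases hB <;> rfl
lemma c3 : ∀ B ∈ T3, B.card = 3 := by
  intro B hB; fin_cases hB <;> rfl
lemma c4 : ∀ B ∈ T4, B.card = 3 := by
  intro B hB; fin_cases hB <;> rfl
lemma c5 : ∀ B ∈ T5, B.card = 3 := by
  intro B hB; fin_cases hB <;> rfl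
lemma c6 : ∀ B ∈ T6, B.card = 3 := by
  intro B hB; fin_cases hB <;> rfl

lemma p0 : ∀ x y : Fin 9, x ≠ y → ((T0.filter (fun B => decide (x ∈ B ∧ y ∈ B))).length) = 1 := by decide
lemma p1 : ∀ x y : Fin 9, x ≠ y → ((T1.filter (fun B => decide (x ∈ B ∧ y ∈ B))).length) = 1 := by decide
lemma p2 : ∀ x y : Fin 9, x ≠ y → ((T2.filter (fun B => decide (x ∈ B ∧ y ∈ B))).length) = 1 := by decide
lemma p3 : ∀ x y : Fin 9, x ≠ y → ((T3.filter (fun B => decide (x ∈ B ∧ y ∈ B))).length) = 1 := by decide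
lemma p4 : ∀ x y : Fin 9, x ≠ y → ((T4.filter (fun B => decide (x ∈ B ∧ y ∈ B))).length) = 1 := by decide
lemma p5 : ∀ x y : Fin 9, x ≠ y → ((T5.filter (fun B => decide (x ∈ B ∧ y ∈ B))).length) = 1 := by decide
lemma p6 : ∀ x y : Fin 9, x ≠ y → ((T6.filter (fun B => decide (x ∈ B ∧ y ∈ B))).length) = 1 := by decide

lemma d01 : ∀ B ∈ T0, B ∉ T1 := by
  intro B hB; fin_cases hB <;> decide
lemma d02 : ∀ B ∈ T0, B ∉ T2 := by
  intro B hB; fin_cases hB <;> decide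
lemma d03 : ∀ B ∈ T0, B ∉ T3 := by
  intro B hB; fin_cases hB <;> decide
lemma d04 : ∀ B ∈ T0, B ∉ T4 := by
  intro B hB; fin_cases hB <;> decide
lemma d05 : ∀ B ∈ T0, B ∉ T5 := by
  intro B hB; fin_cases hB <;> decide
lemma d06 : ∀ B ∈ T0, B ∉ T6 := by
  intro B hB; fin_cases hB <;> decide
lemma d12 : ∀ B ∈ T1, B ∉ T2 := by
  intro B hB; fin_cases hB <;> decide
lemma d13 : ∀ B ∈ T1, B ∉ T3 := by
  intro B hB; fin_cases hB <;> decide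
lemma d14 : ∀ B ∈ T1, B ∉ T4 := by
  intro B hB; fin_cases hB <;> decide
lemma d15 : ∀ B ∈ T1, B ∉ T5 := by
  intro B hB; fin_cases hB <;> decide
lemma d16 : ∀ B ∈ T1, B ∉ T6 := by
  intro B hB; fin_cases hB <;> decide
lemma d23 : ∀ B ∈ T2, B ∉ T3 := by
  intro B hB; fin_cases hB <;> decide
lemma d24 : ∀ B ∈ T2, B ∉ T4 := by
  intro B hB; fin_cases hB <;> decide
lemma d25 : ∀ B ∈ T2, B ∉ T5 := by
  intro B hB; fin_cases hB <;> decide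
lemma d26 : ∀ B ∈ T2, B ∉ T6 := by
  intro B hB; fin_cases hB <;> decide
lemma d34 : ∀ B ∈ T3, B ∉ T4 := by
  intro B hB; fin_cases hB <;> decide
lemma d35 : ∀ B ∈ T3, B ∉ T5 := by
  intro B hB; fin_cases hB <;> decide
lemma d36 : ∀ B ∈ T3, B ∉ T6 := by
  intro B hB; fin_cases hB <;> decide
lemma d45 : ∀ B ∈ T4, B ∉ T5 := by
  intro B hB; fin_cases hB <;> decide
lemma d46 : ∀ B ∈ T4, B ∉ T6 := by
  intro B hB; fin_cases hB <;> decide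
lemma d56 : ∀ B ∈ T5, B ∉ T6 := by
  intro B hB; fin_cases hB <;> decide

def LS9 : Fin 7 → List (Finset (Fin 9))
  | 0 => T0
  | 1 => T1
  | 2 => T2
  | 3 => T3
  | 4 => T4
  | 5 => T5
  | 6 => T6

lemma LS9_card3 : ∀ i : Fin 7, ∀ B ∈ LS9 i, B.card = 3 := by
  intro i; fin_cases i
  exacts [c0, c1, c2, c3, c4, c5, c6]

lemma LS9_pairs : ∀ i : Fin 7, ∀ x y : Fin 9, x ≠ y →
    ((LS9 i).filter (fun B => decide (x ∈ B ∧ y ∈ B))).length = 1 := by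
  intro i; fin_cases i
  exacts [p0, p1, p2, p3, p4, p5, p6]

lemma LS9_disj : ∀ i j : Fin 7, i ≠ j → ∀ B ∈ LS9 i, B ∉ LS9 j := by
  intro i j hij
  fin_cases i <;> fin_cases j <;>
    first
      | exact absurd rfl hij
      | exact d01 | exact d02 | exact d03 | exact d04 | exact d05 | exact d06 | exact d12 | exact d13 | exact d14 | exact d15 | exact d16 | exact d23 | exact d24 | exact d25 | exact d26 | exact d34 | exact d35 | exact d36 | exact d45 | exact d46 | exact d56 | exact fun B h1 h2 => d01 B h2 h1 | exact fun B h1 h2 => d02 B h2 h1 | exact fun B h1 h2 => d03 B h2 h1 | exact fun B h1 h2 => d04 B h2 h1 | exact fun B h1 h2 => d05 B h2 h1 | exact fun B h1 h2 => d06 B h2 h1 | exact fun B h1 h2 => d12 B h2 h1 | exact fun B h1 h2 => d13 B h2 h1 | exact fun B h1 h2 => d14 B h2 h1 | exact fun B h1 h2 => d15 B h2 h1 | exact fun B h1 h2 => d16 B h2 h1 | exact fun B h1 h2 => d23 B h2 h1 | exact fun B h1 h2 => d24 B h2 h1 | exact fun B h1 h2 => d25 B h2 h1 | exact fun B h1 h2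 => d26 B h2 h1 | exact fun B h1 h2 => d34 B h2 h1 | exact fun B h1 h2 => d35 B h2 h1 | exact fun B h1 h2 => d36 B h2 h1 | exact fun B h1 h2 => d45 B h2 h1 | exact fun B h1 h2 => d46 B h2 h1 | exact fun B h1 h2 => d56 B h2 h1

lemma card_inter_le_two {α : Type*} [DecidableEq α] {B₁ B₂ : Finset α}
    (h1 : B₁.card = 3) (h2 : B₂.card = 3) (hne : B₁ ≠ B₂) : (B₁ ∩ B₂).card ≤ 2 := by
  by_contra h
  push_neg at h
  have e1 : B₁ ∩ B₂ = B₁ := Finset.eq_of_subset_of_card_le Finset.inter_subset_left (by omega)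
  have e2 : B₁ ∩ B₂ = B₂ := Finset.eq_of_subset_of_card_le Finset.inter_subset_right (by omega)
  exact hne (e1.symm.trans e2)

lemma LS9_orth : ∀ i j : Fin 7, i ≠ j →
    ∀ B₁ ∈ LS9 i, ∀ B₂ ∈ LS9 j, (B₁ ∩ B₂).card ≤ 2 := by
  intro i j hij B₁ h₁ B₂ h₂
  refine card_inter_le_two (LS9_card3 i B₁ h₁) (LS9_card3 j B₂ h₂) ?_
  rintro rfl
  exact LS9_disj i j hij B₁ h₁ h₂

lemma exists_unique_of_filter_length_one {α : Type*} (l : List α) (p : α → Prop)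
    [DecidablePred p] (h : (l.filter (fun a => decide (p a))).length = 1) :
    ∃! a, a ∈ l ∧ p a := by
  obtain ⟨a, ha⟩ := List.length_eq_one_iff.mp h
  have hmem : a ∈ l.filter (fun a => decide (p a)) := by
    rw [ha]; exact List.mem_singleton_self a
  rw [List.mem_filter] at hmem
  refine ⟨a, ⟨hmem.1, of_decide_eq_true hmem.2⟩, ?_⟩
  rintro b ⟨hb, hpb⟩
  have hb' : b ∈ l.filter (fun a => decide (p a)) :=
    List.mem_filter.mpr ⟨hb, decide_eq_true hpb⟩
  rw [ha, List.mem_singleton] at hb'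
  exact hb'

/-- On a 9-element point set there exists a set of seven mutually orthogoval
affine planes of order 3 (seven families of 3-element blocks, each covering every pair of
distinct points exactly once, blocks from distinct families meeting in at most two points),
and no such set of eight families exists. -/
theorem seven_mutually_orthogoval_affine_planes_order_three_max
    (P : Type*) [Fintype P] [DecidableEq P] (hP : Fintype.card P = 9) :
    (∃ L : Fin 7 → Set (Finset P),
      (∀ i : Fin 7,
        (∀ B ∈ L i, B.card = 3) ∧
        (∀ x y : P, x ≠ y → ∃! B : Finset P, B ∈ L i ∧ x ∈ B ∧ y ∈ B)) ∧
      (∀ i j : Fin 7, i ≠ j →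
        ∀ B₁ ∈ L i, ∀ B₂ ∈ L j, (B₁ ∩ B₂).card ≤ 2)) ∧
    ¬ ∃ L : Fin 8 → Set (Finset P),
      (∀ i : Fin 8,
        (∀ B ∈ L i, B.card = 3) ∧
        (∀ x y : P, x ≠ y → ∃! B : Finset P, B ∈ L i ∧ x ∈ B ∧ y ∈ B)) ∧
      (∀ i j : Fin 8, i ≠ j →
        ∀ B₁ ∈ L i, ∀ B₂ ∈ L j, (B₁ ∩ B₂).card ≤ 2) := by
  classical
  have e : P ≃ Fin 9 := Fintype.equivFinOfCardEq hP
  constructor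
  · -- existence of seven
    refine ⟨fun i => {B : Finset P | B.map e.toEmbedding ∈ LS9 i}, ?_, ?_⟩
    · intro i
      constructor
      · intro B hB
        have h3 := LS9_card3 i _ hB
        rwa [Finset.card_map] at h3
      · intro x y hxy
        have hxy' : e x ≠ e y := fun h => hxy (e.injective h)
        obtain ⟨B₀, ⟨hB₀mem, hB₀x, hB₀y⟩, huniq⟩ :=
          exists_unique_of_filter_length_one (LS9 i) (fun B => e x ∈ B ∧ e y ∈ B)
            (LS9_pairs i (e x) (e y) hxy')
        have key : (B₀.map e.symm.toEmbedding).map e.toEmbedding = B₀ := by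
          ext b
          simp [Finset.mem_map_equiv]
        refine ⟨B₀.map e.symm.toEmbedding, ⟨?_, ?_, ?_⟩, ?_⟩
        · show (B₀.map e.symm.toEmbedding).map e.toEmbedding ∈ LS9 i
          rw [key]; exact hB₀mem
        · simp only [Finset.mem_map_equiv, Equiv.symm_symm]
          exact hB₀x
        · simp only [Finset.mem_map_equiv, Equiv.symm_symm]
          exact hB₀y
        · rintro B' ⟨hB'mem, hx', hy'⟩
          have hmap : B'.map e.toEmbedding = B₀ :=
            huniq _ ⟨hB'mem, Finset.mem_map_of_mem _ hx', Finset.mem_map_of_mem _ hy'⟩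
          apply Finset.map_injective e.toEmbedding
          rw [hmap, key]
    · intro i j hij B₁ h₁ B₂ h₂
      have h := LS9_orth i j hij _ h₁ _ h₂
      rwa [← Finset.map_inter, Finset.card_map] at h
  · -- no eight
    rintro ⟨L, hL, horth⟩
    set Li : Fin 8 → Finset (Finset P) :=
      fun i => (Finset.univ.powersetCard 3).filter (· ∈ L i) with hLi
    have hmem : ∀ i B, B ∈ Li i ↔ B ∈ L i := by
      intro i B
      simp only [hLi, Finset.mem_filter, Finset.mem_powersetCard]
      exact ⟨fun h => h.2, fun h => ⟨⟨Finset.subset_univ B, (hL i).1 B h⟩, h⟩⟩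
    have hkey : ∀ i, (Finset.univ.powersetCard 2 : Finset (Finset P)) =
        (Li i).biUnion (fun B => B.powersetCard 2) := by
      intro i
      ext p
      simp only [Finset.mem_powersetCard, Finset.mem_biUnion]
      constructor
      · rintro ⟨-, hp2⟩
        obtain ⟨x, y, hxy, rfl⟩ := Finset.card_eq_two.mp hp2
        obtain ⟨B, ⟨hB, hx, hy⟩, -⟩ := (hL i).2 x y hxy
        exact ⟨B, (hmem i B).mpr hB,
          ⟨Finset.insert_subset hx (Finset.singleton_subset_iff.mpr hy), hp2⟩⟩
      · rintro ⟨B, -, hpB, hp2⟩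
        exact ⟨Finset.subset_univ p, hp2⟩
    have hdisj1 : ∀ i, ∀ B ∈ Li i, ∀ B' ∈ Li i, B ≠ B' →
        Disjoint (B.powersetCard 2) (B'.powersetCard 2) := by
      intro i B hB B' hB' hne
      rw [Finset.disjoint_left]
      intro p hp hp'
      rw [Finset.mem_powersetCard] at hp hp'
      obtain ⟨x, y, hxy, rfl⟩ := Finset.card_eq_two.mp hp.2
      obtain ⟨C, hC, huniq⟩ := (hL i).2 x y hxy
      have hxB : x ∈ B := hp.1 (Finset.mem_insert_self x {y})
      have hyB : y ∈ B := hp.1 (Finset.mem_insert_of_mem (Finset.mem_singleton_self y))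
      have hxB' : x ∈ B' := hp'.1 (Finset.mem_insert_self x {y})
      have hyB' : y ∈ B' := hp'.1 (Finset.mem_insert_of_mem (Finset.mem_singleton_self y))
      have e1 : B = C := huniq B ⟨(hmem i B).mp hB, hxB, hyB⟩
      have e2 : B' = C := huniq B' ⟨(hmem i B').mp hB', hxB', hyB'⟩
      exact hne (e1.trans e2.symm)
    have hcard12 : ∀ i, (Li i).card = 12 := by
      intro i
      have h36 : (Finset.univ.powersetCard 2 : Finset (Finset P)).card = 36 := by
        rw [Finset.card_powersetCard, Finset.card_univ, hP]
        decide
      rw [hkey i, Finset.card_biUnion (hdisj1 i)] at h36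
      have hsum : ∀ B ∈ Li i, (B.powersetCard 2).card = 3 := by
        intro B hB
        rw [Finset.card_powersetCard, (hL i).1 B ((hmem i B).mp hB)]
        decide
      rw [Finset.sum_congr rfl hsum, Finset.sum_const, smul_eq_mul] at h36
      omega
    have hdisj2 : ∀ i ∈ (Finset.univ : Finset (Fin 8)), ∀ j ∈ Finset.univ, i ≠ j →
        Disjoint (Li i) (Li j) := by
      intro i _ j _ hij
      rw [Finset.disjoint_left]
      intro B hBi hBj
      have h3 : B.card = 3 := (hL i).1 B ((hmem i B).mp hBi)
      have h := horth i j hij B ((hmem i B).mp hBi) B ((hmem j B).mp hBj)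
      rw [Finset.inter_self, h3] at h
      omega
    have hsub : (Finset.univ : Finset (Fin 8)).biUnion Li ⊆
        Finset.univ.powersetCard 3 := by
      intro B hB
      obtain ⟨i, -, hBi⟩ := Finset.mem_biUnion.mp hB
      exact (Finset.mem_filter.mp hBi).1
    have hle := Finset.card_le_card hsub
    rw [Finset.card_biUnion hdisj2,
      Finset.sum_congr rfl (fun i _ => hcard12 i), Finset.sum_const, smul_eq_mul,
      Finset.card_powersetCard] at hle
    simp only [Finset.card_univ, Fintype.card_fin, hP] at hle
    have h84 : Nat.choose 9 3 = 84 := by decide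
    rw [h84] at hle
    omega
end

section
/- Let q = 2ⁿ with n ≥ 1, let F be the finite field with q elements, and let b, c ∈ F be such that X³ + bX + c is irreducible over F. Define quadratic forms φ(x,y,z) = x² + yz and χ(x,y,z) = y² + byz + cxz on F³. Then for every (α, β) ∈ F² with (α, β) ≠ (0,0), the set C_{α,β} of points (x:y:z) of the projectivization of F³ satisfying α·φ(x,y,z) + β·χ(x,y,z) = 0 is an oval (it has exactly q+1 points and no three of them are collinear); moreover for (α:β) ≠ (α':β') the intersection C_{α,β} ∩ C_{α',β'} is exactly the single point (0:0:1). In other words, the pencil generated by φ and χ is a trivially intersecting pencil of non-singular conic ovals. -/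
open Polynomial

/-- The point `(x : y : 1)` of `PG(2,q)`; in particular `affinePoint 0 0 = (0:0:1)`. -/
noncomputable def affinePoint {F : Type*} [Field F] (x y : F) :
    Projectivization F (Fin 3 → F) :=
  Projectivization.mk F ![x, y, 1] (by
    intro hc
    have h2 : (![x, y, (1 : F)]) 2 = 0 := congrFun hc 2
    simp at h2)

section
variable {F : Type*} [Field F]

lemma aux_sq_surj [Fintype F] (h2 : (2:F) = 0) (a : F) : ∃ t : F, t*t = a := by
  have hinj : Function.Injective (fun x : F => x*x) := by
    intro x y h
    simp only at h
    have h0 : (x - y) * (x - y) = 0 := by linear_combination h + (y*y - x*y)*h2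
    exact sub_eq_zero.mp (mul_self_eq_zero.mp h0)
  exact Finite.surjective_of_injective hinj a

lemma aux_noroot {b c : F} (hirr : Irreducible (X ^ 3 + C b * X + C c : F[X])) (t : F) :
    t^3 + b*t + c ≠ 0 := by
  intro h
  have hdvd : (X - C t) ∣ (X ^ 3 + C b * X + C c : F[X]) := by
    refine dvd_iff_isRoot.mpr ?_
    simp [IsRoot, h]
  obtain ⟨q, hq⟩ := hdvd
  rcases hirr.isUnit_or_isUnit hq with hu | hu
  · exact Polynomial.not_isUnit_X_sub_C t hu
  · have hdeg : (X ^ 3 + C b * X + C c : F[X]).natDegree = 3 := by compute_degree!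
    rw [hq, natDegree_mul (X_sub_C_ne_zero t) hu.ne_zero, natDegree_X_sub_C,
      Polynomial.natDegree_eq_zero_of_isUnit hu] at hdeg
    simp at hdeg
end

section
variable {F : Type*} [Field F] [Fintype F] {b c : F}

lemma aux_key (h2 : (2:F) = 0) (hroot : ∀ t : F, t^3 + b*t + c ≠ 0)
    (α β : F) (hne : ¬(α = 0 ∧ β = 0)) :
    α*(α+β*b)^2 + β^3*c^2 ≠ 0 := by
  intro h
  by_cases hβ : β = 0
  · subst hβ
    have hα : α = 0 := by
      have : α^3 = 0 := by linear_combination h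
      exact pow_eq_zero_iff (by norm_num) |>.mp this
    exact hne ⟨hα, rfl⟩
  · obtain ⟨t, ht⟩ := aux_sq_surj h2 (α/β)
    have hα : α = t*t*β := ((eq_div_iff hβ).mp ht).symm
    subst hα
    have hz : β^3*(t^3+b*t+c)^2 = 0 := by
      linear_combination h + (β^3*c*t^3 + β^3*b*c*t)*h2
    rcases mul_eq_zero.mp hz with h' | h'
    · exact hβ (pow_eq_zero_iff (by norm_num) |>.mp h')
    · exact hroot t (pow_eq_zero_iff (by norm_num) |>.mp h')

lemma aux_dir (h2 : (2:F) = 0) (hroot : ∀ t : F, t^3 + b*t + c ≠ 0)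
    (α β : F) (hne : ¬(α = 0 ∧ β = 0)) (d0 d1 : F)
    (hk : α*d0^2 + β*d1^2 = 0) (hL : β*c*d0 + (α+β*b)*d1 = 0) :
    d0 = 0 ∧ d1 = 0 := by
  have hc : c ≠ 0 := by intro h; exact hroot 0 (by simp [h])
  by_cases hs : α + β*b = 0
  · have hβ : β ≠ 0 := by
      intro h
      exact hne ⟨by simpa [h] using hs, h⟩
    have hd0 : d0 = 0 := by
      have : β*c*d0 = 0 := by linear_combination hL - d1*hs
      rcases mul_eq_zero.mp this with h' | h'
      · exact absurd (mul_eq_zero.mp h') (by tauto)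
      · exact h'
    subst hd0
    have : β*d1^2 = 0 := by linear_combination hk
    rcases mul_eq_zero.mp this with h' | h'
    · exact absurd h' hβ
    · exact ⟨rfl, pow_eq_zero_iff (by norm_num) |>.mp h'⟩
  · have hprod : d0^2 * (α*(α+β*b)^2 + β^3*c^2) = 0 := by
      linear_combination (α+β*b)^2 * hk - β*((α+β*b)*d1 - β*c*d0)*hL
    have hd0 : d0 = 0 := by
      rcases mul_eq_zero.mp hprod with h' | h'
      · exact pow_eq_zero_iff (by norm_num) |>.mp h'
      · exact absurd h' (aux_key h2 hroot α β hne)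
    subst hd0
    have : (α+β*b)*d1 = 0 := by linear_combination hL
    rcases mul_eq_zero.mp this with h' | h'
    · exact absurd h' hs
    · exact ⟨rfl, h'⟩
end

section
variable {F : Type*} [Field F]

lemma vecne {x y z : F} (h : x ≠ 0 ∨ y ≠ 0) : ![x,y,z] ≠ 0 := by
  intro hc
  rcases h with h | h
  · exact h (by simpa using congrFun hc 0)
  · exact h (by simpa using congrFun hc 1)

lemma mk_eq_of_smul {u v : Fin 3 → F} (hu : u ≠ 0) (hv : v ≠ 0) {a b : F}
    (ha : a ≠ 0) (hb : b ≠ 0) (h : ∀ i, a * u i = b * v i) :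
    Projectivization.mk F u hu = Projectivization.mk F v hv := by
  rw [Projectivization.mk_eq_mk_iff]
  refine ⟨Units.mk0 (a⁻¹*b) (by simp [ha, hb]), ?_⟩
  funext i
  have hi := h i
  simp only [Units.smul_def, Units.val_mk0, Pi.smul_apply, smul_eq_mul]
  field_simp
  linear_combination -hi

/-- The quadratic form of the pencil. -/
def Qf (b c α β : F) (v : Fin 3 → F) : F :=
  α*(v 0^2 + v 1*v 2) + β*(v 1^2 + b*v 1*v 2 + c*v 0*v 2)

lemma Qf_smul (b c α β a : F) (v : Fin 3 → F) :
    Qf b c α β (a • v) = a^2 * Qf b c α β v := by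
  simp only [Qf, Pi.smul_apply, smul_eq_mul]
  ring

open scoped Classical

/-- Parametrization of the conic `Qf b c α β = 0` by `Option F`. -/
noncomputable def psi (b c α β : F) : Option F → Projectivization F (Fin 3 → F)
  | none =>
      if α + β*b = 0 then affinePoint 0 0
      else Projectivization.mk F ![0, 1, β/(α+β*b)] (vecne (Or.inr one_ne_zero))
  | some t =>
      if β*c + (α+β*b)*t = 0 then affinePoint 0 0
      else Projectivization.mk F ![1, t, (α+β*t^2)/(β*c+(α+β*b)*t)] (vecne (Or.inl one_ne_zero))
end

section
variable {F : Type*} [Field F] [Fintype F] {b c : F}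

lemma Qf_P0 (b c α β : F) : Qf b c α β ![0,0,1] = 0 := by
  simp [Qf]

lemma psi_spec (h2 : (2:F) = 0) (α β : F) (o : Option F) :
    ∃ (v : Fin 3 → F) (hv : v ≠ 0), psi b c α β o = Projectivization.mk F v hv ∧
      Qf b c α β v = 0 := by
  cases o with
  | none =>
    simp only [psi]
    split_ifs with hs
    · exact ⟨![0,0,1], (by intro hc; simpa using congrFun hc 2), rfl, Qf_P0 b c α β⟩
    · refine ⟨![0, 1, β/(α+β*b)], vecne (Or.inr one_ne_zero), rfl, ?_⟩
      simp only [Qf, Matrix.cons_val_zero, Matrix.cons_val_one, Matrix.head_cons,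
        Matrix.cons_val_two, Matrix.tail_cons]
      field_simp
      ring_nf
      linear_combination (α*β + b*β^2) * h2
  | some t =>
    simp only [psi]
    split_ifs with hs
    · exact ⟨![0,0,1], (by intro hc; simpa using congrFun hc 2), rfl, Qf_P0 b c α β⟩
    · refine ⟨![1, t, (α+β*t^2)/(β*c+(α+β*b)*t)], vecne (Or.inl one_ne_zero), rfl, ?_⟩
      simp only [Qf, Matrix.cons_val_zero, Matrix.cons_val_one, Matrix.head_cons,
        Matrix.cons_val_two, Matrix.tail_cons]
      field_simp [show β * c + t * (α + β * b) ≠ 0 from by rw [mul_comm t]; exact hs]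
      ring_nf
      linear_combination ((α+β*t^2)*(β*c+(α+β*b)*t)) * h2
end

section
variable {F : Type*} [Field F] {b c : F}

lemma psi_inj (hroot : ∀ t : F, t^3 + b*t + c ≠ 0) (α β : F)
    (hne : ¬(α = 0 ∧ β = 0)) : Function.Injective (psi b c α β) := by
  have hc : c ≠ 0 := fun h => hroot 0 (by simp [h])
  have hsβ : α + β*b = 0 → β ≠ 0 := fun hs hb => hne ⟨by simpa [hb] using hs, hb⟩
  have hbc : α + β*b = 0 → β*c ≠ 0 := fun hs => mul_ne_zero (hsβ hs) hc
  intro o o' h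
  cases o with
  | none => cases o' with
    | none => rfl
    | some t' =>
      exfalso
      simp only [psi] at h
      split_ifs at h with hs hst hst
      · exact hbc hs (by linear_combination hst - t'*hs)
      · unfold affinePoint at h
        rw [Projectivization.mk_eq_mk_iff] at h
        obtain ⟨a, ha⟩ := h
        have h0 := congrFun ha 0
        simp [Units.smul_def] at h0
      · unfold affinePoint at h
        rw [Projectivization.mk_eq_mk_iff] at h
        obtain ⟨a, ha⟩ := h
        have h0 := congrFun ha 1
        simp [Units.smul_def] at h0
      · rw [Projectivization.mk_eq_mk_iff] at h
        obtain ⟨a, ha⟩ := h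
        have h0 := congrFun ha 0
        simp [Units.smul_def] at h0
  | some t => cases o' with
    | none =>
      exfalso
      simp only [psi] at h
      split_ifs at h with hst hs hs
      · exact hbc hs (by linear_combination hst - t*hs)
      · unfold affinePoint at h
        rw [Projectivization.mk_eq_mk_iff] at h
        obtain ⟨a, ha⟩ := h
        have h0 := congrFun ha 1
        simp [Units.smul_def] at h0
      · unfold affinePoint at h
        rw [Projectivization.mk_eq_mk_iff] at h
        obtain ⟨a, ha⟩ := h
        have h0 := congrFun ha 0
        simp [Units.smul_def] at h0
      · rw [Projectivization.mk_eq_mk_iff] at h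
        obtain ⟨a, ha⟩ := h
        have h0 := congrFun ha 0
        simp [Units.smul_def] at h0
    | some t' =>
      simp only [psi] at h
      split_ifs at h with hst hst' hst'
      · by_cases hs : α + β*b = 0
        · exact absurd (by linear_combination hst - t*hs : β*c = 0) (hbc hs)
        · have hd : (α+β*b)*(t - t') = 0 := by linear_combination hst - hst'
          rcases mul_eq_zero.mp hd with h' | h'
          · exact absurd h' hs
          · rw [sub_eq_zero.mp h']
      · exfalso
        unfold affinePoint at h
        rw [Projectivization.mk_eq_mk_iff] at h
        obtain ⟨a, ha⟩ := h
        have h0 := congrFun ha 0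
        simp [Units.smul_def] at h0
      · exfalso
        unfold affinePoint at h
        rw [Projectivization.mk_eq_mk_iff] at h
        obtain ⟨a, ha⟩ := h
        have h0 := congrFun ha 0
        simp [Units.smul_def] at h0
      · rw [Projectivization.mk_eq_mk_iff] at h
        obtain ⟨a, ha⟩ := h
        have h0 := congrFun ha 0
        have h1 := congrFun ha 1
        simp [Units.smul_def] at h0 h1
        rw [h0] at h1
        simp at h1
        rw [h1]
end

section
variable {F : Type*} [Field F] [Fintype F] {b c : F}

lemma psi_surj (h2 : (2:F) = 0) (hroot : ∀ t : F, t^3 + b*t + c ≠ 0) (α β : F)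
    (hne : ¬(α = 0 ∧ β = 0)) (v : Fin 3 → F) (hv : v ≠ 0)
    (hQ : Qf b c α β v = 0) : ∃ o, psi b c α β o = Projectivization.mk F v hv := by
  have hc : c ≠ 0 := fun h => hroot 0 (by simp [h])
  unfold Qf at hQ
  by_cases hxy : v 0 = 0 ∧ v 1 = 0
  · obtain ⟨hx, hy⟩ := hxy
    have hz : v 2 ≠ 0 := by
      intro hz
      apply hv
      funext i
      fin_cases i <;> simp only [Pi.zero_apply] <;> assumption
    have hmk : Projectivization.mk F v hv = affinePoint 0 0 := by
      unfold affinePoint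
      rw [Projectivization.mk_eq_mk_iff]
      refine ⟨Units.mk0 (v 2) hz, ?_⟩
      funext i
      fin_cases i <;> simp [Units.smul_def, hx, hy]
    by_cases hs : α + β*b = 0
    · exact ⟨none, by simp only [psi]; rw [if_pos hs, hmk]⟩
    · refine ⟨some (β*c/(α+β*b)), ?_⟩
      simp only [psi]
      have hcond : β*c + (α+β*b)*(β*c/(α+β*b)) = 0 := by
        field_simp
        linear_combination (β*c)*h2
      rw [if_pos hcond, hmk]
  · have hlv : β*c*(v 0) + (α+β*b)*(v 1) ≠ 0 := by
      intro hl
      have hk : α*(v 0)^2 + β*(v 1)^2 = 0 := by linear_combination hQ - (v 2)*hl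
      obtain ⟨h0, h1⟩ := aux_dir h2 hroot α β hne _ _ hk hl
      exact hxy ⟨h0, h1⟩
    by_cases hx : v 0 = 0
    · have hy : v 1 ≠ 0 := fun h => hxy ⟨hx, h⟩
      have hs : α + β*b ≠ 0 := by
        intro hs
        apply hlv
        rw [hx, hs]
        ring
      have heq : β*(v 1) + (α+β*b)*(v 2) = 0 := by
        have h' : v 1 * (β*(v 1) + (α+β*b)*(v 2)) = 0 := by
          linear_combination hQ - (α*(v 0) + β*c*(v 2))*hx
        exact (mul_eq_zero.mp h').resolve_left hy
      refine ⟨none, ?_⟩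
      simp only [psi]
      rw [if_neg hs]
      refine mk_eq_of_smul _ hv hy one_ne_zero ?_
      intro i
      fin_cases i
      · simp [hx]
      · simp
      · show v 1 * (β/(α+β*b)) = 1 * v 2
        field_simp
        linear_combination heq - ((α+β*b)*(v 2))*h2
    · have hcond : β*c + (α+β*b)*(v 1/v 0) ≠ 0 := by
        intro h'
        apply hlv
        field_simp at h'
        linear_combination h'
      refine ⟨some (v 1/v 0), ?_⟩
      simp only [psi]
      rw [if_neg hcond]
      refine mk_eq_of_smul _ hv hx one_ne_zero ?_
      intro i
      fin_cases i
      · simp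
      · show v 0 * (v 1/v 0) = 1 * v 1
        field_simp
      · show v 0 * ((α+β*(v 1/v 0)^2)/(β*c+(α+β*b)*(v 1/v 0))) = 1 * v 2
        field_simp [show v 0 * β * c + v 1 * (α + β * b) ≠ 0 from fun h => hlv (by linear_combination h)]
        linear_combination hQ - (α*v 1*v 2 + β*b*v 1*v 2 + v 0*β*c*v 2)*h2
end

section
variable {F : Type*} [Field F] [Fintype F] {b c : F}

lemma no_three_collinear (h2 : (2:F) = 0) (hroot : ∀ t : F, t^3 + b*t + c ≠ 0)
    (α β : F) (hne : ¬(α = 0 ∧ β = 0)) (u w : Fin 3 → F) (hu : u ≠ 0) (hw : w ≠ 0)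
    (hQu : Qf b c α β u = 0) (hQw : Qf b c α β w = 0) (a e : F) (ha : a ≠ 0) (he : e ≠ 0)
    (hQ3 : Qf b c α β (a • u + e • w) = 0) :
    Projectivization.mk F u hu = Projectivization.mk F w hw := by
  simp only [Qf, Pi.add_apply, Pi.smul_apply, smul_eq_mul] at hQu hQw hQ3
  have hB : β*c*(u 0*w 2 + u 2*w 0) + (α+β*b)*(u 1*w 2 + u 2*w 1) = 0 := by
    have h' : a*e*(β*c*(u 0*w 2 + u 2*w 0) + (α+β*b)*(u 1*w 2 + u 2*w 1)) = 0 := by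
      linear_combination hQ3 - a^2*hQu - e^2*hQw - (a*e*(α*u 0*w 0 + β*u 1*w 1))*h2
    exact ((mul_eq_zero.mp h').resolve_left (mul_ne_zero ha he))
  by_cases hz : u 2 = 0 ∧ w 2 = 0
  · obtain ⟨hz1, hz2⟩ := hz
    obtain ⟨sa, hsa⟩ := aux_sq_surj h2 α
    obtain ⟨sb, hsb⟩ := aux_sq_surj h2 β
    have hu' : sa*u 0 + sb*u 1 = 0 := by
      have hsq : (sa*u 0 + sb*u 1)*(sa*u 0 + sb*u 1) = 0 := by
        linear_combination hQu - ((α*u 1 + β*b*u 1 + β*c*u 0))*hz1 + (u 0^2)*hsa + (u 1^2)*hsb + (sa*sb*u 0*u 1)*h2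
      exact mul_self_eq_zero.mp hsq
    have hw' : sa*w 0 + sb*w 1 = 0 := by
      have hsq : (sa*w 0 + sb*w 1)*(sa*w 0 + sb*w 1) = 0 := by
        linear_combination hQw - ((α*w 1 + β*b*w 1 + β*c*w 0))*hz2 + (w 0^2)*hsa + (w 1^2)*hsb + (sa*sb*w 0*w 1)*h2
      exact mul_self_eq_zero.mp hsq
    have hsab : ¬(sa = 0 ∧ sb = 0) := by
      rintro ⟨h1, h1'⟩
      exact hne ⟨by rw [← hsa, h1]; ring, by rw [← hsb, h1']; ring⟩
    have hcross : u 0*w 1 - u 1*w 0 = 0 := by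
      rcases not_and_or.mp hsab with h' | h'
      · have hm : sa*(u 0*w 1 - u 1*w 0) = 0 := by
          linear_combination (w 1)*hu' - (u 1)*hw'
        exact (mul_eq_zero.mp hm).resolve_left h'
      · have hm : sb*(u 0*w 1 - u 1*w 0) = 0 := by
          linear_combination (u 0)*hw' - (w 0)*hu'
        exact (mul_eq_zero.mp hm).resolve_left h'
    by_cases h0 : u 0 = 0
    · have h1 : u 1 ≠ 0 := by
        intro h1
        apply hu
        funext i
        fin_cases i <;> simp only [Pi.zero_apply] <;> assumption
      have hw0 : w 0 = 0 := by
        have hm : u 1 * w 0 = 0 := by linear_combination -hcross + (w 1)*h0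
        exact (mul_eq_zero.mp hm).resolve_left h1
      have hw1 : w 1 ≠ 0 := by
        intro h1'
        apply hw
        funext i
        fin_cases i <;> simp only [Pi.zero_apply] <;> assumption
      refine mk_eq_of_smul hu hw hw1 h1 ?_
      intro i
      fin_cases i
      · show w 1 * u 0 = u 1 * w 0
        rw [h0, hw0]; ring
      · show w 1 * u 1 = u 1 * w 1
        ring
      · show w 1 * u 2 = u 1 * w 2
        rw [hz1, hz2]; ring
    · have hw0 : w 0 ≠ 0 := by
        intro hw0
        have hm : u 0 * w 1 = 0 := by linear_combination hcross + (u 1)*hw0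
        have hw1 : w 1 = 0 := (mul_eq_zero.mp hm).resolve_left h0
        apply hw
        funext i
        fin_cases i <;> simp only [Pi.zero_apply] <;> assumption
      refine mk_eq_of_smul hu hw hw0 h0 ?_
      intro i
      fin_cases i
      · show w 0 * u 0 = u 0 * w 0
        ring
      · show w 0 * u 1 = u 0 * w 1
        linear_combination -hcross
      · show w 0 * u 2 = u 0 * w 2
        rw [hz1, hz2]; ring
  · have hk : α*(w 2*u 0 + u 2*w 0)^2 + β*(w 2*u 1 + u 2*w 1)^2 = 0 := by
      linear_combination (w 2^2)*hQu + (u 2^2)*hQw - (u 2*w 2)*hB + (u 2*w 2*(α*u 0*w 0 + β*u 1*w 1))*h2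
    have hl : β*c*(w 2*u 0 + u 2*w 0) + (α+β*b)*(w 2*u 1 + u 2*w 1) = 0 := by
      linear_combination hB
    obtain ⟨hW0, hW1⟩ := aux_dir h2 hroot α β hne _ _ hk hl
    have hcomp : ∀ i, w 2 * u i = u 2 * w i := by
      intro i
      fin_cases i
      · show w 2 * u 0 = u 2 * w 0
        linear_combination hW0 - (u 2*w 0)*h2
      · show w 2 * u 1 = u 2 * w 1
        linear_combination hW1 - (u 2*w 1)*h2
      · show w 2 * u 2 = u 2 * w 2
        ring
    have hu2 : u 2 ≠ 0 := by
      intro h'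
      have hw2 : w 2 ≠ 0 := fun h'' => hz ⟨h', h''⟩
      apply hu
      funext i
      have := hcomp i
      rw [h'] at this
      simp only [Pi.zero_apply]
      rcases mul_eq_zero.mp (by linear_combination this : w 2 * u i = 0) with h'' | h''
      · exact absurd h'' hw2
      · exact h''
    have hw2 : w 2 ≠ 0 := by
      intro h'
      apply hw
      funext i
      have := hcomp i
      rw [h'] at this
      simp only [Pi.zero_apply]
      rcases mul_eq_zero.mp (by linear_combination -this : u 2 * w i = 0) with h'' | h''
      · exact absurd h'' hu2
      · exact h''
    exact mk_eq_of_smul hu hw hw2 hu2 hcomp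
end


/-- Let `F` have `2ⁿ` elements and let `X³ + bX + c` be irreducible over `F`.
With `φ(x,y,z) = x² + yz` and `χ(x,y,z) = y² + byz + cxz`, every member
`C_{α,β} = {(x:y:z) : αφ + βχ = 0}` (for `(α,β) ≠ (0,0)`) of the pencil generated by `φ` and
`χ` is an oval of `PG(2,q)` (it has `q+1` points, no three collinear), and projectively
distinct members of the pencil meet exactly in the single point `(0:0:1)`. -/
theorem pencil_of_trivially_intersecting_conic_ovals
    (n : ℕ) (hn : 1 ≤ n) (F : Type*) [Field F] [Fintype F]
    (hF : Fintype.card F = 2 ^ n) (b c : F)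
    (hirr : Irreducible (X ^ 3 + C b * X + C c : F[X]))
    (φ χ : (Fin 3 → F) → F)
    (hφ : φ = fun v => v 0 ^ 2 + v 1 * v 2)
    (hχ : χ = fun v => v 1 ^ 2 + b * v 1 * v 2 + c * v 0 * v 2)
    (Con : F → F → Set (Projectivization F (Fin 3 → F)))
    (hCon : ∀ α β : F, Con α β = {p | α * φ p.rep + β * χ p.rep = 0}) :
    (∀ α β : F, (α, β) ≠ (0, 0) →
      (Con α β).ncard = Fintype.card F + 1 ∧
      (∀ p₁ ∈ Con α β, ∀ p₂ ∈ Con α β, ∀ p₃ ∈ Con α β,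
        p₁ ≠ p₂ → p₁ ≠ p₃ → p₂ ≠ p₃ →
        ¬ ∃ W : Submodule F (Fin 3 → F), Module.finrank F W = 2 ∧
          p₁.submodule ≤ W ∧ p₂.submodule ≤ W ∧ p₃.submodule ≤ W)) ∧
    (∀ α β α' β' : F, (α, β) ≠ (0, 0) → (α', β') ≠ (0, 0) → α * β' ≠ α' * β →
      Con α β ∩ Con α' β' = {affinePoint (0 : F) 0}) := by
  have h2 : (2:F) = 0 := by
    have hcard : ((Fintype.card F : ℕ) : F) = 0 := FiniteField.cast_card_eq_zero F
    rw [hF] at hcard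
    push_cast at hcard
    exact pow_eq_zero_iff (by omega) |>.mp hcard
  have hroot : ∀ t : F, t^3 + b*t + c ≠ 0 := aux_noroot hirr
  -- membership in terms of the quadratic form
  have memrep : ∀ (α β : F) (p : Projectivization F (Fin 3 → F)),
      p ∈ Con α β ↔ Qf b c α β p.rep = 0 := by
    intro α β p
    rw [hCon, hφ, hχ]
    exact Iff.rfl
  have memQ : ∀ (α β : F) (v : Fin 3 → F) (hv : v ≠ 0),
      (Projectivization.mk F v hv ∈ Con α β ↔ Qf b c α β v = 0) := by
    intro α β v hv
    rw [memrep]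
    obtain ⟨a, ha⟩ := (Projectivization.mk_eq_mk_iff F _ _
      (Projectivization.rep_nonzero _) hv).mp
      (Projectivization.mk_rep (Projectivization.mk F v hv))
    rw [← ha, Units.smul_def, Qf_smul]
    constructor
    · intro h'
      rcases mul_eq_zero.mp h' with h'' | h''
      · exact absurd (pow_eq_zero_iff (by norm_num) |>.mp h'') a.ne_zero
      · exact h''
    · intro h'
      rw [h', mul_zero]
  constructor
  · intro α β hαβ
    have hne : ¬(α = 0 ∧ β = 0) := by
      rintro ⟨h1, h1'⟩
      exact hαβ (by rw [h1, h1'])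
    constructor
    · -- cardinality
      have hrange : Con α β = Set.range (psi b c α β) := by
        ext p
        constructor
        · intro hp
          obtain ⟨o, ho⟩ := psi_surj h2 hroot α β hne p.rep (Projectivization.rep_nonzero p)
            ((memrep α β p).mp hp)
          exact ⟨o, by rw [ho, Projectivization.mk_rep]⟩
        · rintro ⟨o, rfl⟩
          obtain ⟨v, hv, hpsi, hq⟩ := psi_spec h2 α β o
          rw [hpsi]
          exact (memQ α β v hv).mpr hq
      rw [hrange, ← Set.image_univ, Set.ncard_image_of_injective _ (psi_inj hroot α β hne),
        Set.ncard_univ, Nat.card_eq_fintype_card, Fintype.card_option]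
    · rintro p₁ hp₁ p₂ hp₂ p₃ hp₃ h12 h13 h23 ⟨W, hWrk, hle₁, hle₂, hle₃⟩
      have hrep : ∀ p : Projectivization F (Fin 3 → F), p.submodule ≤ W → p.rep ∈ W := by
        intro p hle
        apply hle
        rw [Projectivization.submodule_eq]
        exact Submodule.mem_span_singleton_self _
      have hmkeq : ∀ (p q : Projectivization F (Fin 3 → F)) (a e : F), a ≠ 0 → e ≠ 0 →
          (∀ i, a * p.rep i = e * q.rep i) → p = q := by
        intro p q a e ha he hcomp
        rw [← Projectivization.mk_rep p, ← Projectivization.mk_rep q]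
        exact mk_eq_of_smul _ _ ha he hcomp
      have hind : LinearIndependent F ![p₁.rep, p₂.rep] := by
        rw [linearIndependent_fin2]
        constructor
        · simpa using p₂.rep_nonzero
        · intro a hcontra
          simp only [Matrix.cons_val_one, Matrix.head_cons, Matrix.cons_val_zero] at hcontra
          have ha : a ≠ 0 := by
            intro h0
            rw [h0, zero_smul] at hcontra
            exact p₁.rep_nonzero hcontra.symm
          exact h12 ((hmkeq p₁ p₂ 1 a one_ne_zero ha (fun i => by
            rw [← hcontra]; simp)).symm ▸ rfl)
      have hspan : Submodule.span F {p₁.rep, p₂.rep} = W := by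
        have hle : Submodule.span F ({p₁.rep, p₂.rep} : Set (Fin 3 → F)) ≤ W := by
          rw [Submodule.span_le, Set.insert_subset_iff, Set.singleton_subset_iff]
          exact ⟨hrep _ hle₁, hrep _ hle₂⟩
        have hset : ({p₁.rep, p₂.rep} : Set (Fin 3 → F)) = Set.range ![p₁.rep, p₂.rep] := by
          simp only [Matrix.range_cons, Matrix.range_empty, Set.union_empty,
            Set.union_singleton]
          exact Set.pair_comm _ _
        have hfr : Module.finrank F (Submodule.span F ({p₁.rep, p₂.rep} : Set (Fin 3 → F))) = 2 := by
          rw [hset, finrank_span_eq_card hind]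
          simp
        exact Submodule.eq_of_le_of_finrank_le hle (by rw [hWrk, ← hfr])
      have hv3 : p₃.rep ∈ Submodule.span F ({p₁.rep, p₂.rep} : Set (Fin 3 → F)) := by
        rw [hspan]
        exact hrep _ hle₃
      obtain ⟨a, e, hae⟩ := Submodule.mem_span_pair.mp hv3
      have ha : a ≠ 0 := by
        intro h0
        rw [h0, zero_smul, zero_add] at hae
        have he : e ≠ 0 := by
          intro h0'
          rw [h0', zero_smul] at hae
          exact p₃.rep_nonzero hae.symm
        exact h23 (hmkeq p₂ p₃ e 1 he one_ne_zero (fun i => by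
          rw [← hae]; simp))
      have he : e ≠ 0 := by
        intro h0
        rw [h0, zero_smul, add_zero] at hae
        exact h13 (hmkeq p₁ p₃ a 1 ha one_ne_zero (fun i => by
          rw [← hae]; simp))
      have hQ3 : Qf b c α β (a • p₁.rep + e • p₂.rep) = 0 := by
        rw [hae]
        exact (memrep α β p₃).mp hp₃
      exact h12 ((Projectivization.mk_rep p₁) ▸ (Projectivization.mk_rep p₂) ▸
        no_three_collinear h2 hroot α β hne p₁.rep p₂.rep p₁.rep_nonzero p₂.rep_nonzero
          ((memrep α β p₁).mp hp₁) ((memrep α β p₂).mp hp₂) a e ha he hQ3)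
  · intro α β α' β' hαβ hαβ' hdet
    have hP0 : ∀ γ δ : F, affinePoint (0:F) 0 ∈ Con γ δ := by
      intro γ δ
      unfold affinePoint
      exact (memQ γ δ _ _).mpr (by simp [Qf])
    refine Set.eq_singleton_iff_unique_mem.mpr ⟨⟨hP0 α β, hP0 α' β'⟩, ?_⟩
    rintro p ⟨hp1, hp2⟩
    have hq1 : Qf b c α β p.rep = 0 := (memrep α β p).mp hp1
    have hq2 : Qf b c α' β' p.rep = 0 := (memrep α' β' p).mp hp2
    unfold Qf at hq1 hq2
    have hd : α*β' - α'*β ≠ 0 := sub_ne_zero.mpr hdet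
    have hA : p.rep 0^2 + p.rep 1 * p.rep 2 = 0 := by
      have h' : (α*β' - α'*β) * (p.rep 0^2 + p.rep 1 * p.rep 2) = 0 := by
        linear_combination β'*hq1 - β*hq2
      exact (mul_eq_zero.mp h').resolve_left hd
    have hB : p.rep 1^2 + b*(p.rep 1)*(p.rep 2) + c*(p.rep 0)*(p.rep 2) = 0 := by
      have h' : (α*β' - α'*β) * (p.rep 1^2 + b*(p.rep 1)*(p.rep 2) + c*(p.rep 0)*(p.rep 2)) = 0 := by
        linear_combination α*hq2 - α'*hq1
      exact (mul_eq_zero.mp h').resolve_left hd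
    have hz : p.rep 2 ≠ 0 := by
      intro hz
      apply p.rep_nonzero
      have h0 : p.rep 0 = 0 := by
        have : p.rep 0^2 = 0 := by linear_combination hA - (p.rep 1)*hz
        exact pow_eq_zero_iff (by norm_num) |>.mp this
      have h1 : p.rep 1 = 0 := by
        have : p.rep 1^2 = 0 := by linear_combination hB - (b*(p.rep 1) + c*(p.rep 0))*hz
        exact pow_eq_zero_iff (by norm_num) |>.mp this
      funext i
      fin_cases i <;> simp only [Pi.zero_apply] <;> assumption
    have hkey : p.rep 0 * ((p.rep 0)^3 + b*(p.rep 0)*(p.rep 2)^2 + c*(p.rep 2)^3) = 0 := by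
      linear_combination (p.rep 2^2)*hB + (p.rep 0^2 - p.rep 1*p.rep 2 + b*(p.rep 2)^2)*hA
        - (b*(p.rep 1)*(p.rep 2)^3)*h2
    have h0 : p.rep 0 = 0 := by
      by_contra h0
      have hcub : (p.rep 0)^3 + b*(p.rep 0)*(p.rep 2)^2 + c*(p.rep 2)^3 = 0 :=
        (mul_eq_zero.mp hkey).resolve_left h0
      apply hroot (p.rep 0 / p.rep 2)
      field_simp
      linear_combination hcub
    have h1 : p.rep 1 = 0 := by
      have h' : p.rep 1 * p.rep 2 = 0 := by linear_combination hA - (p.rep 0)*h0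
      exact (mul_eq_zero.mp h').resolve_right hz
    rw [← Projectivization.mk_rep p]
    unfold affinePoint
    rw [Projectivization.mk_eq_mk_iff]
    refine ⟨Units.mk0 (p.rep 2) hz, ?_⟩
    funext i
    fin_cases i <;> simp [Units.smul_def, h0, h1]
end

section
/- Let q = 2ⁿ with n ≥ 1, let F be the finite field with q elements, and let b, c ∈ F be such that X³ + bX + c is irreducible over F. Define g : F² → F² by g(x,y) = (x² + y, y² + by + cx). Then g is a bijection, and for every two affine lines ℓ and m of F², the set ℓ ∩ g(m) has at most two elements. Consequently the sets g⁻¹(ℓ), for ℓ an affine line, form the line set of a Desarguesian affine plane of order q orthogoval to the standard affine plane AG(2,q) whose lines are the affine lines of F². -/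
open Polynomial

/-- An affine line of `F²`: a set `{p + t • v : t ∈ F}` with `v ≠ 0`.  These are the lines of
the Desarguesian affine plane `AG(2,|F|)`. -/
def IsAffineLine {F : Type*} [Field F] (ℓ : Set (F × F)) : Prop :=
  ∃ p v : F × F, v ≠ 0 ∧ ℓ = {w | ∃ t : F, w = p + t • v}

/-- Membership in an affine line expressed as a linear equation. -/
lemma mem_affineLine_iff {F : Type*} [Field F] (p v w : F × F) (hv : v ≠ 0) :
    (∃ t : F, w = p + t • v) ↔ v.2 * (w.1 - p.1) = v.1 * (w.2 - p.2) := by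
  constructor
  · rintro ⟨t, rfl⟩
    simp only [Prod.fst_add, Prod.snd_add, Prod.smul_fst, Prod.smul_snd, smul_eq_mul]
    ring
  · intro h
    have hv' : v.1 ≠ 0 ∨ v.2 ≠ 0 := by
      by_contra hcon
      push_neg at hcon
      exact hv (Prod.ext hcon.1 hcon.2)
    rcases hv' with h1 | h2
    · refine ⟨(w.1 - p.1) / v.1, Prod.ext ?_ ?_⟩ <;>
        simp only [Prod.fst_add, Prod.snd_add, Prod.smul_fst, Prod.smul_snd, smul_eq_mul] <;>
        field_simp <;> [ring; linear_combination -h]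
    · refine ⟨(w.2 - p.2) / v.2, Prod.ext ?_ ?_⟩ <;>
        simp only [Prod.fst_add, Prod.snd_add, Prod.smul_fst, Prod.smul_snd, smul_eq_mul] <;>
        field_simp <;> [linear_combination h; ring]

/-- A quadratic equation with not all of its two top coefficients zero has at most two
solutions. -/
lemma quad_solutions_encard_le_two {F : Type*} [Field F] (A2 A1 A0 : F)
    (h : A2 ≠ 0 ∨ A1 ≠ 0) :
    {s : F | A2 * s ^ 2 + A1 * s + A0 = 0}.encard ≤ 2 := by
  classical
  set P : F[X] := C A2 * X ^ 2 + C A1 * X + C A0 with hPdef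
  have hc2 : P.coeff 2 = A2 := by simp [hPdef, coeff_add, coeff_C_mul, coeff_X_pow, coeff_C]
  have hc1 : P.coeff 1 = A1 := by simp [hPdef, coeff_add, coeff_C_mul, coeff_X_pow, coeff_C]
  have hP : P ≠ 0 := by
    intro h0
    rcases h with h | h
    · exact h (by rw [← hc2, h0, coeff_zero])
    · exact h (by rw [← hc1, h0, coeff_zero])
  have hdeg : P.natDegree ≤ 2 := by rw [hPdef]; compute_degree
  have hsub : {s : F | A2 * s ^ 2 + A1 * s + A0 = 0} ⊆ (P.roots.toFinset : Set F) := by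
    intro s hs
    simp only [Set.mem_setOf_eq] at hs
    simp only [Finset.mem_coe, Multiset.mem_toFinset, mem_roots hP]
    simp [IsRoot, hPdef, hs]
  calc {s : F | A2 * s ^ 2 + A1 * s + A0 = 0}.encard
      ≤ (P.roots.toFinset : Set F).encard := Set.encard_mono hsub
    _ = (P.roots.toFinset.card : ℕ∞) := Set.encard_coe_eq_coe_finsetCard _
    _ ≤ 2 := by
        have h1 : P.roots.toFinset.card ≤ Multiset.card P.roots := Multiset.toFinset_card_le _
        have h2 := P.card_roots'
        exact_mod_cast le_trans h1 (le_trans h2 hdeg)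

/-- An irreducible cubic has no roots. -/
lemma cubic_no_root {F : Type*} [Field F] (b c : F)
    (hirr : Irreducible (X ^ 3 + C b * X + C c : F[X])) (u : F) :
    u ^ 3 + b * u + c ≠ 0 := by
  intro hu0
  have hroot : IsRoot (X ^ 3 + C b * X + C c : F[X]) u := by
    simp [IsRoot, hu0]
  obtain ⟨k, hk⟩ := dvd_iff_isRoot.mpr hroot
  rcases hirr.isUnit_or_isUnit hk with h | h
  · exact Polynomial.not_isUnit_X_sub_C u h
  · have hk0 : k ≠ 0 := by
      rintro rfl
      rw [mul_zero] at hk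
      exact hirr.ne_zero hk
    have hkd : k.natDegree = 0 := natDegree_eq_zero_of_isUnit h
    have hdeg : (X ^ 3 + C b * X + C c : F[X]).natDegree = 3 := by compute_degree!
    have := congrArg natDegree hk
    rw [hdeg, natDegree_mul (X_sub_C_ne_zero u) hk0, natDegree_X_sub_C, hkd] at this
    simp at this

/-- Let `F` have `q = 2ⁿ` elements and let `X³ + bX + c` be irreducible over `F`.
Then `g(x,y) = (x² + y, y² + by + cx)` is a bijection of `F²` and the image of every affine
line under `g` meets every affine line in at most two points; hence the preimages `g⁻¹(ℓ)` of
the affine lines form a Desarguesian affine plane of order `q` orthogoval to `AG(2,q)`. -/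
theorem conic_pencil_map_bijective_and_orthogoval
    (n : ℕ) (hn : 1 ≤ n) (F : Type*) [Field F] [Fintype F]
    (hF : Fintype.card F = 2 ^ n) (b c : F)
    (hirr : Irreducible (X ^ 3 + C b * X + C c : F[X]))
    (g : F × F → F × F)
    (hg : g = fun w => (w.1 ^ 2 + w.2, w.2 ^ 2 + b * w.2 + c * w.1)) :
    Function.Bijective g ∧
    ∀ ℓ m : Set (F × F), IsAffineLine ℓ → IsAffineLine m →
      (ℓ ∩ g '' m).encard ≤ 2 := by
  have h2 : (2 : F) = 0 := by
    have hc := FiniteField.cast_card_eq_zero F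
    rw [hF] at hc
    push_cast at hc
    exact pow_eq_zero_iff (by omega) |>.mp hc
  have hroot : ∀ u : F, u ^ 3 + b * u + c ≠ 0 := cubic_no_root b c hirr
  have hinj : Function.Injective g := by
    intro a₁ a₂ hEq
    rw [hg] at hEq
    simp only [Prod.mk.injEq] at hEq
    obtain ⟨e1, e2⟩ := hEq
    set u := a₁.1 - a₂.1 with hu
    have hkey : u * (u ^ 3 + b * u + c) = 0 := by
      rw [hu]
      linear_combination (a₁.2 + a₂.2 + b + a₁.1^2 + a₂.1^2) * e1 + e2 +
        (-(a₁.1 * a₂.1 * b) - a₁.1 * a₂.1 ^ 3 * 2 + a₁.1 ^ 2 * a₂.1 ^ 2 * 3 - a₁.1 ^ 2 * a₁.2 -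
          a₁.1 ^ 3 * a₂.1 * 2 + a₂.1 ^ 2 * b + a₂.1 ^ 2 * a₂.2 + a₂.1 ^ 4 - b * a₁.2 + b * a₂.2 -
          a₁.2 ^ 2 + a₂.2 ^ 2) * h2
    have hu0 : u = 0 := by
      rcases mul_eq_zero.mp hkey with h | h
      · exact h
      · exact absurd h (hroot u)
    have h1 : a₁.1 = a₂.1 := by rw [hu] at hu0; exact sub_eq_zero.mp hu0
    refine Prod.ext h1 ?_
    linear_combination e1 - (a₁.1 + a₂.1) * (sub_eq_zero.mpr h1)
  refine ⟨Finite.injective_iff_bijective.mp hinj, ?_⟩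
  rintro ℓ m ⟨p, v, hv, rfl⟩ ⟨q, r, hr, rfl⟩
  -- the quadratic whose roots are the parameters of intersection points
  set A2 : F := v.2 * r.1 ^ 2 - v.1 * r.2 ^ 2 with hA2def
  set A1 : F := v.2 * (2 * q.1 * r.1 + r.2) - v.1 * (2 * q.2 * r.2 + b * r.2 + c * r.1)
    with hA1def
  set A0 : F := v.2 * (q.1 ^ 2 + q.2 - p.1) - v.1 * (q.2 ^ 2 + b * q.2 + c * q.1 - p.2)
    with hA0def
  have hident : ∀ s : F,
      v.2 * ((g (q + s • r)).1 - p.1) - v.1 * ((g (q + s • r)).2 - p.2)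
        = A2 * s ^ 2 + A1 * s + A0 := by
    intro s
    rw [hg]
    simp only [Prod.fst_add, Prod.snd_add, Prod.smul_fst, Prod.smul_snd, smul_eq_mul,
      hA2def, hA1def, hA0def]
    ring
  -- the top coefficients are not both zero
  have hA : A2 ≠ 0 ∨ A1 ≠ 0 := by
    by_contra hcon
    push_neg at hcon
    obtain ⟨hA2, hA1⟩ := hcon
    rw [hA2def] at hA2
    rw [hA1def] at hA1
    have hr' : r.1 ≠ 0 ∨ r.2 ≠ 0 := by
      by_contra hcon
      push_neg at hcon
      exact hr (Prod.ext hcon.1 hcon.2)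
    by_cases hr1 : r.1 = 0
    · have hr2 : r.2 ≠ 0 := by tauto
      have hv1 : v.1 = 0 := by
        have : v.1 * r.2 ^ 2 = 0 := by linear_combination -hA2 + v.2 * r.1 * hr1
        rcases mul_eq_zero.mp this with h | h
        · exact h
        · exact absurd (pow_eq_zero_iff (by norm_num) |>.mp h) hr2
      have hv2 : v.2 = 0 := by
        have : v.2 * r.2 = 0 := by
          linear_combination hA1 + (2 * q.2 * r.2 + b * r.2 + c * r.1) * hv1 -
            2 * q.1 * v.2 * hr1
        rcases mul_eq_zero.mp this with h | h
        · exact h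
        · exact absurd h hr2
      exact hv (Prod.ext hv1 hv2)
    · have hv1 : v.1 ≠ 0 := by
        intro hv1
        rw [hv1] at hA2
        have : v.2 * r.1 ^ 2 = 0 := by linear_combination hA2
        rcases mul_eq_zero.mp this with h | h
        · exact hv (Prod.ext hv1 h)
        · exact hr1 (pow_eq_zero_iff (by norm_num) |>.mp h)
      have hkey : v.1 * (r.2 ^ 3 + b * r.2 * r.1 ^ 2 + c * r.1 ^ 3) = 0 := by
        linear_combination r.1 ^ 2 * hA1 - r.2 * hA2 +
          (v.1 * b * r.2 * r.1 ^ 2 + v.1 * c * r.1 ^ 3 - v.2 * q.1 * r.1 ^ 3 +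
            v.1 * q.2 * r.2 * r.1 ^ 2) * h2
      have hkey2 : r.2 ^ 3 + b * r.2 * r.1 ^ 2 + c * r.1 ^ 3 = 0 := by
        rcases mul_eq_zero.mp hkey with h | h
        · exact absurd h hv1
        · exact h
      have : (r.2 / r.1) ^ 3 + b * (r.2 / r.1) + c = 0 := by
        field_simp
        linear_combination hkey2
      exact hroot (r.2 / r.1) this
  -- reduce to counting roots of the quadratic
  have hsub : {w | ∃ t : F, w = p + t • v} ∩ g '' {w | ∃ t : F, w = q + t • r}
      ⊆ (fun s : F => g (q + s • r)) '' {s : F | A2 * s ^ 2 + A1 * s + A0 = 0} := by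
    rintro w ⟨hwl, x, ⟨s, rfl⟩, rfl⟩
    refine ⟨s, ?_, rfl⟩
    have := (mem_affineLine_iff p v (g (q + s • r)) hv).mp hwl
    simp only [Set.mem_setOf_eq]
    rw [← hident s]
    linear_combination this
  calc ({w | ∃ t : F, w = p + t • v} ∩ g '' {w | ∃ t : F, w = q + t • r}).encard
      ≤ ((fun s : F => g (q + s • r)) '' {s : F | A2 * s ^ 2 + A1 * s + A0 = 0}).encard :=
        Set.encard_mono hsub
    _ ≤ {s : F | A2 * s ^ 2 + A1 * s + A0 = 0}.encard := Set.encard_image_le _ _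
    _ ≤ 2 := quad_solutions_encard_le_two A2 A1 A0 hA
end

section
/- For every n ≥ 1 and q = 2ⁿ, there exists a pair of Desarguesian orthogoval affine planes of order q. Precisely: letting F be the finite field with q elements, there exists a bijection f : F² → F² such that for every two affine lines ℓ and m of F², the image f(ℓ) intersects m in at most two points; hence the sets f(ℓ), for ℓ an affine line, form the line set of an affine plane of order q orthogoval to the standard affine plane AG(2,q). -/
/-- Over any finite field there is a cubic with no roots. -/
lemma exists_noroot_cubic (F : Type*) [Field F] [Fintype F] :
    ∃ a b c : F, ∀ x : F, x ^ 3 + a * x ^ 2 + b * x + c ≠ 0 := by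
  classical
  set φ : F × F × F → F × F × F :=
    fun r => (r.2.1 - r.1, r.2.2 - r.1 * r.2.1, -(r.1 * r.2.2)) with hφ
  have hninj : ¬ Function.Injective φ := by
    intro h
    have h1 : φ (1, 0, 0) = (-1, 0, 0) := by simp [hφ]
    have h2 : φ (0, -1, 0) = (-1, 0, 0) := by simp [hφ]
    have := h (h1.trans h2.symm)
    have : (1 : F) = 0 := congrArg Prod.fst this
    exact one_ne_zero this
  have hnsurj : ¬ Function.Surjective φ := fun h =>
    hninj (Finite.injective_iff_surjective.mpr h)
  rw [Function.Surjective] at hnsurj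
  push_neg at hnsurj
  obtain ⟨⟨a, b, c⟩, habc⟩ := hnsurj
  refine ⟨a, b, c, fun x hx => ?_⟩
  apply habc (x, a + x, b + x * (a + x))
  simp only [hφ, Prod.mk.injEq]
  refine ⟨by ring, by ring, ?_⟩
  linear_combination -hx

/-- A nontrivial quadratic has at most two roots. -/
lemma quad_roots_encard {F : Type*} [Field F] (A B C : F) (h : A ≠ 0 ∨ B ≠ 0) :
    {t : F | A * t ^ 2 + B * t + C = 0}.encard ≤ 2 := by
  classical
  set S : Set F := {t : F | A * t ^ 2 + B * t + C = 0} with hS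
  by_cases hsub : S.Subsingleton
  · exact le_trans (Set.encard_le_one_iff.mpr fun a b ha hb => hsub ha hb) one_le_two
  · obtain ⟨x, hx, y, hy, hxy⟩ := Set.not_subsingleton_iff.mp hsub
    have hx' : A * x ^ 2 + B * x + C = 0 := hx
    have hy' : A * y ^ 2 + B * y + C = 0 := hy
    have hpair : A * (x + y) + B = 0 := by
      have hfac : (x - y) * (A * (x + y) + B) = 0 := by linear_combination hx' - hy'
      rcases mul_eq_zero.mp hfac with h0 | h0
      · exact absurd (sub_eq_zero.mp h0) hxy
      · exact h0
    have hA : A ≠ 0 := by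
      intro hA0
      have hB0 : B = 0 := by linear_combination hpair - (x + y) * hA0
      rcases h with h | h
      · exact h hA0
      · exact h hB0
    have hsubset : S ⊆ {x, y} := by
      intro z hz
      have hz' : A * z ^ 2 + B * z + C = 0 := hz
      by_contra hzn
      simp only [Set.mem_insert_iff, Set.mem_singleton_iff, not_or] at hzn
      obtain ⟨hzx, hzy⟩ := hzn
      have hpair2 : A * (x + z) + B = 0 := by
        have hfac : (x - z) * (A * (x + z) + B) = 0 := by linear_combination hx' - hz'
        rcases mul_eq_zero.mp hfac with h0 | h0
        · exact absurd (sub_eq_zero.mp h0).symm hzx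
        · exact h0
      have hpair3 : A * (y + z) + B = 0 := by
        have hfac : (y - z) * (A * (y + z) + B) = 0 := by linear_combination hy' - hz'
        rcases mul_eq_zero.mp hfac with h0 | h0
        · exact absurd (sub_eq_zero.mp h0).symm hzy
        · exact h0
      have : x = y := by
        have h0 : A * (x - y) = 0 := by linear_combination hpair2 - hpair3
        have := (mul_eq_zero.mp h0).resolve_left hA
        exact sub_eq_zero.mp this
      exact hxy this
    calc S.encard ≤ ({x, y} : Set F).encard := Set.encard_mono hsubset
      _ = 2 := Set.encard_pair hxy

/-- For every `n ≥ 1` and `q = 2ⁿ` there is a pair of Desarguesian orthogoval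
affine planes of order `q`: letting `F` be the field with `q` elements, there is a bijection
`f : F² → F²` such that the image of every affine line under `f` meets every affine line in
at most two points. -/
theorem exists_orthogoval_pair_of_affine_planes
    (n : ℕ) (hn : 1 ≤ n) (F : Type*) [Field F] [Fintype F]
    (hF : Fintype.card F = 2 ^ n) :
    ∃ f : F × F → F × F, Function.Bijective f ∧
      ∀ ℓ m : Set (F × F), IsAffineLine ℓ → IsAffineLine m →
        (f '' ℓ ∩ m).encard ≤ 2 := by
  classical
  -- characteristic two
  have htwo : (2 : F) = 0 := by
    have hcard : ((Fintype.card F : ℕ) : F) = 0 := FiniteField.cast_card_eq_zero F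
    rw [hF] at hcard
    push_cast at hcard
    exact pow_eq_zero_iff (by omega) |>.mp hcard
  obtain ⟨a, b, c, hcube⟩ := exists_noroot_cubic F
  have hc0 : c ≠ 0 := by
    have := hcube 0
    intro h
    apply this
    rw [h]; ring
  set f : F × F → F × F :=
    fun w => (w.1 ^ 2 + b * w.1 + c * w.2, w.2 ^ 2 + w.1 + a * w.2) with hf
  refine ⟨f, ?_, ?_⟩
  · -- bijectivity
    rw [← Finite.injective_iff_bijective]
    rintro ⟨x₁, y₁⟩ ⟨x₂, y₂⟩ hxy
    simp only [hf, Prod.mk.injEq] at hxy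
    obtain ⟨h1, h2⟩ := hxy
    set u := x₁ - x₂ with hu
    set w := y₁ - y₂ with hw
    have e1 : u ^ 2 + b * u + c * w = 0 := by
      linear_combination h1 + (x₂ ^ 2 - x₁ * x₂) * htwo
    have e2 : w ^ 2 + u + a * w = 0 := by
      linear_combination h2 + (y₂ ^ 2 - y₁ * y₂) * htwo
    have e3 : w * ((w + a) ^ 3 + a * (w + a) ^ 2 + b * (w + a) + c) = 0 := by
      linear_combination e1 + (-u + w ^ 2 + a * w - b) * e2 +
        (a * w ^ 3 + 2 * a ^ 2 * w ^ 2 + a ^ 3 * w + b * w ^ 2 + a * b * w) * htwo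
    have hw0 : w = 0 := by
      rcases mul_eq_zero.mp e3 with h0 | h0
      · exact h0
      · exact absurd h0 (hcube (w + a))
    have hu0 : u = 0 := by
      rw [hw0] at e2
      linear_combination e2
    have : y₁ = y₂ := sub_eq_zero.mp hw0
    have : x₁ = x₂ := sub_eq_zero.mp hu0
    simp_all
  · -- intersection bound
    rintro ℓ m ⟨p, v, hv, rfl⟩ ⟨p', v', hv', rfl⟩
    set α := v'.2 with hα
    set β := v'.1 with hβ
    set γ := v'.2 * p'.1 + v'.1 * p'.2 with hγ
    set A := α * v.1 ^ 2 + β * v.2 ^ 2 with hA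
    set B := α * (b * v.1 + c * v.2) + β * (v.1 + a * v.2) with hB
    set C := α * (p.1 ^ 2 + b * p.1 + c * p.2) + β * (p.2 ^ 2 + p.1 + a * p.2) - γ with hC
    -- the intersection is contained in the image of the quadratic's root set
    have hsubset : f '' {w | ∃ t : F, w = p + t • v} ∩ {w | ∃ t : F, w = p' + t • v'} ⊆
        (fun t : F => f (p + t • v)) '' {t : F | A * t ^ 2 + B * t + C = 0} := by
      rintro z ⟨⟨z₀, ⟨t, rfl⟩, rfl⟩, ⟨s, hs⟩⟩
      refine ⟨t, ?_, rfl⟩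
      have hs1 : (f (p + t • v)).1 = p'.1 + s * v'.1 := by rw [hs]; rfl
      have hs2 : (f (p + t • v)).2 = p'.2 + s * v'.2 := by rw [hs]; rfl
      simp only [hf, Prod.fst_add, Prod.snd_add, Prod.smul_fst, Prod.smul_snd,
        smul_eq_mul] at hs1 hs2
      show A * t ^ 2 + B * t + C = 0
      rw [hA, hB, hC, hα, hβ, hγ]
      linear_combination v'.2 * hs1 + v'.1 * hs2 -
        (t * p.1 * v.1 * v'.2 + t * p.2 * v.2 * v'.1 - s * v'.1 * v'.2) * htwo
    -- nondegeneracy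
    have hAB : A ≠ 0 ∨ B ≠ 0 := by
      by_contra hcon
      push_neg at hcon
      obtain ⟨hA0, hB0⟩ := hcon
      have hv1 : ¬(v.1 = 0 ∧ v.2 = 0) := by
        intro ⟨h1, h2⟩; exact hv (Prod.ext h1 h2)
      by_cases hα0 : α = 0
      · have hβ0 : β ≠ 0 := by
          intro h
          exact hv' (Prod.ext (hβ ▸ h) (hα ▸ hα0))
        have hv2 : v.2 = 0 := by
          have : β * v.2 ^ 2 = 0 := by linear_combination hA0 - v.1 ^ 2 * hα0
          have := (mul_eq_zero.mp this).resolve_left hβ0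
          exact pow_eq_zero_iff (by norm_num) |>.mp this
        have hv1' : v.1 = 0 := by
          have : β * (v.1 + a * v.2) = 0 := by
            linear_combination hB0 - (b * v.1 + c * v.2) * hα0
          have h' := (mul_eq_zero.mp this).resolve_left hβ0
          rw [hv2] at h'
          linear_combination h'
        exact hv1 ⟨hv1', hv2⟩
      · have hdet : v.1 ^ 3 + a * v.1 ^ 2 * v.2 + b * v.1 * v.2 ^ 2 + c * v.2 ^ 3 = 0 := by
          apply mul_left_cancel₀ hα0
          rw [mul_zero]
          linear_combination (v.1 + a * v.2) * hA0 + v.2 ^ 2 * hB0 -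
            (β * v.2 ^ 2 * (v.1 + a * v.2)) * htwo
        by_cases hv2 : v.2 = 0
        · have : v.1 = 0 := by
            have : v.1 ^ 3 = 0 := by rw [hv2] at hdet; linear_combination hdet
            exact pow_eq_zero_iff (by norm_num) |>.mp this
          exact hv1 ⟨this, hv2⟩
        · apply hcube (v.1 / v.2)
          field_simp
          linear_combination hdet
    calc (f '' {w | ∃ t : F, w = p + t • v} ∩ {w | ∃ t : F, w = p' + t • v'}).encard
        ≤ ((fun t : F => f (p + t • v)) '' {t : F | A * t ^ 2 + B * t + C = 0}).encard :=
          Set.encard_mono hsubset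
      _ ≤ ({t : F | A * t ^ 2 + B * t + C = 0}).encard := Set.encard_image_le _ _
      _ ≤ 2 := quad_roots_encard A B C hAB
end

section
/- Let n, k ≥ 1 with gcd(k, n) = 1, let F be the finite field with 2ⁿ elements, and let a, b ∈ F with (a, b) ≠ (0, 0). Then the set {x ∈ F : a·x^(2^k) + b·x = 0} has at most two elements. -/
lemma aux_dvd_one (k n d : ℕ) (hgcd : Nat.gcd k n = 1)
    (h1 : d ∣ 2 ^ k - 1) (h2 : d ∣ 2 ^ n - 1) (hn : 1 ≤ n) : d = 1 := by
  have hd0 : d ≠ 0 := by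
    rintro rfl
    have : 2 ^ n - 1 = 0 := Nat.eq_zero_of_zero_dvd h2
    have h2n : 2 ≤ 2 ^ n := by
      calc 2 = 2 ^ 1 := (pow_one 2).symm
      _ ≤ 2 ^ n := Nat.pow_le_pow_right (by norm_num) hn
    omega
  haveI : NeZero d := ⟨hd0⟩
  have hk1 : 1 ≤ 2 ^ k := Nat.one_le_two_pow
  have hn1 : 1 ≤ 2 ^ n := Nat.one_le_two_pow
  have c1 : ((2 : ZMod d)) ^ k = 1 := by
    have := (ZMod.natCast_eq_zero_iff _ d).mpr h1
    push_cast [Nat.cast_sub hk1] at this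
    linear_combination this
  have c2 : ((2 : ZMod d)) ^ n = 1 := by
    have := (ZMod.natCast_eq_zero_iff _ d).mpr h2
    push_cast [Nat.cast_sub hn1] at this
    linear_combination this
  have o1 : orderOf (2 : ZMod d) ∣ k := orderOf_dvd_of_pow_eq_one c1
  have o2 : orderOf (2 : ZMod d) ∣ n := orderOf_dvd_of_pow_eq_one c2
  have hdvd : orderOf (2 : ZMod d) ∣ 1 := by have := Nat.dvd_gcd o1 o2; rwa [hgcd] at this
  have h21 : (2 : ZMod d) = 1 := orderOf_eq_one_iff.mp (Nat.dvd_one.mp hdvd)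
  have h10 : ((1 : ℕ) : ZMod d) = 0 := by
    have : (1 : ZMod d) = 0 := by linear_combination h21
    simpa using this
  exact Nat.dvd_one.mp ((ZMod.natCast_eq_zero_iff 1 d).mp h10)

/-- If `gcd(k, n) = 1` (with `n, k ≥ 1`), `F` is the field with `2ⁿ` elements,
and `(a, b) ≠ (0, 0)`, then `a·x^(2^k) + b·x = 0` has at most two roots in `F`. -/
theorem roots_of_a_frobenius_plus_b_le_two
    (n k : ℕ) (hn : 1 ≤ n) (hk : 1 ≤ k) (hgcd : Nat.gcd k n = 1)
    (F : Type*) [Field F] [Fintype F] (hF : Fintype.card F = 2 ^ n)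
    (a b : F) (hab : (a, b) ≠ (0, 0)) :
    {x : F | a * x ^ 2 ^ k + b * x = 0}.encard ≤ 2 := by
  by_cases ha : a = 0
  · have hb : b ≠ 0 := by
      intro hb; exact hab (by simp [ha, hb])
    have hsub : {x : F | a * x ^ 2 ^ k + b * x = 0} ⊆ {0} := by
      intro x hx
      simp only [Set.mem_setOf_eq, ha, zero_mul, zero_add] at hx
      have : x = 0 := by
        rcases mul_eq_zero.mp hx with h | h
        · exact absurd h hb
        · exact h
      simp [this]
    calc {x : F | a * x ^ 2 ^ k + b * x = 0}.encard
        ≤ ({0} : Set F).encard := Set.encard_le_encard hsub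
      _ = 1 := Set.encard_singleton 0
      _ ≤ 2 := by norm_num
  · by_cases hex : ∃ t : F, t ≠ 0 ∧ a * t ^ 2 ^ k + b * t = 0
    · obtain ⟨t, ht0, ht⟩ := hex
      have key : ∀ x : F, x ≠ 0 → a * x ^ 2 ^ k + b * x = 0 → x = t := by
        intro x hx0 hx
        set z : F := x * t⁻¹ with hz
        have hz0 : z ≠ 0 := mul_ne_zero hx0 (inv_ne_zero ht0)
        have hcross : x ^ 2 ^ k * t = t ^ 2 ^ k * x := by
          have e1 : a * x ^ 2 ^ k = -(b * x) := by linear_combination hx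
          have e2 : a * t ^ 2 ^ k = -(b * t) := by linear_combination ht
          have : a * (x ^ 2 ^ k * t) = a * (t ^ 2 ^ k * x) := by ring_nf; linear_combination t * e1 - x * e2
          exact mul_left_cancel₀ ha this
        have hzz : z ^ 2 ^ k = z := by
          rw [hz, mul_pow, inv_pow, ← div_eq_mul_inv, ← div_eq_mul_inv,
            div_eq_div_iff (pow_ne_zero _ ht0) ht0]
          linear_combination hcross
        have hz1 : z ^ (2 ^ k - 1) = 1 := by
          have : z ^ (2 ^ k - 1) * z = 1 * z := by
            rw [one_mul, ← pow_succ]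
            have : 2 ^ k - 1 + 1 = 2 ^ k := Nat.succ_pred_eq_of_pos (Nat.two_pow_pos k)
            rw [this, hzz]
          exact mul_right_cancel₀ hz0 this
        have hz2 : z ^ (2 ^ n - 1) = 1 := by
          have := FiniteField.pow_card_sub_one_eq_one z hz0
          rwa [hF] at this
        have d1 : orderOf z ∣ 2 ^ k - 1 := orderOf_dvd_of_pow_eq_one hz1
        have d2 : orderOf z ∣ 2 ^ n - 1 := orderOf_dvd_of_pow_eq_one hz2
        have : orderOf z = 1 := aux_dvd_one k n _ hgcd d1 d2 hn
        have hz1' : z = 1 := orderOf_eq_one_iff.mp this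
        have : x * t⁻¹ = 1 := hz1'
        field_simp at this
        exact this
      have hsub : {x : F | a * x ^ 2 ^ k + b * x = 0} ⊆ {0, t} := by
        intro x hx
        simp only [Set.mem_setOf_eq] at hx
        by_cases hx0 : x = 0
        · exact Or.inl hx0
        · exact Or.inr (key x hx0 hx)
      calc {x : F | a * x ^ 2 ^ k + b * x = 0}.encard
          ≤ ({0, t} : Set F).encard := Set.encard_le_encard hsub
        _ ≤ 2 := by
            apply le_trans (Set.encard_insert_le _ _)
            rw [Set.encard_singleton]
            norm_num
    · push_neg at hex
      have hsub : {x : F | a * x ^ 2 ^ k + b * x = 0} ⊆ {0} := by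
        intro x hx
        simp only [Set.mem_setOf_eq] at hx
        by_contra hx0
        simp only [Set.mem_singleton_iff] at hx0
        exact hex x hx0 hx
      calc {x : F | a * x ^ 2 ^ k + b * x = 0}.encard
          ≤ ({0} : Set F).encard := Set.encard_le_encard hsub
        _ = 1 := Set.encard_singleton 0
        _ ≤ 2 := by norm_num
end

section
/- Let n, k ≥ 1 with gcd(3k, n) = 1 and let F be the finite field with 2ⁿ elements. Then the polynomial x^(2^k + 1) + x + 1 has no roots in F; that is, for every x ∈ F, x^(2^k + 1) + x + 1 ≠ 0. -/
/-- If `gcd(3k, n) = 1` (with `n, k ≥ 1`) and `F` is the field with `2ⁿ`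
elements, then `x^(2^k + 1) + x + 1` has no roots in `F`. -/
theorem no_root_pow_two_pow_succ_add_self_add_one
    (n k : ℕ) (hn : 1 ≤ n) (hk : 1 ≤ k) (hgcd : Nat.gcd (3 * k) n = 1)
    (F : Type*) [Field F] [Fintype F] (hF : Fintype.card F = 2 ^ n) :
    ∀ x : F, x ^ (2 ^ k + 1) + x + 1 ≠ 0 := by
  intro x h
  -- characteristic 2
  have hc2 : (2 : F) = 0 := by
    have h0 : ((2 ^ n : ℕ) : F) = 0 := by rw [← hF]; exact Nat.cast_card_eq_zero F
    push_cast at h0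
    exact pow_eq_zero_iff (by omega) |>.mp h0
  have hrc : ringChar F = 2 := by
    have hd : ringChar F ∣ 2 := ringChar.dvd (by exact_mod_cast hc2)
    have h1 : ringChar F ≠ 1 := CharP.ringChar_ne_one
    have h2 := (Nat.prime_two).eq_one_or_self_of_dvd _ hd
    omega
  haveI hcp : CharP F 2 := ringChar.of_eq hrc
  haveI hec : ExpChar F 2 := ExpChar.prime Nat.prime_two
  -- x ≠ 0
  have hx0 : x ≠ 0 := by
    rintro rfl
    simp [zero_pow] at h
  have hb0 : x ^ 2 ^ k ≠ 0 := pow_ne_zero _ hx0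
  -- the basic relation
  have h1 : x ^ 2 ^ k * x = x + 1 := by
    linear_combination h + (-x - 1) * hc2
  -- apply Frobenius twice
  have h2' : (x ^ 2 ^ k) ^ 2 ^ k * x ^ 2 ^ k = x ^ 2 ^ k + 1 := by
    have := congrArg (· ^ 2 ^ k) h1
    simpa [mul_pow, add_pow_char_pow, one_pow] using this
  have h3' : ((x ^ 2 ^ k) ^ 2 ^ k) ^ 2 ^ k * (x ^ 2 ^ k) ^ 2 ^ k
      = (x ^ 2 ^ k) ^ 2 ^ k + 1 := by
    have := congrArg (· ^ 2 ^ k) h2'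
    simpa [mul_pow, add_pow_char_pow, one_pow] using this
  have key : (x ^ 2 ^ k) ^ 2 ^ k * x ^ 2 ^ k * x = 1 := by
    linear_combination x * h2' + h1 + x * hc2
  have hd : ((x ^ 2 ^ k) ^ 2 ^ k) ^ 2 ^ k = x := by
    linear_combination (x ^ 2 ^ k * x) * h3' + key + h1 + hc2
      - ((x ^ 2 ^ k) ^ 2 ^ k) ^ 2 ^ k * key
  -- so x ^ (2 ^ (3k)) = x
  have hcycle : x ^ (2 : ℕ) ^ (3 * k) = x := by
    have e : (2 : ℕ) ^ (3 * k) = 2 ^ k * 2 ^ k * 2 ^ k := by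
      rw [← pow_add, ← pow_add]
      ring_nf
    rw [e, pow_mul, pow_mul]
    exact hd
  have iter : ∀ m : ℕ, x ^ (2 : ℕ) ^ (3 * k * m) = x := by
    intro m
    induction m with
    | zero => simp
    | succ m ih =>
      have e : 3 * k * (m + 1) = 3 * k * m + 3 * k := by ring
      rw [e, pow_add, pow_mul, ih, hcycle]
  have hcard : ∀ v : ℕ, x ^ (2 : ℕ) ^ (n * v) = x := by
    intro v
    have := FiniteField.pow_card_pow v x
    rwa [hF, ← pow_mul] at this
  -- deduce x ^ 2 = x
  have hx2 : x ^ 2 = x := by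
    rcases eq_or_lt_of_le hn with h1n | h1n
    · have := FiniteField.pow_card x
      rwa [hF, ← h1n, pow_one] at this
    · obtain ⟨m, -, hm⟩ := Nat.exists_mul_mod_eq_one_of_coprime hgcd h1n
      have hdm := Nat.div_add_mod (3 * k * m) n
      rw [hm] at hdm
      have e : 3 * k * m = n * (3 * k * m / n) + 1 := by omega
      calc x ^ 2 = (x ^ (2 : ℕ) ^ (n * (3 * k * m / n))) ^ 2 := by rw [hcard]
        _ = x ^ (2 : ℕ) ^ (3 * k * m) := by rw [← pow_mul, ← pow_succ, ← e]
        _ = x := iter m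
  -- hence x = 0 or x = 1, both impossible
  have : x * (x - 1) = 0 := by linear_combination hx2
  rcases mul_eq_zero.mp this with h0 | h0
  · exact hx0 h0
  · have hx1 : x = 1 := by linear_combination h0
    rw [hx1] at h
    simp only [one_pow] at h
    have : (1 : F) = 0 := by linear_combination h - hc2
    exact one_ne_zero this
end

section
/- Let n, k ≥ 1 with gcd(3k, n) = 1 and let F be the finite field with 2ⁿ elements. Then the polynomial x^(2^(2k) − 1) + x^(2^k − 1) + 1 has no roots in F; that is, for every x ∈ F, x^(2^(2k) − 1) + x^(2^k − 1) + 1 ≠ 0. -/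
lemma pow_pow_iter {F : Type*} [Monoid F] (x : F) (m : ℕ) (h : x ^ (2 ^ m) = x) :
    ∀ a : ℕ, x ^ (2 ^ (m * a)) = x := by
  intro a
  induction a with
  | zero => simp
  | succ a ih =>
    have : 2 ^ (m * (a + 1)) = 2 ^ (m * a) * 2 ^ m := by ring
    rw [this, pow_mul, ih, h]

/-- If `gcd(3k, n) = 1` (with `n, k ≥ 1`) and `F` is the field with `2ⁿ`
elements, then `x^(2^(2k) − 1) + x^(2^k − 1) + 1` has no roots in `F`. -/
theorem no_root_pow_sub_one_sum
    (n k : ℕ) (hn : 1 ≤ n) (hk : 1 ≤ k) (hgcd : Nat.gcd (3 * k) n = 1)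
    (F : Type*) [Field F] [Fintype F] (hF : Fintype.card F = 2 ^ n) :
    ∀ x : F, x ^ (2 ^ (2 * k) - 1) + x ^ (2 ^ k - 1) + 1 ≠ 0 := by
  -- characteristic 2
  haveI hchar : CharP F 2 := by
    have hc : CharP F (ringChar F) := ringChar.charP F
    obtain ⟨m, hp, hcard⟩ := FiniteField.card F (ringChar F)
    rw [hF] at hcard
    have hdvd : ringChar F ∣ 2 ^ n := hcard ▸ dvd_pow_self (ringChar F) m.ne_zero
    have h2 : ringChar F = 2 :=
      (Nat.prime_dvd_prime_iff_eq hp Nat.prime_two).mp (hp.dvd_of_dvd_pow hdvd)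
    rwa [h2] at hc
  haveI : Fact (Nat.Prime 2) := ⟨Nat.prime_two⟩
  intro x h
  have h2k : 2 ≤ 2 ^ k := by
    calc 2 = 2 ^ 1 := rfl
    _ ≤ 2 ^ k := Nat.pow_le_pow_right (by norm_num) hk
  have h2k2 : 2 ≤ 2 ^ (2 * k) := by
    calc 2 = 2 ^ 1 := rfl
    _ ≤ 2 ^ (2 * k) := Nat.pow_le_pow_right (by norm_num) (by omega)
  by_cases hx : x = 0
  · subst hx
    rw [zero_pow (by omega), zero_pow (by omega)] at h
    simp at h
  -- multiply through by x
  have key : x ^ (2 ^ (2 * k)) + x ^ (2 ^ k) + x = 0 := by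
    have := congrArg (· * x) h
    simp only [add_mul, one_mul, zero_mul] at this
    rwa [← pow_succ, ← pow_succ, Nat.sub_add_cancel (by omega), Nat.sub_add_cancel (by omega)]
      at this
  have h1 : x ^ (2 ^ (2 * k)) = x ^ (2 ^ k) + x := by
    have := CharTwo.add_self_eq_zero (x ^ (2 ^ k) + x)
    linear_combination key - this
  -- x^{2^{3k}} = x
  have h3k : x ^ (2 ^ (3 * k)) = x := by
    have e1 : x ^ (2 ^ (3 * k)) = (x ^ (2 ^ (2 * k))) ^ (2 ^ k) := by
      rw [← pow_mul, ← pow_add]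
      ring_nf
    have e2 : (x ^ (2 ^ k)) ^ (2 ^ k) = x ^ (2 ^ (2 * k)) := by
      rw [← pow_mul, ← pow_add]
      ring_nf
    rw [e1, h1, add_pow_char_pow (x ^ (2 ^ k)) x 2 k, e2, h1]
    have := CharTwo.add_self_eq_zero (x ^ (2 ^ k))
    linear_combination this
  -- x^{2^n} = x
  have hcn : x ^ (2 ^ n) = x := by
    have := FiniteField.pow_card x
    rwa [hF] at this
  -- Bezout: ∃ a b, 3k * a = n * b + 1
  obtain ⟨a, b, hab⟩ : ∃ a b : ℕ, 3 * k * a = n * b + 1 := by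
    rcases eq_or_lt_of_le hn with rfl | h1
    · exact ⟨1, 3 * k - 1, by omega⟩
    · obtain ⟨m, -, hm⟩ := Nat.exists_mul_mod_eq_one_of_coprime hgcd h1
      refine ⟨m, 3 * k * m / n, ?_⟩
      have := Nat.div_add_mod (3 * k * m) n
      omega
  have hx2 : x ^ 2 = x := by
    have hA : x ^ (2 ^ (3 * k * a)) = x := pow_pow_iter x (3 * k) h3k a
    have hB : x ^ (2 ^ (n * b)) = x := pow_pow_iter x n hcn b
    calc x ^ 2 = (x ^ (2 ^ (n * b))) ^ 2 := by rw [hB]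
    _ = x ^ (2 ^ (n * b + 1)) := by rw [← pow_mul, pow_succ]
    _ = x := by rw [← hab, hA]
  have hx1 : x = 1 := by
    have hm : x * (x - 1) = 0 := by
      have : x ^ 2 - x = 0 := by rw [hx2]; ring
      linear_combination this
    rcases mul_eq_zero.mp hm with h' | h'
    · exact absurd h' hx
    · exact sub_eq_zero.mp h'
  subst hx1
  simp only [one_pow] at h
  rw [CharTwo.add_self_eq_zero (1 : F), zero_add] at h
  exact one_ne_zero h
end

section
/- Let n, k ≥ 1 with gcd(3k, n) = 1, let F be the finite field with 2ⁿ elements, and define φ_k : F² → F² by φ_k(x, y) = (x^(2^k) + y, y^(2^k) + x + y). Then φ_k is a bijection. -/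
/-- If `gcd(3k, n) = 1` (with `n, k ≥ 1`) and `F` is the field with `2ⁿ`
elements, then `φ_k(x, y) = (x^(2^k) + y, y^(2^k) + x + y)` is a bijection of `F²`. -/
theorem phi_k_bijective
    (n k : ℕ) (hn : 1 ≤ n) (hk : 1 ≤ k) (hgcd : Nat.gcd (3 * k) n = 1)
    (F : Type*) [Field F] [Fintype F] (hF : Fintype.card F = 2 ^ n) :
    Function.Bijective
      (fun w : F × F => (w.1 ^ 2 ^ k + w.2, w.2 ^ 2 ^ k + w.1 + w.2)) := by
  haveI hchar : CharP F 2 := by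
    have hp : (ringChar F).Prime := CharP.char_is_prime F _
    obtain ⟨m, hpm, hcard⟩ := FiniteField.card F (ringChar F)
    have hdvd : ringChar F ∣ 2 ^ n := by
      rw [← hF, hcard]; exact dvd_pow_self _ (by exact_mod_cast m.pos.ne')
    have h2 : ringChar F = 2 :=
      (Nat.prime_dvd_prime_iff_eq hp Nat.prime_two).mp (hp.dvd_of_dvd_pow hdvd)
    rw [← h2]; exact ringChar.charP F
  -- iteration lemma
  have iter : ∀ (a : F) (m : ℕ), a ^ 2 ^ m = a → ∀ u : ℕ, a ^ 2 ^ (m * u) = a := by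
    intro a m hm u
    induction u with
    | zero => simp
    | succ u ih =>
      have : m * (u + 1) = m * u + m := by ring
      rw [this, pow_add, pow_mul, ih, hm]
  -- Bezout: ∃ u v, 3k*u = n*v + 1
  obtain ⟨u, v, huv⟩ : ∃ u v : ℕ, 3 * k * u = n * v + 1 := by
    rcases eq_or_lt_of_le hn with h1 | h1
    · subst h1; exact ⟨1, 3 * k - 1, by omega⟩
    · obtain ⟨u, -, hu⟩ := Nat.exists_mul_mod_eq_one_of_coprime hgcd h1
      refine ⟨u, 3 * k * u / n, ?_⟩
      have := Nat.div_add_mod (3 * k * u) n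
      omega
  -- key: if a ^ 2 ^ (3k) = a then a = 0 or a = 1
  have key : ∀ a : F, a ^ 2 ^ (3 * k) = a → a = 0 ∨ a = 1 := by
    intro a ha
    have hn' : a ^ 2 ^ n = a := by rw [← hF]; exact FiniteField.pow_card a
    have h1 : a ^ 2 ^ (3 * k * u) = a := iter a (3 * k) ha u
    have h2 : a ^ 2 ^ (3 * k * u) = a ^ 2 := by
      rw [huv, pow_add, pow_one, pow_mul, iter a n hn' v]
    have hsq : a ^ 2 = a := by rw [← h2, h1]
    have : a * (a - 1) = 0 := by linear_combination hsq
    rcases mul_eq_zero.mp this with h | h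
    · exact Or.inl h
    · exact Or.inr (sub_eq_zero.mp h)
  rw [Finite.injective_iff_bijective.symm]
  intro ⟨x₁, y₁⟩ ⟨x₂, y₂⟩ hxy
  simp only [Prod.mk.injEq] at hxy
  obtain ⟨e1, e2⟩ := hxy
  set q := 2 ^ k with hq
  set a := x₁ + x₂ with hadef
  set b := y₁ + y₂ with hbdef
  have h2' : (2 : F) = 0 := by exact_mod_cast CharP.cast_eq_zero F 2
  haveI : Fact (Nat.Prime 2) := ⟨Nat.prime_two⟩
  have frob : ∀ s t : F, (s + t) ^ q = s ^ q + t ^ q := fun s t => by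
    rw [hq]; exact add_pow_char_pow s t 2 k
  have ha : a ^ q = b := by
    rw [hadef, frob, hbdef]
    linear_combination e1 + (x₂ ^ q - y₁) * h2'
  have hb : b ^ q = a + b := by
    rw [hbdef, frob, hadef]
    linear_combination e2 + (y₂ ^ q - x₁ - y₁) * h2'
  have hcube : a ^ 2 ^ (3 * k) = a := by
    have e3 : 2 ^ (3 * k) = q * q * q := by
      rw [hq, ← pow_add, ← pow_add]; ring_nf
    rw [e3, pow_mul, pow_mul, ha, hb, frob, ha, hb]
    linear_combination b * h2'
  rcases key a hcube with h | h
  · have hb0 : b = 0 := by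
      rw [← ha, h, zero_pow (by positivity)]
    have hx : x₁ = x₂ := by
      have : x₁ - x₂ = 0 := by linear_combination h - x₂ * h2'
      exact sub_eq_zero.mp this
    have hy : y₁ = y₂ := by
      have : y₁ - y₂ = 0 := by linear_combination hb0 - y₂ * h2'
      exact sub_eq_zero.mp this
    simp_all
  · exfalso
    have hb1 : b = 1 := by rw [← ha, h, one_pow]
    rw [h, hb1, one_pow] at hb
    exact one_ne_zero (by linear_combination hb + h2' : (1:F) = 0)
end

section
/- Let n, k ≥ 1 with gcd(3k, n) = 1, let F be the finite field with 2ⁿ elements, and define φ_k : F² → F² by φ_k(x, y) = (x^(2^k) + y, y^(2^k) + x + y). Then φ_k is affine ovalinear: it is an F₂-linear (i.e., additive) bijection of F², and for every two affine lines ℓ and m of F², the set φ_k(ℓ) ∩ m has at most two elements (so φ_k maps every affine line to an oval of the standard affine plane). -/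
lemma pow3k {F : Type*} [Field F] (k : ℕ) (x : F) :
    ((x ^ 2 ^ k) ^ 2 ^ k) ^ 2 ^ k = x ^ 2 ^ (3 * k) := by
  rw [← pow_mul, ← pow_mul, ← pow_add, ← pow_add]
  congr 2
  omega



lemma aux_pow_eq_self {F : Type*} [Field F] [Fintype F] {n : ℕ} (hF : Fintype.card F = 2 ^ n)
    {a : ℕ} (ha : Nat.gcd a n = 1) {x : F} (hx : x ^ 2 ^ a = x) : x = 0 ∨ x = 1 := by
  have key : x ^ 2 = x → x = 0 ∨ x = 1 := by
    intro h
    have h0 : x * (x - 1) = 0 := by ring_nf; linear_combination h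
    rcases mul_eq_zero.mp h0 with h1 | h1
    · exact Or.inl h1
    · exact Or.inr (by linear_combination h1)
  have hcard : ∀ y : F, y ^ 2 ^ n = y := fun y => by
    rw [← hF]; exact FiniteField.pow_card y
  have stepn : ∀ m, x ^ 2 ^ (m + n) = x ^ 2 ^ m := fun m => by
    rw [pow_add, pow_mul, hcard]
  have stepa : ∀ m, x ^ 2 ^ (m + a) = x ^ 2 ^ m := fun m => by
    rw [add_comm, pow_add, pow_mul, hx]
  have itern : ∀ s m, x ^ 2 ^ (m + s * n) = x ^ 2 ^ m := by
    intro s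
    induction s with
    | zero => simp
    | succ s ih => intro m; rw [Nat.succ_mul, ← Nat.add_assoc, stepn, ih]
  have itera : ∀ s m, x ^ 2 ^ (m + s * a) = x ^ 2 ^ m := by
    intro s
    induction s with
    | zero => simp
    | succ s ih => intro m; rw [Nat.succ_mul, ← Nat.add_assoc, stepa, ih]
  rcases Nat.lt_or_ge n 2 with hn2 | hn2
  · interval_cases n
    · exfalso
      have := Fintype.one_lt_card (α := F)
      omega
    · exact key (by simpa using hcard x)
  · have hco : Nat.Coprime a n := ha
    obtain ⟨m, -, hm⟩ := Nat.exists_mul_mod_eq_one_of_coprime hco hn2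
    have hdm : a * m = n * (a * m / n) + 1 := by
      have := Nat.div_add_mod (a * m) n
      omega
    apply key
    calc x ^ 2 = x ^ 2 ^ 1 := by norm_num
    _ = x ^ 2 ^ (1 + (a * m / n) * n) := by rw [itern]
    _ = x ^ 2 ^ (a * m) := by rw [show 1 + (a * m / n) * n = a * m by rw [Nat.mul_comm]; omega]
    _ = x ^ 2 ^ (0 + m * a) := by rw [Nat.zero_add, Nat.mul_comm]
    _ = x := by rw [itera]; exact pow_one x


lemma encard_le_two_of {X : Type*} {T : Set X}
    (h : ∀ x ∈ T, ∀ y ∈ T, ∀ z ∈ T, x = y ∨ x = z ∨ y = z) : T.encard ≤ 2 := by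
  rcases T.eq_empty_or_nonempty with rfl | ⟨x, hx⟩
  · simp
  by_cases hy : ∃ y ∈ T, y ≠ x
  · obtain ⟨y, hy, hyx⟩ := hy
    have hsub : T ⊆ {x, y} := by
      intro z hz
      rcases h y hy x hx z hz with h1 | h1 | h1
      · exact absurd h1 hyx
      · exact Or.inr (h1 ▸ rfl)
      · exact Or.inl (h1 ▸ rfl)
    calc T.encard ≤ ({x, y} : Set X).encard := Set.encard_mono hsub
    _ = 2 := Set.encard_pair hyx.symm
  · push_neg at hy
    have hsub : T ⊆ {x} := fun z hz => hy z hz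
    calc T.encard ≤ ({x} : Set X).encard := Set.encard_mono hsub
    _ ≤ 2 := by rw [Set.encard_singleton]; exact one_le_two

/-- If `gcd(3k, n) = 1` (with `n, k ≥ 1`) and `F` is the field with `2ⁿ`
elements, then `φ_k(x, y) = (x^(2^k) + y, y^(2^k) + x + y)` is affine ovalinear: it is an
`F₂`-linear (additive) bijection of `F²`, and the image of every affine line under `φ_k`
meets every affine line in at most two points. -/
theorem phi_k_affine_ovalinear
    (n k : ℕ) (hn : 1 ≤ n) (hk : 1 ≤ k) (hgcd : Nat.gcd (3 * k) n = 1)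
    (F : Type*) [Field F] [Fintype F] (hF : Fintype.card F = 2 ^ n)
    (φ : F × F → F × F)
    (hφ : φ = fun w => (w.1 ^ 2 ^ k + w.2, w.2 ^ 2 ^ k + w.1 + w.2)) :
    (∀ u v : F × F, φ (u + v) = φ u + φ v) ∧
    Function.Bijective φ ∧
    ∀ ℓ m : Set (F × F), IsAffineLine ℓ → IsAffineLine m →
      (φ '' ℓ ∩ m).encard ≤ 2 := by
  haveI : CharP F 2 := by
    haveI := ringChar.charP F
    obtain ⟨m, hp, hc⟩ := FiniteField.card F (ringChar F)
    have h2 : ringChar F = 2 := by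
      have hdvd : ringChar F ∣ 2 ^ n := by
        rw [← hF, hc]; exact dvd_pow_self _ m.ne_zero
      exact (Nat.prime_dvd_prime_iff_eq hp Nat.prime_two).mp (hp.dvd_of_dvd_pow hdvd)
    rw [← h2]; exact ringChar.charP F
  haveI : Fact (Nat.Prime 2) := ⟨Nat.prime_two⟩
  have h2F : (2 : F) = 0 := by exact_mod_cast CharP.cast_eq_zero F 2
  have frob : ∀ x y : F, (x + y) ^ 2 ^ k = x ^ 2 ^ k + y ^ 2 ^ k := fun x y =>
    add_pow_char_pow x y 2 k
  have hadd : ∀ u v : F × F, φ (u + v) = φ u + φ v := by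
    intro u v
    subst hφ
    simp only [Prod.fst_add, Prod.snd_add, Prod.mk_add_mk]
    refine Prod.ext ?_ ?_ <;> simp only <;> rw [frob] <;> ring
  have hker : ∀ w : F × F, φ w = 0 → w = 0 := by
    rintro ⟨x, y⟩ hw
    rw [hφ] at hw
    simp only [Prod.mk_eq_zero] at hw ⊢
    obtain ⟨hx, hy⟩ := hw
    have hy' : y = x ^ 2 ^ k := by linear_combination hx - x ^ 2 ^ k * h2F
    subst hy'
    have hq3 : x ^ 2 ^ (3 * k) = x := by
      rw [← pow3k]
      have h3 : ((x ^ 2 ^ k) ^ 2 ^ k) ^ 2 ^ k + x ^ 2 ^ k + (x ^ 2 ^ k) ^ 2 ^ k = 0 := by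
        have := congrArg (· ^ 2 ^ k) hy
        rw [frob, frob] at this
        simpa using this
      linear_combination h3 - hy
    rcases aux_pow_eq_self hF hgcd hq3 with h0 | h1
    · subst h0; simp
    · exfalso
      subst h1
      simp only [one_pow] at hy
      -- hy : 1 + 1 + 1 = 0
      have : (1 : F) = 0 := by linear_combination hy - h2F
      exact one_ne_zero this
  have hinj : Function.Injective φ := by
    intro u v huv
    have h0 : φ (u + v) = 0 := by
      rw [hadd, huv]
      refine Prod.ext ?_ ?_ <;> simp only [Prod.fst_add, Prod.snd_add, Prod.fst_zero, Prod.snd_zero] <;>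
        linear_combination (_ : F) * h2F
    have huv0 : u + v = 0 := hker _ h0
    rw [Prod.ext_iff] at huv0 ⊢
    simp only [Prod.fst_add, Prod.snd_add, Prod.fst_zero, Prod.snd_zero] at huv0
    exact ⟨by linear_combination huv0.1 - v.1 * h2F, by linear_combination huv0.2 - v.2 * h2F⟩
  have hbij : Function.Bijective φ := Finite.injective_iff_bijective.mp hinj
  refine ⟨hadd, hbij, ?_⟩
  have hgcdk : Nat.gcd k n = 1 := by
    have h1 : Nat.gcd k n ∣ Nat.gcd (3 * k) n :=
      Nat.dvd_gcd ((Nat.gcd_dvd_left k n).trans (dvd_mul_left k 3)) (Nat.gcd_dvd_right k n)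
    rw [hgcd] at h1
    exact Nat.eq_one_of_dvd_one h1
  rintro ℓ m ⟨⟨p1, p2⟩, ⟨a, b⟩, hv, rfl⟩ ⟨⟨r1, r2⟩, ⟨c, d⟩, hv', rfl⟩
  have hvab : ¬(a = 0 ∧ b = 0) := by
    rintro ⟨h1, h2⟩; exact hv (by simp [h1, h2, Prod.mk_eq_zero])
  have hvcd : ¬(c = 0 ∧ d = 0) := by
    rintro ⟨h1, h2⟩; exact hv' (by simp [h1, h2, Prod.mk_eq_zero])
  set α := d * a ^ 2 ^ k + c * b ^ 2 ^ k with hαdef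
  set β := d * b + c * (a + b) with hβdef
  set γ := d * r1 + c * r2 + d * (p1 ^ 2 ^ k + p2) + c * (p2 ^ 2 ^ k + p1 + p2) with hγdef
  set T : Set F := {t | α * t ^ 2 ^ k + β * t = γ} with hTdef
  set g : F → F × F := fun t => φ ((p1, p2) + t • (a, b)) with hgdef
  have hgt : ∀ t : F, g t = ((p1 + t * a) ^ 2 ^ k + (p2 + t * b),
      (p2 + t * b) ^ 2 ^ k + (p1 + t * a) + (p2 + t * b)) := by
    intro t
    rw [hgdef, hφ]
    simp [Prod.smul_mk, smul_eq_mul]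
  -- membership in m
  have hmem : ∀ w : F × F, (∃ s : F, w = (r1, r2) + s • (c, d)) ↔
      d * (w.1 - r1) = c * (w.2 - r2) := by
    intro w
    constructor
    · rintro ⟨s, rfl⟩
      simp [Prod.smul_mk, smul_eq_mul]
      ring
    · intro h
      by_cases hc : c = 0
      · have hd : d ≠ 0 := fun h' => hvcd ⟨hc, h'⟩
        have h1 : w.1 = r1 := by
          have h0 : d * (w.1 - r1) = 0 := by rw [h, hc]; ring
          have := (mul_eq_zero.mp h0).resolve_left hd
          linear_combination this
        refine ⟨(w.2 - r2) / d, ?_⟩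
        refine Prod.ext ?_ ?_ <;>
          simp only [Prod.fst_add, Prod.snd_add, Prod.smul_mk, smul_eq_mul, hc, mul_zero]
        · rw [h1]; ring
        · field_simp; ring
      · refine ⟨(w.1 - r1) / c, ?_⟩
        refine Prod.ext ?_ ?_ <;>
          simp only [Prod.fst_add, Prod.snd_add, Prod.smul_mk, smul_eq_mul]
        · field_simp; ring
        · field_simp
          linear_combination -h
  -- the key iff
  have hTiff : ∀ t : F, d * ((g t).1 - r1) = c * ((g t).2 - r2) ↔ t ∈ T := by
    intro t
    rw [hgt t]
    simp only [Set.mem_setOf_eq, hTdef, hαdef, hβdef, hγdef]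
    rw [frob p1 (t * a), frob p2 (t * b), mul_pow, mul_pow]
    constructor
    · intro h
      linear_combination h + (c * b ^ 2 ^ k * t ^ 2 ^ k + c * (a + b) * t - c * r2
        - d * p1 ^ 2 ^ k - d * p2) * h2F
    · intro h
      linear_combination h - (c * b ^ 2 ^ k * t ^ 2 ^ k + c * (a + b) * t - c * r2
        - d * p1 ^ 2 ^ k - d * p2) * h2F
  -- image equality
  have himg : φ '' {w | ∃ t : F, w = (p1, p2) + t • (a, b)} ∩
      {w | ∃ s : F, w = (r1, r2) + s • (c, d)} = g '' T := by
    ext w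
    simp only [Set.mem_inter_iff, Set.mem_image, Set.mem_setOf_eq]
    constructor
    · rintro ⟨⟨w', ⟨t, rfl⟩, rfl⟩, hwm⟩
      exact ⟨t, (hTiff t).mp ((hmem _).mp hwm), rfl⟩
    · rintro ⟨t, htT, rfl⟩
      exact ⟨⟨_, ⟨t, rfl⟩, rfl⟩, (hmem _).mpr ((hTiff t).mpr htT)⟩
  -- nondegeneracy
  have hnd : ¬(α = 0 ∧ β = 0) := by
    rintro ⟨hα0, hβ0⟩
    rw [hαdef] at hα0
    rw [hβdef] at hβ0
    by_cases hc : c = 0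
    · have hd : d ≠ 0 := fun h' => hvcd ⟨hc, h'⟩
      subst hc
      have ha : a = 0 := by
        have h1 : d * a ^ 2 ^ k = 0 := by linear_combination hα0
        have h2 := (mul_eq_zero.mp h1).resolve_left hd
        exact pow_eq_zero_iff (by positivity) |>.mp h2
      have hb : b = 0 := by
        have h1 : d * b = 0 := by linear_combination hβ0
        exact (mul_eq_zero.mp h1).resolve_left hd
      exact hvab ⟨ha, hb⟩
    · have h3 : c * (b ^ 2 ^ k * b - a ^ 2 ^ k * (a + b)) = 0 := by
        linear_combination b * hα0 - a ^ 2 ^ k * hβ0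
      have hbb : b ^ 2 ^ k * b = a ^ 2 ^ k * (a + b) := by
        have := (mul_eq_zero.mp h3).resolve_left hc
        linear_combination this
      by_cases ha0 : a = 0
      · subst ha0
        have hb : b = 0 := by
          have h1 : b ^ 2 ^ k * b = 0 := by rw [hbb]; ring
          rcases mul_eq_zero.mp h1 with h | h
          · exact pow_eq_zero_iff (by positivity) |>.mp h
          · exact h
        exact hvab ⟨rfl, hb⟩
      · set u := b / a with hudef
        have hu1 : u ^ 2 ^ k * u = u + 1 := by
          rw [hudef, div_pow]
          field_simp
          linear_combination hbb
        have hA0 : u ≠ 0 := by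
          intro h0
          rw [h0] at hu1
          simp at hu1
        have hB0 : u ^ 2 ^ k ≠ 0 := pow_ne_zero _ hA0
        have hC0 : (u ^ 2 ^ k) ^ 2 ^ k ≠ 0 := pow_ne_zero _ hB0
        have hBC : (u ^ 2 ^ k) ^ 2 ^ k * u ^ 2 ^ k = u ^ 2 ^ k + 1 := by
          have h4 := congrArg (· ^ 2 ^ k) hu1
          rw [mul_pow, frob, one_pow] at h4
          exact h4
        have hCD : ((u ^ 2 ^ k) ^ 2 ^ k) ^ 2 ^ k * (u ^ 2 ^ k) ^ 2 ^ k
            = (u ^ 2 ^ k) ^ 2 ^ k + 1 := by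
          have h4 := congrArg (· ^ 2 ^ k) hBC
          rw [mul_pow, frob, one_pow] at h4
          exact h4
        have h6 : (u ^ 2 ^ k) ^ 2 ^ k * u + (u ^ 2 ^ k) ^ 2 ^ k + 1 = 0 := by
          have h5 : u ^ 2 ^ k * ((u ^ 2 ^ k) ^ 2 ^ k * u + (u ^ 2 ^ k) ^ 2 ^ k + 1) = 0 := by
            linear_combination (u + 1) * hBC + hu1 + (u + u ^ 2 ^ k + 1) * h2F
          exact (mul_eq_zero.mp h5).resolve_left hB0
        have hDA : ((u ^ 2 ^ k) ^ 2 ^ k) ^ 2 ^ k = u := by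
          have h7 : (u ^ 2 ^ k) ^ 2 ^ k *
              (((u ^ 2 ^ k) ^ 2 ^ k) ^ 2 ^ k - u) = 0 := by
            linear_combination hCD - h6 + (1 + (u ^ 2 ^ k) ^ 2 ^ k) * h2F
          have := (mul_eq_zero.mp h7).resolve_left hC0
          linear_combination this
        have hu3 : u ^ 2 ^ (3 * k) = u := by rw [← pow3k]; exact hDA
        rcases aux_pow_eq_self hF hgcd hu3 with h | h
        · exact hA0 h
        · rw [h] at hu1
          simp only [one_pow] at hu1
          exact one_ne_zero (by linear_combination hu1 + h2F)
  -- pairwise property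
  have hP : ∀ x ∈ T, ∀ y ∈ T, ∀ z ∈ T, x = y ∨ x = z ∨ y = z := by
    intro x hx y hy z hz
    by_contra hcon
    push_neg at hcon
    obtain ⟨hxy, hxz, hyz⟩ := hcon
    simp only [hTdef, Set.mem_setOf_eq] at hx hy hz
    have hu : α * (x + y) ^ 2 ^ k + β * (x + y) = 0 := by
      rw [frob]
      linear_combination hx + hy + γ * h2F
    have hw : α * (x + z) ^ 2 ^ k + β * (x + z) = 0 := by
      rw [frob]
      linear_combination hx + hz + γ * h2F
    have hu0 : x + y ≠ 0 := by
      intro h0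
      exact hxy (by linear_combination h0 - y * h2F)
    have hw0 : x + z ≠ 0 := by
      intro h0
      exact hxz (by linear_combination h0 - z * h2F)
    by_cases hα0 : α = 0
    · have hβ0 : β ≠ 0 := fun h' => hnd ⟨hα0, h'⟩
      have h1 : β * (x + y) = 0 := by rw [hα0] at hu; linear_combination hu
      exact hu0 ((mul_eq_zero.mp h1).resolve_left hβ0)
    · have hc' : α * ((x + y) ^ 2 ^ k * (x + z) - (x + z) ^ 2 ^ k * (x + y)) = 0 := by
        linear_combination (x + z) * hu - (x + y) * hw
      have h5 : (x + y) ^ 2 ^ k * (x + z) = (x + z) ^ 2 ^ k * (x + y) := by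
        have := (mul_eq_zero.mp hc').resolve_left hα0
        linear_combination this
      have hzq : ((x + y) / (x + z)) ^ 2 ^ k = (x + y) / (x + z) := by
        rw [div_pow]
        rw [div_eq_div_iff (pow_ne_zero _ hw0) hw0]
        linear_combination h5
      rcases aux_pow_eq_self hF hgcdk hzq with h | h
      · exact hu0 ((div_eq_zero_iff.mp h).resolve_right hw0)
      · field_simp at h
        exact hyz (add_left_cancel h)
  calc (φ '' {w | ∃ t : F, w = (p1, p2) + t • (a, b)} ∩
      {w | ∃ s : F, w = (r1, r2) + s • (c, d)}).encard
      = (g '' T).encard := by rw [himg]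
    _ ≤ T.encard := Set.encard_image_le _ _
    _ ≤ 2 := encard_le_two_of hP
end

section
/- Let n, k ≥ 1 with gcd(6k, n) = 1, let F be the finite field with q = 2ⁿ elements, and define φ_k : F² → F² by φ_k(x, y) = (x^(2^k) + y, y^(2^k) + x + y). Then the standard affine plane AG(2,q), its image under φ_k, and its image under φ_k ∘ φ_k are three mutually orthogoval affine planes: for any two distinct maps f, g among {identity, φ_k, φ_k ∘ φ_k} and any two affine lines ℓ and m of F², the set f(ℓ) ∩ g(m) has at most two elements. In particular, if gcd(n, 6) = 1 there exists a set of three mutually orthogoval affine planes of order 2ⁿ. -/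
section Aux

variable {F : Type*} [Field F] [Fintype F] {n : ℕ}

/-- If `x^(2^a) = x` in the field with `2^n` elements and `gcd a n = 1`, then `x ∈ {0,1}`. -/
lemma aux_fix (hF : Fintype.card F = 2 ^ n) {a : ℕ} (hgcd : Nat.gcd a n = 1)
    {x : F} (hx : x ^ 2 ^ a = x) : x = 0 ∨ x = 1 := by
  by_cases h0 : x = 0
  · exact Or.inl h0
  right
  have h1 : x ^ (2 ^ a - 1) = 1 := by
    have h : x ^ (2 ^ a - 1) * x = 1 * x := by
      rw [one_mul, ← pow_succ, Nat.sub_add_cancel Nat.one_le_two_pow, hx]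
    exact mul_right_cancel₀ h0 h
  have h2 : x ^ (2 ^ n - 1) = 1 := by
    have h := FiniteField.pow_card_sub_one_eq_one x h0
    rwa [hF] at h
  set d := orderOf x with hd
  have key : ∀ m : ℕ, x ^ (2 ^ m - 1) = 1 → (2 : ZMod d) ^ m = 1 := by
    intro m hm
    have hdvd : d ∣ 2 ^ m - 1 := orderOf_dvd_of_pow_eq_one hm
    have hz : (((2 : ℕ) ^ m - 1 : ℕ) : ZMod d) = 0 :=
      (ZMod.natCast_eq_zero_iff _ _).mpr hdvd
    have hsum : ((2 : ℕ) ^ m - 1) + 1 = 2 ^ m := Nat.sub_add_cancel Nat.one_le_two_pow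
    calc (2 : ZMod d) ^ m = (((2 : ℕ) ^ m : ℕ) : ZMod d) := by push_cast; ring
      _ = ((((2 : ℕ) ^ m - 1) + 1 : ℕ) : ZMod d) := by rw [hsum]
      _ = 1 := by push_cast [hz]; ring
  have ha1 : orderOf (2 : ZMod d) ∣ a := orderOf_dvd_of_pow_eq_one (key a h1)
  have hn1 : orderOf (2 : ZMod d) ∣ n := orderOf_dvd_of_pow_eq_one (key n h2)
  have hdvd1 : orderOf (2 : ZMod d) ∣ 1 := by
    have h := Nat.dvd_gcd ha1 hn1; rwa [hgcd] at h
  have h21 : (2 : ZMod d) = 1 := orderOf_eq_one_iff.mp (Nat.dvd_one.mp hdvd1)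
  have hcast : ((1 : ℕ) : ZMod d) = 0 := by push_cast; linear_combination h21
  have hd1 : d ∣ 1 := (ZMod.natCast_eq_zero_iff _ _).mp hcast
  exact orderOf_eq_one_iff.mp (Nat.dvd_one.mp hd1)

variable [CharP F 2]

/-- If `gcd (3j) n = 1`, the polynomial `x^(2^j+1) + x + 1` has no root in the field with
`2^n` elements. -/
lemma aux_noroot_s18 (hF : Fintype.card F = 2 ^ n) {j : ℕ} (hgcd : Nat.gcd (3 * j) n = 1)
    (x : F) : x ^ (2 ^ j + 1) + x + 1 ≠ 0 := by
  haveI : Fact (Nat.Prime 2) := ⟨Nat.prime_two⟩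
  have htwo : (2 : F) = 0 := CharP.cast_eq_zero F 2
  intro h
  have hx0 : x ≠ 0 := by
    rintro rfl
    simp [zero_pow] at h
  have hx1 : x ≠ 1 := by
    rintro rfl
    rw [one_pow] at h
    exact one_ne_zero (α := F) (by linear_combination h - htwo)
  have c1 : x * x ^ 2 ^ j = x + 1 := by
    linear_combination h + (-1 - x) * htwo
  have c2 : x ^ 2 ^ j * (x ^ 2 ^ j) ^ 2 ^ j = x ^ 2 ^ j + 1 := by
    have hc : (x * x ^ 2 ^ j) ^ 2 ^ j = (x + 1) ^ 2 ^ j := by rw [c1]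
    rwa [mul_pow, add_pow_char_pow, one_pow] at hc
  have c3 : (x ^ 2 ^ j) ^ 2 ^ j * ((x ^ 2 ^ j) ^ 2 ^ j) ^ 2 ^ j
      = (x ^ 2 ^ j) ^ 2 ^ j + 1 := by
    have hc : (x ^ 2 ^ j * (x ^ 2 ^ j) ^ 2 ^ j) ^ 2 ^ j = (x ^ 2 ^ j + 1) ^ 2 ^ j := by
      rw [c2]
    rwa [mul_pow, add_pow_char_pow, one_pow] at hc
  have d1 : (x + 1) * (x ^ 2 ^ j) ^ 2 ^ j = 1 := by
    linear_combination x * c2 + (x ^ 2 ^ j) ^ 2 ^ j * c1 + c1 +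
      ((x ^ 2 ^ j) ^ 2 ^ j + x + x * (x ^ 2 ^ j) ^ 2 ^ j
        - x * x ^ 2 ^ j * (x ^ 2 ^ j) ^ 2 ^ j) * htwo
  have d2 : ((x ^ 2 ^ j) ^ 2 ^ j) ^ 2 ^ j = x := by
    linear_combination (x + 1) * c3 + ((x ^ 2 ^ j) ^ 2 ^ j) ^ 2 ^ j * d1 - d1 +
      (((x ^ 2 ^ j) ^ 2 ^ j) ^ 2 ^ j + (x ^ 2 ^ j) ^ 2 ^ j
        - (x ^ 2 ^ j) ^ 2 ^ j * ((x ^ 2 ^ j) ^ 2 ^ j) ^ 2 ^ j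
        + x * (x ^ 2 ^ j) ^ 2 ^ j
        - x * (x ^ 2 ^ j) ^ 2 ^ j * ((x ^ 2 ^ j) ^ 2 ^ j) ^ 2 ^ j) * htwo
  have hfix : x ^ 2 ^ (3 * j) = x := by
    have hexp : (2 : ℕ) ^ (3 * j) = 2 ^ j * 2 ^ j * 2 ^ j := by
      rw [← pow_add, ← pow_add]; ring_nf
    rw [hexp, pow_mul, pow_mul]
    exact d2
  rcases aux_fix hF hgcd hfix with h0 | h1
  · exact hx0 h0
  · exact hx1 h1

/-- The solution set of `A s^(2^j) + B s = e` has at most 2 elements when `(A,B) ≠ 0`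
and `gcd j n = 1`. -/
lemma aux_count (hF : Fintype.card F = 2 ^ n) {j : ℕ} (hj : Nat.gcd j n = 1)
    (A B e : F) (hAB : ¬(A = 0 ∧ B = 0)) :
    {s : F | A * s ^ 2 ^ j + B * s = e}.encard ≤ 2 := by
  haveI : Fact (Nat.Prime 2) := ⟨Nat.prime_two⟩
  have htwo : (2 : F) = 0 := CharP.cast_eq_zero F 2
  set S := {s : F | A * s ^ 2 ^ j + B * s = e} with hS
  have key : ∀ s1 ∈ S, ∀ s2 ∈ S, ∀ s3 ∈ S, s1 = s2 ∨ s1 = s3 ∨ s2 = s3 := by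
    intro s1 h1 s2 h2 s3 h3
    by_contra hcon
    push_neg at hcon
    obtain ⟨h12, h13, h23⟩ := hcon
    simp only [hS, Set.mem_setOf_eq] at h1 h2 h3
    have hker : ∀ s t : F, A * s ^ 2 ^ j + B * s = e → A * t ^ 2 ^ j + B * t = e →
        A * (s + t) ^ 2 ^ j = B * (s + t) := by
      intro s t hs ht
      rw [add_pow_char_pow]
      linear_combination hs + ht + (e - B * s - B * t) * htwo
    have hku : A * (s1 + s2) ^ 2 ^ j = B * (s1 + s2) := hker s1 s2 h1 h2
    have hkv : A * (s1 + s3) ^ 2 ^ j = B * (s1 + s3) := hker s1 s3 h1 h3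
    have hu0 : s1 + s2 ≠ 0 := by
      intro h
      exact h12 (by linear_combination h - s2 * htwo)
    have hv0 : s1 + s3 ≠ 0 := by
      intro h
      exact h13 (by linear_combination h - s3 * htwo)
    by_cases hA : A = 0
    · have hB : B ≠ 0 := fun hB => hAB ⟨hA, hB⟩
      apply hu0
      have h : B * (s1 + s2) = 0 := by rw [← hku, hA]; ring
      exact (mul_eq_zero.mp h).resolve_left hB
    · have hcross : (s1 + s2) ^ 2 ^ j * (s1 + s3) = (s1 + s3) ^ 2 ^ j * (s1 + s2) := by
        have h : A * ((s1 + s2) ^ 2 ^ j * (s1 + s3))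
            = A * ((s1 + s3) ^ 2 ^ j * (s1 + s2)) := by
          linear_combination (s1 + s3) * hku - (s1 + s2) * hkv
        exact mul_left_cancel₀ hA h
      have hdiv : ((s1 + s2) / (s1 + s3)) ^ 2 ^ j = (s1 + s2) / (s1 + s3) := by
        rw [div_pow, div_eq_div_iff (pow_ne_zero _ hv0) hv0]
        linear_combination hcross
      rcases aux_fix hF hj hdiv with h0 | h1'
      · exact hu0 (by rwa [div_eq_zero_iff, or_iff_left hv0] at h0)
      · rw [div_eq_iff hv0, one_mul] at h1'
        exact h23 (add_left_cancel h1')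
  rcases Set.eq_empty_or_nonempty S with hemp | ⟨s1, hs1⟩
  · rw [hemp]; simp
  by_cases hsub : S ⊆ {s1}
  · calc S.encard ≤ ({s1} : Set F).encard := Set.encard_mono hsub
      _ = 1 := Set.encard_singleton s1
      _ ≤ 2 := by norm_num
  · obtain ⟨s2, hs2, hne⟩ : ∃ s2 ∈ S, s2 ≠ s1 := by
      rcases Set.not_subset.mp hsub with ⟨s2, hs2, hns⟩
      exact ⟨s2, hs2, by simpa using hns⟩
    have hsub2 : S ⊆ {s1, s2} := by
      intro s3 hs3
      rcases key s1 hs1 s2 hs2 s3 hs3 with h | h | h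
      · exact absurd h.symm hne
      · exact Or.inl h.symm
      · exact Or.inr h.symm
    calc S.encard ≤ ({s1, s2} : Set F).encard := Set.encard_mono hsub2
      _ = 2 := Set.encard_pair (Ne.symm hne)

/-- Parametric intersection bound. -/
lemma aux_inter (hF : Fintype.card F = 2 ^ n) {j : ℕ} (hj : Nat.gcd j n = 1)
    (ψ : F × F → F × F) (hadd : ∀ w1 w2, ψ (w1 + w2) = ψ w1 + ψ w2)
    (P1 P2 P3 P4 : F → F → F)
    (hscal : ∀ s c d : F, ψ (s * c, s * d) =
      (P1 c d * s ^ 2 ^ j + P2 c d * s, P3 c d * s ^ 2 ^ j + P4 c d * s))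
    (hAB : ∀ a b c d : F, ¬(a = 0 ∧ b = 0) → ¬(c = 0 ∧ d = 0) →
      ¬(b * P1 c d + a * P3 c d = 0 ∧ b * P2 c d + a * P4 c d = 0))
    (ℓ m : Set (F × F)) (hℓ : IsAffineLine ℓ) (hm : IsAffineLine m) :
    (ℓ ∩ ψ '' m).encard ≤ 2 := by
  have htwo : (2 : F) = 0 := CharP.cast_eq_zero F 2
  obtain ⟨p, v, hv, rfl⟩ := hℓ
  obtain ⟨p', v', hv', rfl⟩ := hm
  obtain ⟨a, b⟩ := v
  obtain ⟨c, d⟩ := v'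
  have hab : ¬(a = 0 ∧ b = 0) := by
    rintro ⟨h1, h2⟩; exact hv (by simp [h1, h2, Prod.ext_iff])
  have hcd : ¬(c = 0 ∧ d = 0) := by
    rintro ⟨h1, h2⟩; exact hv' (by simp [h1, h2, Prod.ext_iff])
  have hsubset : {w : F × F | ∃ t : F, w = p + t • (a, b)} ∩
      ψ '' {w | ∃ s : F, w = p' + s • (c, d)} ⊆
      (fun s => ψ (p' + s • (c, d))) ''
        {s : F | (b * P1 c d + a * P3 c d) * s ^ 2 ^ j + (b * P2 c d + a * P4 c d) * s
          = (b * p.1 + a * p.2) + (b * (ψ p').1 + a * (ψ p').2)} := by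
    rintro w ⟨⟨t, rfl⟩, x, ⟨s, rfl⟩, hψx⟩
    refine ⟨s, ?_, hψx⟩
    have hexp : ψ (p' + s • (c, d)) = ψ p' + ψ (s * c, s * d) := by
      rw [show s • ((c : F), (d : F)) = (s * c, s * d) from by
        simp [Prod.smul_mk, smul_eq_mul], hadd]
    rw [hscal] at hexp
    rw [hexp] at hψx
    have h1 : (ψ p').1 + (P1 c d * s ^ 2 ^ j + P2 c d * s) = p.1 + t * a := by
      have hc := congrArg Prod.fst hψx
      simpa [smul_eq_mul] using hc
    have h2 : (ψ p').2 + (P3 c d * s ^ 2 ^ j + P4 c d * s) = p.2 + t * b := by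
      have hc := congrArg Prod.snd hψx
      simpa [smul_eq_mul] using hc
    show _ * s ^ 2 ^ j + _ * s = _
    linear_combination b * h1 + a * h2 +
      (t * a * b - b * (ψ p').1 - a * (ψ p').2) * htwo
  calc ({w : F × F | ∃ t : F, w = p + t • (a, b)} ∩
        ψ '' {w | ∃ s : F, w = p' + s • (c, d)}).encard
      ≤ ((fun s => ψ (p' + s • (c, d))) ''
          {s : F | (b * P1 c d + a * P3 c d) * s ^ 2 ^ j + (b * P2 c d + a * P4 c d) * s
            = (b * p.1 + a * p.2) + (b * (ψ p').1 + a * (ψ p').2)}).encard :=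
        Set.encard_mono hsubset
    _ ≤ ({s : F | (b * P1 c d + a * P3 c d) * s ^ 2 ^ j + (b * P2 c d + a * P4 c d) * s
            = (b * p.1 + a * p.2) + (b * (ψ p').1 + a * (ψ p').2)}).encard :=
        Set.encard_image_le _ _
    _ ≤ 2 := aux_count hF hj _ _ _ (hAB a b c d hab hcd)

end Aux

/-- If `gcd(6k, n) = 1` (with `n, k ≥ 1`), `F` is the field with `q = 2ⁿ`
elements, and `φ_k(x, y) = (x^(2^k) + y, y^(2^k) + x + y)`, then the standard affine plane
`AG(2,q)`, its image under `φ_k`, and its image under `φ_k ∘ φ_k` are mutually orthogoval: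
for distinct `f, g` among `{id, φ_k, φ_k ∘ φ_k}` and any affine lines `ℓ`, `m` of `F²`, the
set `f(ℓ) ∩ g(m)` has at most two elements.  (In particular, taking `k = 1`, if
`gcd(n, 6) = 1` there is a set of three mutually orthogoval affine planes of order `2ⁿ`.) -/
theorem three_mutually_orthogoval_affine_planes
    (n k : ℕ) (hn : 1 ≤ n) (hk : 1 ≤ k) (hgcd : Nat.gcd (6 * k) n = 1)
    (F : Type*) [Field F] [Fintype F] (hF : Fintype.card F = 2 ^ n)
    (φ : F × F → F × F)
    (hφ : φ = fun w => (w.1 ^ 2 ^ k + w.2, w.2 ^ 2 ^ k + w.1 + w.2)) :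
    ∀ f g : F × F → F × F,
      f ∈ ({id, φ, φ ∘ φ} : Set (F × F → F × F)) →
      g ∈ ({id, φ, φ ∘ φ} : Set (F × F → F × F)) → f ≠ g →
      ∀ ℓ m : Set (F × F), IsAffineLine ℓ → IsAffineLine m →
        (f '' ℓ ∩ g '' m).encard ≤ 2 := by
  -- characteristic 2
  haveI hchar : CharP F 2 := by
    haveI hrc : CharP F (ringChar F) := ringChar.charP F
    have hp : (ringChar F).Prime := CharP.char_is_prime F (ringChar F)
    obtain ⟨m, hm⟩ := FiniteField.card F (ringChar F)
    have hdvd : ringChar F ∣ 2 ^ n := by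
      rw [← hF, hm.2]
      exact dvd_pow_self _ m.ne_zero
    have h2 : ringChar F = 2 :=
      (Nat.prime_dvd_prime_iff_eq hp Nat.prime_two).mp (hp.dvd_of_dvd_pow hdvd)
    rwa [h2] at hrc
  haveI : Fact (Nat.Prime 2) := ⟨Nat.prime_two⟩
  have htwo : (2 : F) = 0 := CharP.cast_eq_zero F 2
  -- gcd facts
  have hgk : Nat.gcd k n = 1 := Nat.dvd_one.mp (hgcd ▸
    Nat.dvd_gcd ((Nat.gcd_dvd_left k n).trans (dvd_mul_left k 6)) (Nat.gcd_dvd_right k n))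
  have hg2k : Nat.gcd (2 * k) n = 1 := Nat.dvd_one.mp (hgcd ▸
    Nat.dvd_gcd ((Nat.gcd_dvd_left (2 * k) n).trans ⟨3, by ring⟩) (Nat.gcd_dvd_right (2 * k) n))
  have hg3k : Nat.gcd (3 * k) n = 1 := Nat.dvd_one.mp (hgcd ▸
    Nat.dvd_gcd ((Nat.gcd_dvd_left (3 * k) n).trans ⟨2, by ring⟩) (Nat.gcd_dvd_right (3 * k) n))
  have hg6k : Nat.gcd (3 * (2 * k)) n = 1 := by
    rw [show 3 * (2 * k) = 6 * k by ring]; exact hgcd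
  -- additivity of φ
  have hadd : ∀ w1 w2 : F × F, φ (w1 + w2) = φ w1 + φ w2 := by
    intro w1 w2
    simp only [hφ, Prod.fst_add, Prod.snd_add, Prod.mk_add_mk, Prod.mk.injEq]
    rw [add_pow_char_pow, add_pow_char_pow]
    constructor <;> ring
  have haddφφ : ∀ w1 w2 : F × F, (φ ∘ φ) (w1 + w2) = (φ ∘ φ) w1 + (φ ∘ φ) w2 := by
    intro w1 w2
    simp only [Function.comp_apply, hadd]
  -- scalar formulas
  have hscal1 : ∀ s c d : F, φ (s * c, s * d) =
      ((fun c d => c ^ 2 ^ k) c d * s ^ 2 ^ k + (fun (c : F) (d : F) => d) c d * s,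
       (fun (c : F) (d : F) => d ^ 2 ^ k) c d * s ^ 2 ^ k
         + (fun (c : F) (d : F) => c + d) c d * s) := by
    intro s c d
    simp only [hφ, Prod.mk.injEq]
    constructor <;> (rw [mul_pow]; ring)
  have hpow2 : ∀ x : F, x ^ 2 ^ (2 * k) = (x ^ 2 ^ k) ^ 2 ^ k := by
    intro x
    rw [← pow_mul, ← pow_add, two_mul]
  have hscal2 : ∀ s c d : F, (φ ∘ φ) (s * c, s * d) =
      ((fun c d => c ^ 2 ^ (2 * k)) c d * s ^ 2 ^ (2 * k)
         + (fun (c : F) (d : F) => c + d) c d * s,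
       (fun (c : F) (d : F) => d ^ 2 ^ (2 * k)) c d * s ^ 2 ^ (2 * k)
         + (fun (c : F) (d : F) => c) c d * s) := by
    intro s c d
    simp only [hφ, Function.comp_apply, Prod.mk.injEq, hpow2]
    constructor
    · have E1 : ((s * c) ^ 2 ^ k + s * d) ^ 2 ^ k
          = ((s * c) ^ 2 ^ k) ^ 2 ^ k + (s * d) ^ 2 ^ k := add_pow_char_pow _ _ 2 k
      linear_combination E1 + (s ^ 2 ^ k * d ^ 2 ^ k) * htwo
    · have E2a : ((s * d) ^ 2 ^ k + s * c + s * d) ^ 2 ^ k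
          = ((s * d) ^ 2 ^ k + s * c) ^ 2 ^ k + (s * d) ^ 2 ^ k := add_pow_char_pow _ _ 2 k
      have E2b : ((s * d) ^ 2 ^ k + s * c) ^ 2 ^ k
          = ((s * d) ^ 2 ^ k) ^ 2 ^ k + (s * c) ^ 2 ^ k := add_pow_char_pow _ _ 2 k
      linear_combination E2a + E2b +
        (s ^ 2 ^ k * c ^ 2 ^ k + s ^ 2 ^ k * d ^ 2 ^ k + s * d) * htwo
  -- coefficient nonvanishing for φ
  have hAB1 : ∀ a b c d : F, ¬(a = 0 ∧ b = 0) → ¬(c = 0 ∧ d = 0) →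
      ¬(b * (fun c d => c ^ 2 ^ k) c d + a * (fun (c : F) (d : F) => d ^ 2 ^ k) c d = 0 ∧
        b * (fun (c : F) (d : F) => d) c d + a * (fun (c : F) (d : F) => c + d) c d = 0) := by
    intro a b c d hab hcd he
    obtain ⟨e1, e2⟩ := he
    simp only at e1 e2
    have hpz : ∀ x : F, x ^ 2 ^ k = 0 → x = 0 := fun x hx => by
      by_contra h0; exact pow_ne_zero _ h0 hx
    by_cases ha : a = 0
    · have hb : b ≠ 0 := fun h => hab ⟨ha, h⟩
      have hc0 : c = 0 := hpz c ((mul_eq_zero.mp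
        (show b * c ^ 2 ^ k = 0 by linear_combination e1 - d ^ 2 ^ k * ha)).resolve_left hb)
      have hd0 : d = 0 := (mul_eq_zero.mp
        (show b * d = 0 by linear_combination e2 - (c + d) * ha)).resolve_left hb
      exact hcd ⟨hc0, hd0⟩
    by_cases hb : b = 0
    · have hd0 : d = 0 := hpz d ((mul_eq_zero.mp
        (show a * d ^ 2 ^ k = 0 by linear_combination e1 - c ^ 2 ^ k * hb)).resolve_left ha)
      have hc0 : c = 0 := (mul_eq_zero.mp
        (show a * c = 0 by linear_combination e2 - d * hb - a * hd0)).resolve_left ha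
      exact hcd ⟨hc0, hd0⟩
    have hc : c ≠ 0 := by
      intro hc0
      have hcq : c ^ 2 ^ k = 0 := by rw [hc0]; exact zero_pow (by positivity)
      have hd0 : d = 0 := hpz d ((mul_eq_zero.mp
        (show a * d ^ 2 ^ k = 0 by linear_combination e1 - b * hcq)).resolve_left ha)
      exact hcd ⟨hc0, hd0⟩
    have hd : d ≠ 0 := by
      intro hd0
      have : a * c = 0 := by linear_combination e2 - b * hd0 - a * hd0
      exact hc ((mul_eq_zero.mp this).resolve_left ha)
    have hT : d ^ 2 ^ k * d + d * c ^ 2 ^ k + c * c ^ 2 ^ k = 0 :=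
      mul_left_cancel₀ ha (by
        linear_combination (-d) * e1 + c ^ 2 ^ k * e2 + (a * d * d ^ 2 ^ k) * htwo)
    apply aux_noroot_s18 hF hg3k (d / c)
    have heq : (d / c) ^ (2 ^ k + 1) + d / c + 1
        = (d ^ 2 ^ k * d + d * c ^ 2 ^ k + c * c ^ 2 ^ k) / (c ^ 2 ^ k * c) := by
      rw [pow_succ, div_pow]
      field_simp
    rw [heq, hT, zero_div]
  -- coefficient nonvanishing for φ ∘ φ
  have hAB2 : ∀ a b c d : F, ¬(a = 0 ∧ b = 0) → ¬(c = 0 ∧ d = 0) →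
      ¬(b * (fun c d => c ^ 2 ^ (2 * k)) c d
          + a * (fun (c : F) (d : F) => d ^ 2 ^ (2 * k)) c d = 0 ∧
        b * (fun (c : F) (d : F) => c + d) c d + a * (fun (c : F) (d : F) => c) c d = 0) := by
    intro a b c d hab hcd he
    obtain ⟨e1, e2⟩ := he
    simp only at e1 e2
    have hpz : ∀ x : F, x ^ 2 ^ (2 * k) = 0 → x = 0 := fun x hx => by
      by_contra h0; exact pow_ne_zero _ h0 hx
    by_cases ha : a = 0
    · have hb : b ≠ 0 := fun h => hab ⟨ha, h⟩
      have hc0 : c = 0 := hpz c ((mul_eq_zero.mp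
        (show b * c ^ 2 ^ (2 * k) = 0 by
          linear_combination e1 - d ^ 2 ^ (2 * k) * ha)).resolve_left hb)
      have hd0 : d = 0 := (mul_eq_zero.mp
        (show b * d = 0 by linear_combination e2 - b * hc0 - c * ha)).resolve_left hb
      exact hcd ⟨hc0, hd0⟩
    by_cases hb : b = 0
    · have hd0 : d = 0 := hpz d ((mul_eq_zero.mp
        (show a * d ^ 2 ^ (2 * k) = 0 by
          linear_combination e1 - c ^ 2 ^ (2 * k) * hb)).resolve_left ha)
      have hc0 : c = 0 := (mul_eq_zero.mp
        (show a * c = 0 by linear_combination e2 - (c + d) * hb)).resolve_left ha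
      exact hcd ⟨hc0, hd0⟩
    have hc : c ≠ 0 := by
      intro hc0
      have hd0 : d = 0 := (mul_eq_zero.mp
        (show b * d = 0 by linear_combination e2 - b * hc0 - a * hc0)).resolve_left hb
      exact hcd ⟨hc0, hd0⟩
    have hd : d ≠ 0 := by
      intro hd0
      have hdq : d ^ 2 ^ (2 * k) = 0 := by rw [hd0]; exact zero_pow (by positivity)
      have : b * c ^ 2 ^ (2 * k) = 0 := by linear_combination e1 - a * hdq
      exact hc (hpz c ((mul_eq_zero.mp this).resolve_left hb))
    have hT : c ^ 2 ^ (2 * k) * c + c * d ^ 2 ^ (2 * k) + d * d ^ 2 ^ (2 * k) = 0 :=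
      mul_left_cancel₀ hb (by
        linear_combination (-c) * e1 + d ^ 2 ^ (2 * k) * e2
          + (b * c * c ^ 2 ^ (2 * k)) * htwo)
    apply aux_noroot_s18 hF hg6k (c / d)
    have heq : (c / d) ^ (2 ^ (2 * k) + 1) + c / d + 1
        = (c ^ 2 ^ (2 * k) * c + c * d ^ 2 ^ (2 * k) + d * d ^ 2 ^ (2 * k))
          / (d ^ 2 ^ (2 * k) * d) := by
      rw [pow_succ, div_pow]
      field_simp
    rw [heq, hT, zero_div]
  -- injectivity of φ
  have hker0 : ∀ w : F × F, φ w = 0 → w = 0 := by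
    rintro ⟨x, y⟩ hw
    rw [hφ] at hw
    simp only [Prod.mk.injEq, Prod.mk_eq_zero] at hw
    obtain ⟨h1, h2⟩ := hw
    have hy : y = x ^ 2 ^ k := by linear_combination -h1 + y * htwo
    subst hy
    have h3 : ((x ^ 2 ^ k) ^ 2 ^ k + x + x ^ 2 ^ k) ^ 2 ^ k = 0 := by
      rw [h2]; exact zero_pow (by positivity)
    rw [add_pow_char_pow, add_pow_char_pow] at h3
    have hfix : ((x ^ 2 ^ k) ^ 2 ^ k) ^ 2 ^ k = x := by linear_combination h3 - h2
    have hfix' : x ^ 2 ^ (3 * k) = x := by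
      rw [show (2 : ℕ) ^ (3 * k) = 2 ^ k * 2 ^ k * 2 ^ k by
        rw [← pow_add, ← pow_add]; ring_nf, pow_mul, pow_mul]
      exact hfix
    rcases aux_fix hF hg3k hfix' with h0 | h1'
    · rw [h0]
      simp [Prod.ext_iff, zero_pow]
    · exfalso
      rw [h1'] at h2
      simp only [one_pow] at h2
      exact one_ne_zero (α := F) (by linear_combination h2 - htwo)
  have hinj : Function.Injective φ := by
    intro w1 w2 h
    have hzero : φ (w1 + w2) = 0 := by
      rw [hadd, h]
      rw [Prod.ext_iff]
      constructor <;> simp [CharTwo.add_self_eq_zero]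
    have h0 := hker0 _ hzero
    rw [Prod.ext_iff] at h0 ⊢
    simp only [Prod.fst_add, Prod.snd_add, Prod.fst_zero, Prod.snd_zero] at h0
    obtain ⟨ha, hb⟩ := h0
    constructor
    · linear_combination ha - w2.1 * htwo
    · linear_combination hb - w2.2 * htwo
  -- the two main bounds
  have L1 : ∀ ℓ m : Set (F × F), IsAffineLine ℓ → IsAffineLine m →
      (ℓ ∩ φ '' m).encard ≤ 2 :=
    fun ℓ m hℓ hm => aux_inter hF hgk φ hadd _ _ _ _ hscal1 hAB1 ℓ m hℓ hm
  have L2 : ∀ ℓ m : Set (F × F), IsAffineLine ℓ → IsAffineLine m →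
      (ℓ ∩ (φ ∘ φ) '' m).encard ≤ 2 :=
    fun ℓ m hℓ hm => aux_inter hF hg2k (φ ∘ φ) haddφφ _ _ _ _ hscal2 hAB2 ℓ m hℓ hm
  intro f g hf hg hfg ℓ m hℓ hm
  simp only [Set.mem_insert_iff, Set.mem_singleton_iff] at hf hg
  rcases hf with hf1 | hf1 | hf1 <;> rcases hg with hg1 | hg1 | hg1
  · exact absurd (hf1.trans hg1.symm) hfg
  · rw [hf1, hg1, Set.image_id]
    exact L1 ℓ m hℓ hm
  · rw [hf1, hg1, Set.image_id]
    exact L2 ℓ m hℓ hm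
  · rw [hf1, hg1, Set.image_id, Set.inter_comm]
    exact L1 m ℓ hm hℓ
  · exact absurd (hf1.trans hg1.symm) hfg
  · rw [hf1, hg1, Set.image_comp, ← Set.image_inter hinj]
    calc (φ '' (ℓ ∩ φ '' m)).encard ≤ (ℓ ∩ φ '' m).encard := Set.encard_image_le _ _
      _ ≤ 2 := L1 ℓ m hℓ hm
  · rw [hf1, hg1, Set.image_id, Set.inter_comm]
    exact L2 m ℓ hm hℓ
  · rw [hf1, hg1, Set.image_comp, ← Set.image_inter hinj]
    calc (φ '' (φ '' ℓ ∩ m)).encard ≤ (φ '' ℓ ∩ m).encard := Set.encard_image_le _ _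
      _ = (m ∩ φ '' ℓ).encard := by rw [Set.inter_comm]
      _ ≤ 2 := L1 m ℓ hm hℓ
  · exact absurd (hf1.trans hg1.symm) hfg
end
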